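/- arXiv:1501.03896 — 6 statements merged into one kernel-verified Lean document; each statement's English description precedes it below -/
import Mathlib

section
/- Let d ≥ 2 be an integer. The Doi–Edwards orientation map 𝒮 is differentiable at every nonzero real d×d matrix G, and there exists a constant 𝒮′_∞ ≥ 0 such that for every nonzero real d×d matrix G one has |G| · ‖D𝒮(G)‖ ≤ 𝒮′_∞, where |G| is the Frobenius norm of G and ‖D𝒮(G)‖ is the operator norm of the Fréchet derivative of 𝒮 at G. (Part (4.1b) of Proposition 4.1.) -/
open MeasureTheory Metric

noncomputable section

attribute [local instance] Matrix.frobeniusSeminormedAddCommGroup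
  Matrix.frobeniusNormedAddCommGroup Matrix.frobeniusNormedSpace

/-- The surface measure on the unit sphere `𝕊^{d-1} ⊂ ℝ^d`. -/
def sphereSurf (d : ℕ) : Measure (sphere (0 : EuclideanSpace ℝ (Fin d)) 1) :=
  (volume : Measure (EuclideanSpace ℝ (Fin d))).toSphere

/-- Euclidean norm of a vector in `ℝ^d`. -/
def euclNorm {d : ℕ} (v : Fin d → ℝ) : ℝ := Real.sqrt (∑ i, v i ^ 2)

/-- The Doi–Edwards orientation tensor `𝒮(G)`. -/
def DES (d : ℕ) (G : Matrix (Fin d) (Fin d) ℝ) : Matrix (Fin d) (Fin d) ℝ :=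
  fun k l =>
    (∫ u : sphere (0 : EuclideanSpace ℝ (Fin d)) 1,
        G.mulVec u k * G.mulVec u l / euclNorm (G.mulVec u) ∂ sphereSurf d) /
      (∫ u : sphere (0 : EuclideanSpace ℝ (Fin d)) 1,
        euclNorm (G.mulVec u) ∂ sphereSurf d)
    - (if k = l then 1 / d else 0)

/-! ### Auxiliary definitions and lemmas -/

open scoped ENNReal NNReal Pointwise

namespace DESAux

variable {d : ℕ}

/-- Identification of `Fin d → ℝ` with `EuclideanSpace ℝ (Fin d)`. -/
def toE : (Fin d → ℝ) ≃L[ℝ] EuclideanSpace ℝ (Fin d) := (EuclideanSpace.equiv (Fin d) ℝ).symm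

/-- `G` acting on a euclidean vector. -/
def mv (G : Matrix (Fin d) (Fin d) ℝ) (x : EuclideanSpace ℝ (Fin d)) : EuclideanSpace ℝ (Fin d) :=
  toE (G.mulVec (toE.symm x))

lemma mv_add_left (G H : Matrix (Fin d) (Fin d) ℝ) (x) : mv (G + H) x = mv G x + mv H x := by
  simp [mv, Matrix.add_mulVec]
lemma mv_smul_left (c : ℝ) (G : Matrix (Fin d) (Fin d) ℝ) (x) : mv (c • G) x = c • mv G x := by
  simp [mv, Matrix.smul_mulVec]
lemma mv_sub_left (G H : Matrix (Fin d) (Fin d) ℝ) (x) : mv (G - H) x = mv G x - mv H x := by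
  simp [mv, Matrix.sub_mulVec]
lemma mv_zero_left (x : EuclideanSpace ℝ (Fin d)) : mv (0 : Matrix (Fin d) (Fin d) ℝ) x = 0 := by
  simp [mv]

/-- `G ↦ mv G x` as a continuous linear map. -/
def mvCLM (x : EuclideanSpace ℝ (Fin d)) :
    Matrix (Fin d) (Fin d) ℝ →L[ℝ] EuclideanSpace ℝ (Fin d) :=
  LinearMap.toContinuousLinearMap
    { toFun := fun G => mv G x
      map_add' := fun G H => mv_add_left G H x
      map_smul' := fun c G => mv_smul_left c G x }

@[simp] lemma mvCLM_apply (x : EuclideanSpace ℝ (Fin d)) (G : Matrix (Fin d) (Fin d) ℝ) :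
    mvCLM x G = mv G x := rfl

/-- `x ↦ mvCLM x` as a linear map, to get continuity. -/
def mvCLM' : EuclideanSpace ℝ (Fin d) →ₗ[ℝ]
    (Matrix (Fin d) (Fin d) ℝ →L[ℝ] EuclideanSpace ℝ (Fin d)) where
  toFun := mvCLM
  map_add' x y := by ext G; simp [mv, Matrix.mulVec_add]
  map_smul' c x := by ext G; simp [mv, Matrix.mulVec_smul]

lemma continuous_mvCLM : Continuous (mvCLM (d := d)) :=
  (mvCLM' (d := d)).continuous_of_finiteDimensional

/-- `x ↦ mv G x` as a continuous linear map. -/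
def mvR (G : Matrix (Fin d) (Fin d) ℝ) :
    EuclideanSpace ℝ (Fin d) →L[ℝ] EuclideanSpace ℝ (Fin d) :=
  LinearMap.toContinuousLinearMap
    ((toE.toLinearEquiv.toLinearMap.comp G.mulVecLin).comp toE.symm.toLinearEquiv.toLinearMap)

@[simp] lemma mvR_apply (G : Matrix (Fin d) (Fin d) ℝ) (x) : mvR G x = mv G x := rfl

lemma frob_eq (A : Matrix (Fin d) (Fin d) ℝ) : ‖A‖ = Real.sqrt (∑ i, ∑ j, (A i j)^2) := by
  rw [Matrix.frobenius_norm_def, Real.sqrt_eq_rpow]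
  congr 1
  refine Finset.sum_congr rfl fun i _ => Finset.sum_congr rfl fun j _ => ?_
  rw [show (2:ℝ) = ((2:ℕ):ℝ) by norm_num, Real.rpow_natCast]
  simp [Real.norm_eq_abs, sq_abs]

lemma norm_mv_le (G : Matrix (Fin d) (Fin d) ℝ) (x : EuclideanSpace ℝ (Fin d)) :
    ‖mv G x‖ ≤ ‖G‖ * ‖x‖ := by
  have h1 : ‖mv G x‖ = Real.sqrt (∑ k, (G.mulVec (toE.symm x) k)^2) := by
    rw [EuclideanSpace.norm_eq]
    congr 1
    refine Finset.sum_congr rfl fun k _ => ?_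
    simp [mv, toE, Real.norm_eq_abs, sq_abs]
  have h2 : ‖x‖ = Real.sqrt (∑ j, (toE.symm x j)^2) := by
    rw [EuclideanSpace.norm_eq]
    refine congrArg _ (Finset.sum_congr rfl fun j _ => ?_)
    simp [toE, Real.norm_eq_abs, sq_abs]
  rw [h1, h2, frob_eq, ← Real.sqrt_mul (by positivity)]
  apply Real.sqrt_le_sqrt
  rw [Finset.sum_mul]
  apply Finset.sum_le_sum
  intro k _
  calc (G.mulVec (toE.symm x) k)^2 = (∑ j, G k j * toE.symm x j)^2 := by
        simp [Matrix.mulVec, dotProduct]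
    _ ≤ (∑ j, (G k j)^2) * (∑ j, (toE.symm x j)^2) :=
        Finset.sum_mul_sq_le_sq_mul_sq _ _ _

lemma abs_apply_le_norm (x : EuclideanSpace ℝ (Fin d)) (k : Fin d) : |x k| ≤ ‖x‖ := by
  rw [EuclideanSpace.norm_eq, ← Real.sqrt_sq_eq_abs]
  apply Real.sqrt_le_sqrt
  simpa [Real.norm_eq_abs, sq_abs] using
    Finset.single_le_sum (f := fun i => (x i)^2) (fun i _ => sq_nonneg _) (Finset.mem_univ k)

/-- The integrand functions for the numerator. -/
def fkl (k l : Fin d) (x : EuclideanSpace ℝ (Fin d)) : ℝ := x k * x l / ‖x‖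

/-- The integrand function for the denominator. -/
def nrm (x : EuclideanSpace ℝ (Fin d)) : ℝ := ‖x‖

lemma fkl_def (k l : Fin d) (x : EuclideanSpace ℝ (Fin d)) : fkl k l x = x k * x l / ‖x‖ := rfl
lemma nrm_def (x : EuclideanSpace ℝ (Fin d)) : nrm x = ‖x‖ := rfl

lemma fkl_abs_le (k l : Fin d) (x : EuclideanSpace ℝ (Fin d)) : |fkl k l x| ≤ ‖x‖ := by
  rcases eq_or_ne x 0 with rfl | hx
  · simp [fkl]
  · have hpos : 0 < ‖x‖ := norm_pos_iff.2 hx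
    rw [fkl, abs_div, abs_of_pos hpos, div_le_iff₀ hpos, abs_mul]
    calc |x k| * |x l| ≤ ‖x‖ * ‖x‖ :=
          mul_le_mul (abs_apply_le_norm x k) (abs_apply_le_norm x l) (abs_nonneg _) (norm_nonneg _)
      _ = _ := rfl

lemma fkl_lip_aux (k l : Fin d) (x y : EuclideanSpace ℝ (Fin d)) (hxy : ‖x‖ ≤ ‖y‖) :
    |fkl k l x - fkl k l y| ≤ 3 * ‖x - y‖ := by
  rcases eq_or_ne x 0 with rfl | hx
  · have h := fkl_abs_le k l y
    have h0 : fkl k l (0 : EuclideanSpace ℝ (Fin d)) = 0 := by simp [fkl]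
    rw [h0, zero_sub, abs_neg, zero_sub, norm_neg]
    linarith [norm_nonneg y]
  · have hxpos : 0 < ‖x‖ := norm_pos_iff.2 hx
    have hypos : 0 < ‖y‖ := lt_of_lt_of_le hxpos hxy
    have key : fkl k l x - fkl k l y
        = (x k * x l - y k * y l) / ‖y‖ + x k * x l * (1 / ‖x‖ - 1 / ‖y‖) := by
      rw [fkl_def, fkl_def]
      field_simp
      ring
    rw [key]
    have h1 : |(x k * x l - y k * y l) / ‖y‖| ≤ 2 * ‖x - y‖ := by
      rw [abs_div, abs_of_pos hypos, div_le_iff₀ hypos]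
      have : x k * x l - y k * y l = x k * (x l - y l) + (x k - y k) * y l := by ring
      rw [this]
      calc |x k * (x l - y l) + (x k - y k) * y l|
          ≤ |x k| * |x l - y l| + |x k - y k| * |y l| := by
            refine (abs_add_le _ _).trans ?_; rw [abs_mul, abs_mul]
        _ ≤ ‖x‖ * ‖x - y‖ + ‖x - y‖ * ‖y‖ := by
            gcongr
            · exact abs_apply_le_norm x k
            · exact abs_apply_le_norm (x - y) l
            · exact abs_apply_le_norm (x - y) k
            · exact abs_apply_le_norm y l
        _ ≤ ‖y‖ * ‖x - y‖ + ‖x - y‖ * ‖y‖ := by gcongr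
        _ = 2 * ‖x - y‖ * ‖y‖ := by ring
    have h2 : |x k * x l * (1 / ‖x‖ - 1 / ‖y‖)| ≤ ‖x - y‖ := by
      have e : 1 / ‖x‖ - 1 / ‖y‖ = (‖y‖ - ‖x‖) / (‖x‖ * ‖y‖) := by
        field_simp
      rw [e, abs_mul, abs_mul]
      have hq : 0 ≤ (‖y‖ - ‖x‖) / (‖x‖ * ‖y‖) :=
        div_nonneg (by linarith) (by positivity)
      rw [abs_of_nonneg hq]
      have hD : ‖y‖ - ‖x‖ ≤ ‖x - y‖ := by
        have := abs_norm_sub_norm_le x y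
        rw [abs_sub_le_iff] at this
        linarith [this.2]
      have h3 : |x k| * |x l| ≤ ‖x‖ * ‖y‖ := by
        calc |x k| * |x l| ≤ ‖x‖ * ‖x‖ :=
              mul_le_mul (abs_apply_le_norm x k) (abs_apply_le_norm x l)
                (abs_nonneg _) (norm_nonneg _)
          _ ≤ ‖x‖ * ‖y‖ := by gcongr
      have hE : |x k| * |x l| * ((‖y‖ - ‖x‖) / (‖x‖ * ‖y‖))
          = (|x k| * |x l| * (‖y‖ - ‖x‖)) / (‖x‖ * ‖y‖) := by ring
      rw [hE, div_le_iff₀ (by positivity)]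
      calc |x k| * |x l| * (‖y‖ - ‖x‖) ≤ (‖x‖ * ‖y‖) * ‖x - y‖ :=
            mul_le_mul h3 hD (by linarith) (by positivity)
        _ = ‖x - y‖ * (‖x‖ * ‖y‖) := by ring
    calc |(x k * x l - y k * y l) / ‖y‖ + x k * x l * (1 / ‖x‖ - 1 / ‖y‖)|
        ≤ 2 * ‖x - y‖ + ‖x - y‖ := (abs_add_le _ _).trans (add_le_add h1 h2)
      _ = 3 * ‖x - y‖ := by ring

lemma fkl_lip (k l : Fin d) (x y : EuclideanSpace ℝ (Fin d)) :
    |fkl k l x - fkl k l y| ≤ 3 * ‖x - y‖ := by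
  rcases le_total ‖x‖ ‖y‖ with h | h
  · exact fkl_lip_aux k l x y h
  · calc |fkl k l x - fkl k l y| = |fkl k l y - fkl k l x| := abs_sub_comm _ _
      _ ≤ 3 * ‖y - x‖ := fkl_lip_aux k l y x h
      _ = 3 * ‖x - y‖ := by rw [norm_sub_rev]

lemma nrm_abs_le (x : EuclideanSpace ℝ (Fin d)) : |nrm x| ≤ ‖x‖ := by
  rw [nrm]
  exact le_of_eq (abs_of_nonneg (norm_nonneg x))

lemma nrm_lip (x y : EuclideanSpace ℝ (Fin d)) : |nrm x - nrm y| ≤ 3 * ‖x - y‖ := by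
  have := abs_norm_sub_norm_le x y
  have h0 : (0:ℝ) ≤ ‖x - y‖ := norm_nonneg _
  rw [nrm, nrm]
  linarith

lemma fkl_smooth (k l : Fin d) : ContDiffOn ℝ 1 (fkl k l) {(0 : EuclideanSpace ℝ (Fin d))}ᶜ := by
  apply ContDiffOn.div
  · have hk : ContDiff ℝ 1 fun x : EuclideanSpace ℝ (Fin d) => x k :=
      (EuclideanSpace.proj (𝕜 := ℝ) k).contDiff
    have hl : ContDiff ℝ 1 fun x : EuclideanSpace ℝ (Fin d) => x l :=
      (EuclideanSpace.proj (𝕜 := ℝ) l).contDiff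
    exact (hk.mul hl).contDiffOn
  · intro x hx
    exact (contDiffAt_norm (𝕜 := ℝ) hx).contDiffWithinAt
  · intro x hx
    exact norm_ne_zero_iff.2 hx

lemma nrm_smooth : ContDiffOn ℝ 1 (nrm (d := d)) {(0 : EuclideanSpace ℝ (Fin d))}ᶜ :=
  fun x hx => (contDiffAt_norm (𝕜 := ℝ) hx).contDiffWithinAt

lemma exists_mv_ne_zero {G : Matrix (Fin d) (Fin d) ℝ} (hG : G ≠ 0) :
    ∃ x, mv G x ≠ 0 := by
  by_contra h
  push_neg at h
  apply hG
  ext k j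
  have := congrArg (fun y => toE.symm y) (h (toE (Pi.single j 1)))
  simp only [mv, ContinuousLinearEquiv.symm_apply_apply, map_zero] at this
  have h2 := congrFun this k
  simp [Matrix.mulVec_single] at h2
  simpa using h2

lemma sphere_norm_one (u : sphere (0 : EuclideanSpace ℝ (Fin d)) 1) :
    ‖(u : EuclideanSpace ℝ (Fin d))‖ = 1 := by
  have := u.2
  rwa [mem_sphere_zero_iff_norm] at this

lemma sphereSurf_univ_pos (hd : 0 < d) : 0 < sphereSurf d Set.univ := by
  rw [sphereSurf, Measure.toSphere_apply_univ]
  have h1 : (0:ℝ≥0∞) < volume (ball (0 : EuclideanSpace ℝ (Fin d)) 1) :=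
    measure_ball_pos _ _ one_pos
  have h2 : (Module.finrank ℝ (EuclideanSpace ℝ (Fin d)) : ℝ≥0∞) ≠ 0 := by
    simp [finrank_euclideanSpace_fin, hd.ne']
  exact ENNReal.mul_pos h2 h1.ne'

instance : IsFiniteMeasure (sphereSurf d) := by
  rw [sphereSurf]; infer_instance

lemma sphereSurf_ker_null {G : Matrix (Fin d) (Fin d) ℝ} (hG : G ≠ 0) :
    sphereSurf d {u : sphere (0 : EuclideanSpace ℝ (Fin d)) 1 | mv G ↑u = 0} = 0 := by
  set s : Set (sphere (0 : EuclideanSpace ℝ (Fin d)) 1) := {u | mv G ↑u = 0}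
  have hmeas : MeasurableSet s := by
    have : IsClosed s :=
      isClosed_singleton.preimage ((mvR G).continuous.comp continuous_subtype_val)
    exact this.measurableSet
  rw [sphereSurf, Measure.toSphere_apply' _ hmeas]
  set V : Submodule ℝ (EuclideanSpace ℝ (Fin d)) := LinearMap.ker (mvR G).toLinearMap
  have hV : V ≠ ⊤ := by
    obtain ⟨x, hx⟩ := exists_mv_ne_zero hG
    intro h
    exact hx (by simpa [V] using (h ▸ Submodule.mem_top : x ∈ V))
  have hsub : (Set.Ioo (0:ℝ) 1 • (Subtype.val '' s)) ⊆ (V : Set (EuclideanSpace ℝ (Fin d))) := by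
    rintro y ⟨r, hr, v, hv, rfl⟩
    obtain ⟨u, hu, rfl⟩ := hv
    have : (u : EuclideanSpace ℝ (Fin d)) ∈ V := by
      simpa [V, s, LinearMap.mem_ker] using hu
    exact V.smul_mem r this
  have : volume (Set.Ioo (0:ℝ) 1 • (Subtype.val '' s)) = 0 :=
    le_antisymm (le_trans (measure_mono hsub) (Measure.addHaar_submodule _ V hV).le) bot_le
  simp [this]

lemma sphereSurf_ae_ne_zero {G : Matrix (Fin d) (Fin d) ℝ} (hG : G ≠ 0) :
    ∀ᵐ u : (sphere (0 : EuclideanSpace ℝ (Fin d)) 1) ∂(sphereSurf d), mv G ↑u ≠ 0 := by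
  rw [ae_iff]
  simpa using sphereSurf_ker_null hG

/-! ### The parametric integrals -/

/-- The parametric integral. -/
def Ig (d : ℕ) (f : EuclideanSpace ℝ (Fin d) → ℝ) (G : Matrix (Fin d) (Fin d) ℝ) : ℝ :=
  ∫ u, f (mv G ↑u) ∂(sphereSurf d)

section generic

variable {f : EuclideanSpace ℝ (Fin d) → ℝ}
  (hbd : ∀ x, |f x| ≤ ‖x‖) (hlip : ∀ x y, |f x - f y| ≤ 3 * ‖x - y‖)

include hlip in
lemma f_cont : Continuous f := by
  have : LipschitzWith 3 f := by
    apply LipschitzWith.of_dist_le_mul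
    intro x y
    rw [Real.dist_eq, dist_eq_norm]
    exact_mod_cast hlip x y
  exact this.continuous

include hlip in
lemma integrand_continuous (G : Matrix (Fin d) (Fin d) ℝ) :
    Continuous fun u : sphere (0 : EuclideanSpace ℝ (Fin d)) 1 => f (mv G ↑u) :=
  (f_cont hlip).comp ((mvR G).continuous.comp continuous_subtype_val)

include hbd hlip in
lemma integrand_integrable (G : Matrix (Fin d) (Fin d) ℝ) :
    Integrable (fun u : sphere (0 : EuclideanSpace ℝ (Fin d)) 1 => f (mv G ↑u)) (sphereSurf d) := by
  refine (integrable_const ‖G‖).mono' (integrand_continuous hlip G).aestronglyMeasurable ?_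
  refine Filter.Eventually.of_forall fun u => ?_
  rw [Real.norm_eq_abs]
  calc |f (mv G ↑u)| ≤ ‖mv G ↑u‖ := hbd _
    _ ≤ ‖G‖ * ‖(u : EuclideanSpace ℝ (Fin d))‖ := norm_mv_le G _
    _ = ‖G‖ := by rw [sphere_norm_one]; ring

include hbd hlip in
lemma Ig_lip (G H : Matrix (Fin d) (Fin d) ℝ) :
    |Ig d f G - Ig d f H| ≤ 3 * (sphereSurf d Set.univ).toReal * ‖G - H‖ := by
  rw [Ig, Ig, ← integral_sub (integrand_integrable hbd hlip G) (integrand_integrable hbd hlip H)]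
  rw [← Real.norm_eq_abs]
  have := norm_integral_le_of_norm_le_const (μ := sphereSurf d)
    (f := fun u : sphere (0 : EuclideanSpace ℝ (Fin d)) 1 => f (mv G ↑u) - f (mv H ↑u))
    (C := 3 * ‖G - H‖) ?_
  · calc ‖_‖ ≤ 3 * ‖G - H‖ * (sphereSurf d Set.univ).toReal := this
      _ = 3 * (sphereSurf d Set.univ).toReal * ‖G - H‖ := by ring
  · refine Filter.Eventually.of_forall fun u => ?_
    rw [Real.norm_eq_abs]
    calc |f (mv G ↑u) - f (mv H ↑u)| ≤ 3 * ‖mv G ↑u - mv H ↑u‖ := hlip _ _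
      _ = 3 * ‖mv (G - H) ↑u‖ := by rw [mv_sub_left]
      _ ≤ 3 * (‖G - H‖ * ‖(u : EuclideanSpace ℝ (Fin d))‖) := by
          gcongr; exact norm_mv_le _ _
      _ = 3 * ‖G - H‖ := by rw [sphere_norm_one]; ring

include hbd hlip in
lemma Ig_abs_le (G : Matrix (Fin d) (Fin d) ℝ) :
    |Ig d f G| ≤ (sphereSurf d Set.univ).toReal * ‖G‖ := by
  rw [Ig, ← Real.norm_eq_abs]
  have := norm_integral_le_of_norm_le_const (μ := sphereSurf d)
    (f := fun u : sphere (0 : EuclideanSpace ℝ (Fin d)) 1 => f (mv G ↑u)) (C := ‖G‖) ?_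
  · calc ‖_‖ ≤ ‖G‖ * (sphereSurf d Set.univ).toReal := this
      _ = (sphereSurf d Set.univ).toReal * ‖G‖ := by ring
  · refine Filter.Eventually.of_forall fun u => ?_
    rw [Real.norm_eq_abs]
    calc |f (mv G ↑u)| ≤ ‖mv G ↑u‖ := hbd _
      _ ≤ ‖G‖ * ‖(u : EuclideanSpace ℝ (Fin d))‖ := norm_mv_le G _
      _ = ‖G‖ := by rw [sphere_norm_one]; ring

include hbd hlip in
lemma Ig_differentiableAt (hsm : ContDiffOn ℝ 1 f {(0 : EuclideanSpace ℝ (Fin d))}ᶜ)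
    {G₀ : Matrix (Fin d) (Fin d) ℝ} (hG₀ : G₀ ≠ 0) :
    DifferentiableAt ℝ (Ig d f) G₀ := by
  set F' : (sphere (0 : EuclideanSpace ℝ (Fin d)) 1) →
      (Matrix (Fin d) (Fin d) ℝ →L[ℝ] ℝ) := fun u =>
    ((fderiv ℝ f (mv G₀ ↑u)).comp (mvCLM (↑u : EuclideanSpace ℝ (Fin d))))
  have hae := sphereSurf_ae_ne_zero hG₀
  have hF'_meas : AEStronglyMeasurable F' (sphereSurf d) := by
    set s : Set (sphere (0 : EuclideanSpace ℝ (Fin d)) 1) := {u | mv G₀ ↑u ≠ 0}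
    have hopen : IsOpen s := by
      have : IsClosed {u : sphere (0 : EuclideanSpace ℝ (Fin d)) 1 | mv G₀ ↑u = 0} :=
        isClosed_singleton.preimage ((mvR G₀).continuous.comp continuous_subtype_val)
      simpa [s, Set.compl_setOf] using this.isOpen_compl
    have h1 : ContinuousOn (fderiv ℝ f) {(0 : EuclideanSpace ℝ (Fin d))}ᶜ :=
      hsm.continuousOn_fderiv_of_isOpen isOpen_compl_singleton le_rfl
    have h2 : Continuous fun u : sphere (0 : EuclideanSpace ℝ (Fin d)) 1 => mv G₀ ↑u :=
      (mvR G₀).continuous.comp continuous_subtype_val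
    have h3 : ContinuousOn (fun u : sphere (0 : EuclideanSpace ℝ (Fin d)) 1 =>
        fderiv ℝ f (mv G₀ ↑u)) s :=
      h1.comp h2.continuousOn (fun u hu => hu)
    have h4 : Continuous fun u : sphere (0 : EuclideanSpace ℝ (Fin d)) 1 =>
        mvCLM (↑u : EuclideanSpace ℝ (Fin d)) :=
      continuous_mvCLM.comp continuous_subtype_val
    have hcont : ContinuousOn F' s := h3.clm_comp h4.continuousOn
    have hrestrict : (sphereSurf d).restrict s = sphereSurf d :=
      Measure.restrict_eq_self_of_ae_mem hae
    rw [← hrestrict]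
    haveI : TopologicalSpace.PseudoMetrizableSpace (Matrix (Fin d) (Fin d) ℝ →L[ℝ] ℝ) :=
      @PseudoEMetricSpace.pseudoMetrizableSpace _
        ContinuousLinearMap.toSeminormedAddCommGroup.toPseudoMetricSpace.toPseudoEMetricSpace
    exact hcont.aestronglyMeasurable hopen.measurableSet
  have main := hasFDerivAt_integral_of_dominated_loc_of_lip'
    (F := fun G (u : sphere (0 : EuclideanSpace ℝ (Fin d)) 1) => f (mv G ↑u)) (F' := F')
    (x₀ := G₀) (bound := fun _ => 3) (s := ball G₀ 1) (ball_mem_nhds G₀ one_pos)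
    (fun G _ => (integrand_continuous hlip G).aestronglyMeasurable)
    (integrand_integrable hbd hlip G₀) hF'_meas ?_ (integrable_const 3) ?_
  · exact main.2.differentiableAt
  · refine Filter.Eventually.of_forall fun u => fun G _ => ?_
    rw [Real.norm_eq_abs]
    calc |f (mv G ↑u) - f (mv G₀ ↑u)| ≤ 3 * ‖mv G ↑u - mv G₀ ↑u‖ := hlip _ _
      _ = 3 * ‖mv (G - G₀) ↑u‖ := by rw [mv_sub_left]
      _ ≤ 3 * (‖G - G₀‖ * ‖(u : EuclideanSpace ℝ (Fin d))‖) := by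
          gcongr; exact norm_mv_le _ _
      _ = 3 * ‖G - G₀‖ := by rw [sphere_norm_one]; ring
  · filter_upwards [hae] with u hu
    have hdf : DifferentiableAt ℝ f (mv G₀ ↑u) :=
      (hsm.contDiffAt (isOpen_compl_singleton.mem_nhds hu)).differentiableAt one_ne_zero
    exact hdf.hasFDerivAt.comp G₀ (mvCLM (↑u : EuclideanSpace ℝ (Fin d))).hasFDerivAt

end generic

end DESAux

namespace DESAux

variable {d : ℕ}

lemma Ig_nrm_smul (c : ℝ) (hc : 0 ≤ c) (G : Matrix (Fin d) (Fin d) ℝ) :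
    Ig d nrm (c • G) = c * Ig d nrm G := by
  rw [Ig, Ig, ← integral_const_mul]
  refine integral_congr_ae (Filter.Eventually.of_forall fun u => ?_)
  simp only [nrm_def, mv_smul_left, norm_smul, Real.norm_eq_abs, abs_of_nonneg hc]

lemma Ig_nrm_zero : Ig d nrm (0 : Matrix (Fin d) (Fin d) ℝ) = 0 := by
  simp [Ig, nrm, mv_zero_left]

lemma Ig_nrm_pos (hd : 0 < d) {G : Matrix (Fin d) (Fin d) ℝ} (hG : G ≠ 0) :
    0 < Ig d nrm G := by
  have hiff := integral_pos_iff_support_of_nonneg_ae (μ := sphereSurf d)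
    (f := fun u : sphere (0 : EuclideanSpace ℝ (Fin d)) 1 => nrm (mv G ↑u))
    (Filter.Eventually.of_forall fun u => norm_nonneg (mv G ↑u))
    (integrand_integrable nrm_abs_le nrm_lip G)
  rw [Ig, hiff]
  set s : Set (sphere (0 : EuclideanSpace ℝ (Fin d)) 1) := {u | mv G ↑u = 0}
  have hmeas : MeasurableSet s := by
    have : IsClosed s :=
      isClosed_singleton.preimage ((mvR G).continuous.comp continuous_subtype_val)
    exact this.measurableSet
  have hker : sphereSurf d s = 0 := sphereSurf_ker_null hG
  have hcompl : sphereSurf d sᶜ = sphereSurf d Set.univ := by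
    rw [measure_compl hmeas (measure_ne_top _ _), hker, tsub_zero]
  have hsub : sᶜ ⊆ Function.support fun u => nrm (mv G ↑u) := by
    intro u hu
    simp only [Function.mem_support, nrm, norm_ne_zero_iff]
    exact hu
  calc (0:ℝ≥0∞) < sphereSurf d Set.univ := sphereSurf_univ_pos hd
    _ = sphereSurf d sᶜ := hcompl.symm
    _ ≤ _ := measure_mono hsub

lemma Ig_nrm_lower (hd : 2 ≤ d) :
    ∃ m : ℝ, 0 < m ∧ ∀ G : Matrix (Fin d) (Fin d) ℝ, m * ‖G‖ ≤ Ig d nrm G := by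
  have hd0 : 0 < d := by omega
  haveI : Nontrivial (Matrix (Fin d) (Fin d) ℝ) := by
    refine nontrivial_of_ne 1 0 fun h => ?_
    have := congrFun (congrFun h ⟨0, hd0⟩) ⟨0, hd0⟩
    simp [Matrix.one_apply_eq] at this
  obtain ⟨A, hA⟩ := (NormedSpace.sphere_nonempty
    (E := Matrix (Fin d) (Fin d) ℝ) (x := 0) (r := 1)).mpr zero_le_one
  have hcont : Continuous (Ig d nrm) := by
    refine LipschitzWith.continuous
      (K := (3 * (sphereSurf d Set.univ).toReal).toNNReal) ?_
    refine LipschitzWith.of_dist_le_mul fun G H => ?_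
    rw [Real.dist_eq, dist_eq_norm]
    calc |Ig d nrm G - Ig d nrm H| ≤ 3 * (sphereSurf d Set.univ).toReal * ‖G - H‖ :=
          Ig_lip nrm_abs_le nrm_lip G H
      _ ≤ _ := by
        gcongr
        exact (Real.le_coe_toNNReal _)
  obtain ⟨G₁, hG₁, hmin⟩ := (isCompact_sphere (0 : Matrix (Fin d) (Fin d) ℝ) 1).exists_isMinOn
    ⟨A, hA⟩ hcont.continuousOn
  have hG₁norm : ‖G₁‖ = 1 := by rwa [mem_sphere_zero_iff_norm] at hG₁
  have hG₁ne : G₁ ≠ 0 := fun h => by simp [h] at hG₁norm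
  refine ⟨Ig d nrm G₁, Ig_nrm_pos hd0 hG₁ne, fun G => ?_⟩
  rcases eq_or_ne G 0 with rfl | hG
  · simp [Ig_nrm_zero]
  · have hn : 0 < ‖G‖ := norm_pos_iff.2 hG
    have hunit : ‖(‖G‖⁻¹ • G)‖ = 1 := by
      rw [norm_smul, Real.norm_eq_abs, abs_of_pos (inv_pos.2 hn), inv_mul_cancel₀ hn.ne']
    have hle : Ig d nrm G₁ ≤ Ig d nrm (‖G‖⁻¹ • G) :=
      hmin (mem_sphere_zero_iff_norm.mpr hunit)
    have heq : Ig d nrm G = ‖G‖ * Ig d nrm (‖G‖⁻¹ • G) := by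
      rw [← Ig_nrm_smul ‖G‖ hn.le, smul_smul, mul_inv_cancel₀ hn.ne', one_smul]
    rw [heq]
    calc Ig d nrm G₁ * ‖G‖ ≤ Ig d nrm (‖G‖⁻¹ • G) * ‖G‖ := by gcongr
      _ = ‖G‖ * Ig d nrm (‖G‖⁻¹ • G) := by ring

lemma frob_le (A : Matrix (Fin d) (Fin d) ℝ) {a : ℝ} (ha : 0 ≤ a)
    (h : ∀ k l, |A k l| ≤ a) : ‖A‖ ≤ d * a := by
  rw [frob_eq]
  have hb : ∑ i, ∑ j, (A i j)^2 ≤ ((d : ℝ) * a)^2 := by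
    calc ∑ i, ∑ j, (A i j)^2 ≤ ∑ _i : Fin d, ∑ _j : Fin d, a^2 := by
          refine Finset.sum_le_sum fun i _ => Finset.sum_le_sum fun j _ => ?_
          rw [← sq_abs]
          exact pow_le_pow_left₀ (abs_nonneg _) (h i j) 2
      _ = ((d:ℝ) * a)^2 := by
          simp [Finset.sum_const, Finset.card_univ]
          ring
  calc Real.sqrt (∑ i, ∑ j, (A i j)^2) ≤ Real.sqrt (((d:ℝ)*a)^2) := Real.sqrt_le_sqrt hb
    _ = (d:ℝ) * a := Real.sqrt_sq (by positivity)

lemma euclNorm_eq (v : Fin d → ℝ) : euclNorm v = ‖toE v‖ := by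
  rw [euclNorm, EuclideanSpace.norm_eq]
  congr 1
  refine Finset.sum_congr rfl fun i _ => ?_
  simp [toE, Real.norm_eq_abs, sq_abs]

lemma DES_eq (G : Matrix (Fin d) (Fin d) ℝ) : DES d G = fun k l =>
    Ig d (fkl k l) G / Ig d nrm G - (((if k = l then 1 / d else 0 : ℕ)) : ℝ) := by
  funext k l
  rw [DES]
  have e1 : (∫ u : sphere (0 : EuclideanSpace ℝ (Fin d)) 1,
      G.mulVec u k * G.mulVec u l / euclNorm (G.mulVec u) ∂ sphereSurf d)
      = Ig d (fkl k l) G := by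
    rw [Ig]
    refine integral_congr_ae (Filter.Eventually.of_forall fun u => ?_)
    beta_reduce
    rw [fkl_def]
    have hc : mv G ↑u = toE (G.mulVec ↑u) := rfl
    rw [hc, euclNorm_eq]
    rfl
  have e2 : (∫ u : sphere (0 : EuclideanSpace ℝ (Fin d)) 1,
      euclNorm (G.mulVec u) ∂ sphereSurf d) = Ig d nrm G := by
    rw [Ig]
    refine integral_congr_ae (Filter.Eventually.of_forall fun u => ?_)
    beta_reduce
    rw [nrm_def]
    have hc : mv G ↑u = toE (G.mulVec ↑u) := rfl
    rw [hc, euclNorm_eq]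
  rw [e1, e2]

/-- The identity between the Frobenius-normed matrices and the pi type. -/
def matPi (d : ℕ) : Matrix (Fin d) (Fin d) ℝ ≃L[ℝ] (Fin d → Fin d → ℝ) :=
  LinearEquiv.toContinuousLinearEquiv
    { toFun := fun A => A
      invFun := fun A => A
      map_add' := fun _ _ => rfl
      map_smul' := fun _ _ => rfl
      left_inv := fun _ => rfl
      right_inv := fun _ => rfl }

end DESAux

open DESAux

/-- **(4.1b) of Proposition 4.1.** The Doi–Edwards orientation map `𝒮` is differentiable at
every nonzero real `d × d` matrix, and there is a constant `𝒮′_∞ ≥ 0` such that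
`|G| · ‖D𝒮(G)‖ ≤ 𝒮′_∞` for every nonzero `G`, where matrices carry the Frobenius norm and
`‖D𝒮(G)‖` is the operator norm of the Fréchet derivative. -/
theorem stmt1 (d : ℕ) (hd : 2 ≤ d) :
    (∀ G : Matrix (Fin d) (Fin d) ℝ, G ≠ 0 → DifferentiableAt ℝ (DES d) G) ∧
    ∃ C : ℝ, 0 ≤ C ∧ ∀ G : Matrix (Fin d) (Fin d) ℝ, G ≠ 0 →
      ‖G‖ * @Norm.norm _ ContinuousLinearMap.hasOpNorm (fderiv ℝ (DES d) G) ≤ C := by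
  have hd0 : 0 < d := by omega
  constructor
  · intro G hG
    have hpos := Ig_nrm_pos hd0 hG
    have hnum : ∀ k l : Fin d, DifferentiableAt ℝ (Ig d (fkl k l)) G := fun k l =>
      Ig_differentiableAt (fkl_abs_le k l) (fkl_lip k l) (fkl_smooth k l) hG
    have hden : DifferentiableAt ℝ (Ig d nrm) G :=
      Ig_differentiableAt nrm_abs_le nrm_lip nrm_smooth hG
    have hmat : DifferentiableAt ℝ (fun H : Matrix (Fin d) (Fin d) ℝ =>
        (fun k l => Ig d (fkl k l) H / Ig d nrm H - (((if k = l then 1 / d else 0 : ℕ)) : ℝ)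
          : Fin d → Fin d → ℝ)) G := by
      refine differentiableAt_pi.2 ?_
      intro k
      refine differentiableAt_pi.2 ?_
      intro l
      beta_reduce
      have hdiv : DifferentiableAt ℝ
          (fun H : Matrix (Fin d) (Fin d) ℝ => Ig d (fkl k l) H / Ig d nrm H) G := by
        simp only [div_eq_mul_inv]
        exact (hnum k l).mul (hden.inv hpos.ne')
      exact hdiv.sub_const _
    have hfun : DES d = fun H => (matPi d).symm
        (fun k l => Ig d (fkl k l) H / Ig d nrm H
          - (((if k = l then 1 / d else 0 : ℕ)) : ℝ)) :=
      funext fun H => DES_eq H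
    rw [hfun]
    exact (matPi d).symm.differentiableAt.comp G hmat
  · obtain ⟨m, hm, hmle⟩ := Ig_nrm_lower hd
    set σu : ℝ := (sphereSurf d Set.univ).toReal with hσu
    have hσu0 : 0 ≤ σu := ENNReal.toReal_nonneg
    refine ⟨12 * d * σu^2 / m^2, by positivity, ?_⟩
    intro G hG
    have hn : 0 < ‖G‖ := norm_pos_iff.2 hG
    set C1 : ℝ := 12 * d * σu^2 / m^2 / ‖G‖ with hC1
    have hC1nonneg : 0 ≤ C1 := by positivity
    have hball : ball G (‖G‖/2) ∈ nhds G := ball_mem_nhds _ (by positivity)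
    have hlipest : ∀ᶠ H in nhds G, ‖DES d H - DES d G‖ ≤ C1 * ‖H - G‖ := by
      filter_upwards [hball] with H hH
      have hΔ : ‖H - G‖ < ‖G‖/2 := by rwa [mem_ball, dist_eq_norm] at hH
      have hΔ0 : 0 ≤ ‖H - G‖ := norm_nonneg _
      have hHn : ‖G‖/2 ≤ ‖H‖ := by
        have := abs_norm_sub_norm_le H G
        rw [abs_sub_le_iff] at this
        linarith [this.2]
      set DG := Ig d nrm G with hDG
      set DH := Ig d nrm H with hDH
      have hDG_lb : m * ‖G‖ ≤ DG := hmle G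
      have hDH_lb : m * (‖G‖/2) ≤ DH := by
        have h1 : m * (‖G‖/2) ≤ m * ‖H‖ := by gcongr
        exact h1.trans (hmle H)
      have hDG_ub : DG ≤ σu * ‖G‖ := (abs_le.mp (Ig_abs_le nrm_abs_le nrm_lip G)).2
      have hDGpos : 0 < DG := lt_of_lt_of_le (by positivity) hDG_lb
      have hDHpos : 0 < DH := lt_of_lt_of_le (by positivity) hDH_lb
      have hentry : ∀ k l : Fin d,
          |DES d H k l - DES d G k l| ≤ (12 * σu^2 / (m^2 * ‖G‖)) * ‖H - G‖ := by
        intro k l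
        set NG := Ig d (fkl k l) G with hNG
        set NH := Ig d (fkl k l) H with hNH
        have hNG_ub : |NG| ≤ σu * ‖G‖ := Ig_abs_le (fkl_abs_le k l) (fkl_lip k l) G
        have hNlip : |NH - NG| ≤ 3 * σu * ‖H - G‖ := Ig_lip (fkl_abs_le k l) (fkl_lip k l) H G
        have hDlip : |DH - DG| ≤ 3 * σu * ‖H - G‖ := Ig_lip nrm_abs_le nrm_lip H G
        have h1 : DES d H k l = NH / DH - (((if k = l then 1 / d else 0 : ℕ)) : ℝ) :=
          congrFun (congrFun (DES_eq H) k) l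
        have h2 : DES d G k l = NG / DG - (((if k = l then 1 / d else 0 : ℕ)) : ℝ) :=
          congrFun (congrFun (DES_eq G) k) l
        have hcast : (((if k = l then 1 / d else 0 : ℕ)) : ℝ) = 0 := by
          have hh : (1:ℕ)/d = 0 := Nat.div_eq_of_lt (by omega)
          simp [hh]
        have hq : DES d H k l - DES d G k l = (NH * DG - NG * DH) / (DH * DG) := by
          rw [h1, h2, hcast, sub_zero, sub_zero]
          field_simp
        rw [hq, abs_div, abs_of_pos (by positivity : (0:ℝ) < DH * DG)]
        have hnum2 : |NH * DG - NG * DH| ≤ 6 * σu^2 * ‖G‖ * ‖H - G‖ := by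
          have e : NH * DG - NG * DH = (NH - NG) * DG - NG * (DH - DG) := by ring
          rw [e]
          have t1 : |(NH - NG) * DG| ≤ (3 * σu * ‖H - G‖) * (σu * ‖G‖) := by
            rw [abs_mul, abs_of_pos hDGpos]
            exact mul_le_mul hNlip hDG_ub hDGpos.le (by positivity)
          have t2 : |NG * (DH - DG)| ≤ (σu * ‖G‖) * (3 * σu * ‖H - G‖) := by
            rw [abs_mul]
            exact mul_le_mul hNG_ub hDlip (abs_nonneg _) (by positivity)
          calc |(NH - NG) * DG - NG * (DH - DG)|
              ≤ |(NH - NG) * DG| + |NG * (DH - DG)| := by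
                rw [sub_eq_add_neg]
                exact (abs_add_le _ _).trans (by rw [abs_neg])
            _ ≤ (3 * σu * ‖H - G‖) * (σu * ‖G‖) + (σu * ‖G‖) * (3 * σu * ‖H - G‖) :=
                add_le_add t1 t2
            _ = 6 * σu^2 * ‖G‖ * ‖H - G‖ := by ring
        have hden_lb : m^2 * ‖G‖^2 / 2 ≤ DH * DG := by
          calc m^2 * ‖G‖^2 / 2 = (m * (‖G‖/2)) * (m * ‖G‖) := by ring
            _ ≤ DH * DG := mul_le_mul hDH_lb hDG_lb (by positivity) hDHpos.le
        calc |NH * DG - NG * DH| / (DH * DG)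
            ≤ (6 * σu^2 * ‖G‖ * ‖H - G‖) / (m^2 * ‖G‖^2 / 2) :=
              div_le_div₀ (by positivity) hnum2 (by positivity) hden_lb
          _ = (12 * σu^2 / (m^2 * ‖G‖)) * ‖H - G‖ := by
              field_simp
              ring
      have hfrob := frob_le (DES d H - DES d G)
        (a := (12 * σu^2 / (m^2 * ‖G‖)) * ‖H - G‖) (by positivity)
        (fun k l => by simpa [Matrix.sub_apply] using hentry k l)
      calc ‖DES d H - DES d G‖ ≤ d * ((12 * σu^2 / (m^2 * ‖G‖)) * ‖H - G‖) := hfrob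
        _ = C1 * ‖H - G‖ := by
            rw [hC1]
            field_simp
    have hfd : @Norm.norm _ ContinuousLinearMap.hasOpNorm (fderiv ℝ (DES d) G) ≤ C1 := norm_fderiv_le_of_lip' ℝ hC1nonneg hlipest
    calc ‖G‖ * @Norm.norm _ ContinuousLinearMap.hasOpNorm (fderiv ℝ (DES d) G) ≤ ‖G‖ * C1 :=
          mul_le_mul_of_nonneg_left hfd hn.le
      _ = 12 * d * σu^2 / m^2 := by
          rw [hC1]
          field_simp
end
end

section
/- Let d ≥ 2 be an integer. For every nonzero real d×d matrix G, the map 𝒮 is differentiable at G and its Fréchet derivative satisfies the explicit bound ‖D𝒮(G)‖ ≤ 2(1 + √d) · σ(𝕊^{d−1}) / (∫_{𝕊^{d−1}} |G·u| dσ(u)), where σ(𝕊^{d−1}) is the total surface measure of the unit sphere. (Inequality (4.4) in the proof of Proposition 4.1.) -/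
open MeasureTheory Metric

noncomputable section

attribute [local instance] Matrix.frobeniusSeminormedAddCommGroup
  Matrix.frobeniusNormedAddCommGroup Matrix.frobeniusNormedSpace

namespace DESaux
variable {d : ℕ}

lemma euclNorm_nonneg (v : Fin d → ℝ) : 0 ≤ euclNorm v := Real.sqrt_nonneg _

lemma sq_euclNorm (v : Fin d → ℝ) : euclNorm v ^ 2 = ∑ i, v i ^ 2 :=
  Real.sq_sqrt (Finset.sum_nonneg fun i _ => sq_nonneg _)

lemma euclNorm_eq_zero {v : Fin d → ℝ} (h : euclNorm v = 0) : v = 0 := by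
  have h2 : ∑ i, v i ^ 2 = 0 := by
    have := sq_euclNorm v; rw [h] at this; simpa using this.symm
  funext i
  have := (Finset.sum_eq_zero_iff_of_nonneg (fun i _ => sq_nonneg (v i))).1 h2 i (Finset.mem_univ i)
  exact pow_eq_zero_iff (n := 2) (by norm_num) |>.1 this

lemma euclNorm_pos {v : Fin d → ℝ} (h : v ≠ 0) : 0 < euclNorm v :=
  lt_of_le_of_ne (euclNorm_nonneg v) fun h' => h (euclNorm_eq_zero h'.symm)

lemma abs_le_euclNorm (v : Fin d → ℝ) (k : Fin d) : |v k| ≤ euclNorm v := by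
  rw [euclNorm, ← Real.sqrt_sq_eq_abs]
  exact Real.sqrt_le_sqrt (Finset.single_le_sum (f := fun i => v i ^ 2)
    (fun i _ => sq_nonneg _) (Finset.mem_univ k))

lemma cauchy (a b : Fin d → ℝ) : |∑ i, a i * b i| ≤ euclNorm a * euclNorm b := by
  rw [← Real.sqrt_sq_eq_abs, euclNorm, euclNorm, ← Real.sqrt_mul
    (Finset.sum_nonneg fun i _ => sq_nonneg _)]
  exact Real.sqrt_le_sqrt (Finset.sum_mul_sq_le_sq_mul_sq _ _ _)

lemma euclNorm_add_le (a b : Fin d → ℝ) : euclNorm (a + b) ≤ euclNorm a + euclNorm b := by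
  have h1 : ∑ i, (a + b) i ^ 2 ≤ (euclNorm a + euclNorm b) ^ 2 := by
    have hab' : ∑ i, a i * b i ≤ euclNorm a * euclNorm b :=
      le_trans (le_abs_self _) (cauchy a b)
    have : ∑ i, (a + b) i ^ 2 = (∑ i, a i ^ 2) + 2 * (∑ i, a i * b i) + ∑ i, b i ^ 2 := by
      simp only [Pi.add_apply, add_sq, Finset.sum_add_distrib]
      rw [Finset.mul_sum]
      congr 1
      congr 1
      exact Finset.sum_congr rfl fun i _ => by ring
    rw [this, add_sq, ← sq_euclNorm a, ← sq_euclNorm b]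
    nlinarith [hab', euclNorm_nonneg a, euclNorm_nonneg b]
  calc euclNorm (a + b) = Real.sqrt (∑ i, (a + b) i ^ 2) := rfl
    _ ≤ Real.sqrt ((euclNorm a + euclNorm b) ^ 2) := Real.sqrt_le_sqrt h1
    _ = euclNorm a + euclNorm b := Real.sqrt_sq (add_nonneg (euclNorm_nonneg a) (euclNorm_nonneg b))

lemma euclNorm_sub_comm (a b : Fin d → ℝ) : euclNorm (a - b) = euclNorm (b - a) := by
  unfold euclNorm; congr 1; apply Finset.sum_congr rfl; intro i _
  simp [Pi.sub_apply]; ring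

lemma abs_euclNorm_sub_le (a b : Fin d → ℝ) : |euclNorm a - euclNorm b| ≤ euclNorm (a - b) := by
  rw [abs_sub_le_iff]
  constructor
  · have := euclNorm_add_le (a - b) b; simpa using this
  · have := euclNorm_add_le (b - a) a
    simp only [sub_add_cancel] at this
    rw [euclNorm_sub_comm]; linarith

lemma frobNorm_eq (A : Matrix (Fin d) (Fin d) ℝ) :
    ‖A‖ = Real.sqrt (∑ k, ∑ l, A k l ^ 2) := by
  rw [Matrix.frobenius_norm_def, Real.sqrt_eq_rpow]
  congr 1
  apply Finset.sum_congr rfl; intro k _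
  apply Finset.sum_congr rfl; intro l _
  rw [Real.norm_eq_abs]
  rw [show ((2:ℝ)) = ((2:ℕ):ℝ) by norm_num, Real.rpow_natCast]
  exact sq_abs _

lemma euclNorm_mulVec_le (A : Matrix (Fin d) (Fin d) ℝ) (v : Fin d → ℝ) :
    euclNorm (A.mulVec v) ≤ ‖A‖ * euclNorm v := by
  rw [frobNorm_eq, euclNorm, euclNorm, ← Real.sqrt_mul (by positivity)]
  apply Real.sqrt_le_sqrt
  rw [Finset.sum_mul]
  apply Finset.sum_le_sum
  intro k _
  calc (A.mulVec v k) ^ 2 = (∑ j, A k j * v j) ^ 2 := by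
        simp [Matrix.mulVec, dotProduct]
    _ ≤ (∑ j, A k j ^ 2) * ∑ j, v j ^ 2 := Finset.sum_mul_sq_le_sq_mul_sq _ _ _

lemma norm_vecMulVec (w v : Fin d → ℝ) :
    ‖Matrix.vecMulVec w v‖ = euclNorm w * euclNorm v := by
  rw [frobNorm_eq, euclNorm, euclNorm, ← Real.sqrt_mul (by positivity)]
  congr 1
  rw [Finset.sum_mul]
  apply Finset.sum_congr rfl; intro k _
  rw [Finset.mul_sum]
  apply Finset.sum_congr rfl; intro l _
  simp [Matrix.vecMulVec_apply]; ring

end DESaux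
def phi {d : ℕ} (w : Fin d → ℝ) : Matrix (Fin d) (Fin d) ℝ :=
  (euclNorm w)⁻¹ • Matrix.vecMulVec w w

namespace DESaux
variable {d : ℕ}

lemma phi_apply (w : Fin d → ℝ) (k l : Fin d) : phi w k l = w k * w l / euclNorm w := by
  simp only [phi, Matrix.smul_apply, Matrix.vecMulVec_apply, smul_eq_mul]
  rw [div_eq_inv_mul]

lemma phi_zero : phi (0 : Fin d → ℝ) = 0 := by
  funext k l
  simp [phi_apply]

lemma norm_phi (w : Fin d → ℝ) : ‖phi w‖ = euclNorm w := by
  rcases eq_or_ne w 0 with rfl | hw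
  · simp only [phi_zero, norm_zero]
    have : euclNorm (0 : Fin d → ℝ) = 0 := by simp [euclNorm]
    rw [this]
  · have hr : 0 < euclNorm w := euclNorm_pos hw
    rw [phi, norm_smul, norm_vecMulVec, Real.norm_eq_abs, abs_inv, abs_of_pos hr]
    field_simp

lemma phi_lipschitz_aux (a b : Fin d → ℝ) (hba : euclNorm b ≤ euclNorm a) :
    ‖phi a - phi b‖ ≤ 3 * euclNorm (a - b) := by
  rcases eq_or_ne a 0 with rfl | ha
  · have h0 : euclNorm (0 : Fin d → ℝ) = 0 := by simp [euclNorm]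
    have hb0 : b = 0 := euclNorm_eq_zero (le_antisymm (by rwa [h0] at hba) (euclNorm_nonneg b))
    subst hb0
    simp [phi_zero, euclNorm_nonneg]
  rcases eq_or_ne b 0 with rfl | hb
  · rw [sub_zero] at *
    rw [phi_zero, sub_zero, norm_phi]
    nlinarith [euclNorm_nonneg a]
  have hra : 0 < euclNorm a := euclNorm_pos ha
  have hrb : 0 < euclNorm b := euclNorm_pos hb
  set ra := euclNorm a with hraa
  set rb := euclNorm b with hrbb
  set Δ := euclNorm (a - b) with hΔ
  have hΔ0 : 0 ≤ Δ := euclNorm_nonneg _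
  have habs : |ra - rb| ≤ Δ := abs_euclNorm_sub_le a b
  have hdecomp : phi a - phi b =
      (ra)⁻¹ • (Matrix.vecMulVec (a - b) a + Matrix.vecMulVec b (a - b))
        + ((ra)⁻¹ - (rb)⁻¹) • Matrix.vecMulVec b b := by
    funext k l
    simp only [Matrix.sub_apply, Matrix.add_apply, Matrix.smul_apply, phi_apply,
      Matrix.vecMulVec_apply, Pi.sub_apply, smul_eq_mul]
    rw [← hraa, ← hrbb]
    field_simp
    ring
  have hnorm1 : ‖Matrix.vecMulVec (a - b) a + Matrix.vecMulVec b (a - b)‖ ≤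
      Δ * ra + rb * Δ := by
    refine (norm_add_le _ _).trans ?_
    rw [norm_vecMulVec, norm_vecMulVec]
  have hnorm2 : ‖Matrix.vecMulVec b b‖ = rb * rb := norm_vecMulVec b b
  have hinv : |(ra)⁻¹ - (rb)⁻¹| ≤ Δ / (ra * rb) := by
    rw [inv_sub_inv (ne_of_gt hra) (ne_of_gt hrb), abs_div, abs_of_pos (mul_pos hra hrb)]
    gcongr
    rw [abs_sub_comm]; exact habs
  calc ‖phi a - phi b‖
      ≤ ‖(ra)⁻¹ • (Matrix.vecMulVec (a - b) a + Matrix.vecMulVec b (a - b))‖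
        + ‖((ra)⁻¹ - (rb)⁻¹) • Matrix.vecMulVec b b‖ := by rw [hdecomp]; exact norm_add_le _ _
    _ ≤ (ra)⁻¹ * (Δ * ra + rb * Δ) + (Δ / (ra * rb)) * (rb * rb) := by
        rw [norm_smul, norm_smul, Real.norm_eq_abs, Real.norm_eq_abs,
          abs_inv, abs_of_pos hra, hnorm2]
        gcongr
    _ ≤ 3 * Δ := by
        have h1 : (ra)⁻¹ * (Δ * ra + rb * Δ) = Δ + (rb / ra) * Δ := by
          field_simp
          try ring
        have h2 : Δ / (ra * rb) * (rb * rb) = (rb / ra) * Δ := by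
          field_simp
          try ring
        have h3 : rb / ra ≤ 1 := (div_le_one hra).2 hba
        have h4 : 0 ≤ rb / ra := div_nonneg hrb.le hra.le
        rw [h1, h2]
        nlinarith

lemma phi_lipschitz (a b : Fin d → ℝ) : ‖phi a - phi b‖ ≤ 3 * euclNorm (a - b) := by
  rcases le_total (euclNorm b) (euclNorm a) with h | h
  · exact phi_lipschitz_aux a b h
  · rw [norm_sub_rev, euclNorm_sub_comm]
    exact phi_lipschitz_aux b a h

end DESaux
namespace DESaux
variable {d : ℕ}

local notation "Mat" => Matrix (Fin d) (Fin d) ℝ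

@[reducible] def matTop (d : ℕ) : TopologicalSpace (Matrix (Fin d) (Fin d) ℝ) :=
  (Matrix.frobeniusSeminormedAddCommGroup (α := ℝ)).toPseudoMetricSpace.toUniformSpace.toTopologicalSpace

@[reducible] def matAdd (d : ℕ) : AddCommGroup (Matrix (Fin d) (Fin d) ℝ) :=
  (Matrix.frobeniusNormedAddCommGroup (α := ℝ)).toAddCommGroup

@[reducible] def matMod (d : ℕ) : Module ℝ (Matrix (Fin d) (Fin d) ℝ) :=
  (Matrix.frobeniusNormedSpace (R := ℝ) (α := ℝ)).toModule

attribute [local instance] matTop matAdd matMod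

/-- The coordinate map `M ↦ (M *ᵥ v) k` as a continuous linear map. -/
def cL (v : Fin d → ℝ) (k : Fin d) : Mat →L[ℝ] ℝ :=
  LinearMap.toContinuousLinearMap
    { toFun := fun M => M.mulVec v k
      map_add' := fun M N => by simp [Matrix.add_mulVec]
      map_smul' := fun c M => by simp [Matrix.smul_mulVec] }

@[simp] lemma cL_apply (v : Fin d → ℝ) (k : Fin d) (M : Mat) : cL v k M = M.mulVec v k := rfl

lemma continuous_cL (k : Fin d) : Continuous fun v : Fin d → ℝ => cL v k := by
  have : IsLinearMap ℝ fun v : Fin d → ℝ => cL v k := by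
    constructor
    · intro v w; ext M; simp [Matrix.mulVec_add]
    · intro c v; ext M; simp [Matrix.mulVec_smul]
  exact (IsLinearMap.mk' _ this).continuous_of_finiteDimensional

/-- `M ↦ ⟨a, M *ᵥ v⟩` as a continuous linear map. -/
def nsL (a v : Fin d → ℝ) : Mat →L[ℝ] ℝ := ∑ i, a i • cL v i

lemma nsL_apply (a v : Fin d → ℝ) (M : Mat) : nsL a v M = ∑ i, a i * M.mulVec v i := by
  simp [nsL]

lemma hasFDerivAt_den (v : Fin d → ℝ) (G : Mat) (ha : G.mulVec v ≠ 0) :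
    HasFDerivAt (fun M : Mat => euclNorm (M.mulVec v))
      ((euclNorm (G.mulVec v))⁻¹ • nsL (G.mulVec v) v) G := by
  have hq : HasFDerivAt (fun M : Mat => ∑ i, M.mulVec v i ^ 2)
      (∑ i, (2 * G.mulVec v i) • cL v i) G := by
    apply HasFDerivAt.fun_sum
    intro i _
    have h1 : HasFDerivAt (fun M : Mat => M.mulVec v i) (cL v i) G := (cL v i).hasFDerivAt
    have h2 : HasFDerivAt (fun M : Mat => M.mulVec v i * M.mulVec v i)
        (G.mulVec v i • cL v i + G.mulVec v i • cL v i) G := by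
      simpa using h1.fun_mul h1
    have h3 : (fun M : Mat => M.mulVec v i ^ 2) = fun M => M.mulVec v i * M.mulVec v i := by
      funext M; ring
    rw [h3]
    refine h2.congr_fderiv ?_
    ext H
    simp [two_mul, add_smul]
  have hrpos : 0 < euclNorm (G.mulVec v) := euclNorm_pos ha
  have hne : (∑ i, G.mulVec v i ^ 2) ≠ 0 := by
    have : 0 < ∑ i, G.mulVec v i ^ 2 := Real.sqrt_pos.1 hrpos
    exact ne_of_gt this
  have hs := (Real.hasDerivAt_sqrt hne).comp_hasFDerivAt G hq
  refine hs.congr_fderiv ?_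
  ext H
  simp only [ContinuousLinearMap.smul_apply, nsL_apply, ContinuousLinearMap.coe_smul',
    Pi.smul_apply, smul_eq_mul, ContinuousLinearMap.coe_sum', Finset.sum_apply,
    ContinuousLinearMap.coe_smul, cL_apply]
  rw [Finset.mul_sum, Finset.mul_sum]
  apply Finset.sum_congr rfl
  intro i _
  have hr : Real.sqrt (∑ i, G.mulVec v i ^ 2) = euclNorm (G.mulVec v) := rfl
  rw [hr]
  field_simp

/-- Derivative of the `(k,l)` entry of the numerator integrand. -/
def psi (G : Mat) (v : Fin d → ℝ) (k l : Fin d) : Mat →L[ℝ] ℝ :=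
  (euclNorm (G.mulVec v))⁻¹ • (G.mulVec v l • cL v k + G.mulVec v k • cL v l)
    - (G.mulVec v k * G.mulVec v l / euclNorm (G.mulVec v) ^ 3) • nsL (G.mulVec v) v

lemma psi_apply (G : Mat) (v : Fin d → ℝ) (k l : Fin d) (H : Mat) :
    psi G v k l H = (euclNorm (G.mulVec v))⁻¹ *
        (G.mulVec v l * H.mulVec v k + G.mulVec v k * H.mulVec v l)
      - G.mulVec v k * G.mulVec v l / euclNorm (G.mulVec v) ^ 3 *
        ∑ i, G.mulVec v i * H.mulVec v i := by
  simp [psi, nsL_apply, mul_add]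

lemma hasFDerivAt_entry (G : Mat) (v : Fin d → ℝ) (ha : G.mulVec v ≠ 0) (k l : Fin d) :
    HasFDerivAt (fun M : Mat => M.mulVec v k * M.mulVec v l / euclNorm (M.mulVec v))
      (psi G v k l) G := by
  have hk : HasFDerivAt (fun M : Mat => M.mulVec v k) (cL v k) G := (cL v k).hasFDerivAt
  have hl : HasFDerivAt (fun M : Mat => M.mulVec v l) (cL v l) G := (cL v l).hasFDerivAt
  have hden := hasFDerivAt_den v G ha
  have hrpos : 0 < euclNorm (G.mulVec v) := euclNorm_pos ha
  have hinv : HasFDerivAt (fun M : Mat => (euclNorm (M.mulVec v))⁻¹)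
      ((-((euclNorm (G.mulVec v)) ^ 2)⁻¹) • ((euclNorm (G.mulVec v))⁻¹ • nsL (G.mulVec v) v)) G :=
    (hasDerivAt_inv (ne_of_gt hrpos)).comp_hasFDerivAt G hden
  have h := (hk.fun_mul hl).fun_mul hinv
  have hfun : (fun M : Mat => M.mulVec v k * M.mulVec v l / euclNorm (M.mulVec v))
      = fun M : Mat => (M.mulVec v k * M.mulVec v l) * (euclNorm (M.mulVec v))⁻¹ := by
    funext M; rw [div_eq_mul_inv]
  rw [hfun]
  refine h.congr_fderiv ?_
  ext H
  rw [psi_apply]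
  simp only [ContinuousLinearMap.coe_smul', ContinuousLinearMap.coe_sub', Pi.sub_apply,
    Pi.smul_apply, smul_eq_mul, ContinuousLinearMap.add_apply,
    ContinuousLinearMap.smul_apply, nsL_apply, cL_apply]
  field_simp
  ring

end DESaux
namespace DESaux
variable {d : ℕ}

local notation "Mat" => Matrix (Fin d) (Fin d) ℝ

attribute [local instance] matTop matAdd matMod


lemma sum_smul_stdBasis (c : Fin d → Fin d → ℝ) (k l : Fin d) :
    (∑ k', ∑ l', c k' l' • Matrix.single k' l' (1 : ℝ)) k l = c k l := by
  simp only [Matrix.sum_apply, Matrix.smul_apply, Matrix.single, Matrix.of_apply,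
    smul_eq_mul, mul_ite, mul_one, mul_zero]
  rw [Finset.sum_comm]
  rw [Finset.sum_eq_single l]
  · rw [Finset.sum_eq_single k] <;> simp +contextual [eq_comm]
  · intro b _ hb; apply Finset.sum_eq_zero; simp +contextual [hb, eq_comm, Ne.symm]
  · simp

/-- Derivative of the matrix-valued numerator integrand. -/
def FF' (G : Mat) (v : Fin d → ℝ) : Mat →L[ℝ] Mat :=
  ∑ k, ∑ l, (psi G v k l).smulRight (Matrix.single k l 1)

lemma FF'_entry (G : Mat) (v : Fin d → ℝ) (H : Mat) (k l : Fin d) :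
    FF' G v H k l = psi G v k l H := by
  have : FF' G v H = ∑ k', ∑ l', (psi G v k' l' H) • Matrix.single k' l' (1 : ℝ) := by
    simp [FF', ContinuousLinearMap.sum_apply, ContinuousLinearMap.smulRight_apply]
  rw [this, sum_smul_stdBasis]

lemma hasFDerivAt_FFm (G : Mat) (v : Fin d → ℝ) (ha : G.mulVec v ≠ 0) :
    HasFDerivAt (fun M : Mat => phi (M.mulVec v)) (FF' G v) G := by
  have hfun : (fun M : Mat => phi (M.mulVec v)) = fun M : Mat =>
      ∑ k, ∑ l, (M.mulVec v k * M.mulVec v l / euclNorm (M.mulVec v)) •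
        Matrix.single k l (1 : ℝ) := by
    funext M
    funext k l
    rw [sum_smul_stdBasis, phi_apply]
  rw [hfun]
  apply HasFDerivAt.fun_sum
  intro k _
  apply HasFDerivAt.fun_sum
  intro l _
  exact (hasFDerivAt_entry G v ha k l).smul_const _

lemma FF'_apply (G : Mat) (v : Fin d → ℝ) (H : Mat) :
    FF' G v H = (euclNorm (G.mulVec v))⁻¹ •
        (Matrix.vecMulVec (H.mulVec v) (G.mulVec v) + Matrix.vecMulVec (G.mulVec v) (H.mulVec v))
      - ((∑ i, G.mulVec v i * H.mulVec v i) / euclNorm (G.mulVec v) ^ 3) •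
          Matrix.vecMulVec (G.mulVec v) (G.mulVec v) := by
  funext k l
  rw [FF'_entry, psi_apply]
  simp only [Matrix.sub_apply, Matrix.add_apply, Matrix.smul_apply, Matrix.vecMulVec_apply,
    smul_eq_mul]
  ring

lemma norm_FF'_le (G : Mat) (v : Fin d → ℝ) (hv : euclNorm v = 1) : ‖FF' G v‖ ≤ 3 := by
  apply ContinuousLinearMap.opNorm_le_bound _ (by norm_num)
  intro H
  rw [FF'_apply]
  set a := G.mulVec v with haa
  set h := H.mulVec v with hhh
  have hH : euclNorm h ≤ ‖H‖ := by
    have := euclNorm_mulVec_le H v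
    rwa [hv, mul_one] at this
  rcases eq_or_ne a 0 with h0 | h0
  · rw [h0]
    have z1 : Matrix.vecMulVec h (0 : Fin d → ℝ) = 0 := by
      funext k l; simp [Matrix.vecMulVec_apply]
    have z2 : Matrix.vecMulVec (0 : Fin d → ℝ) h = 0 := by
      funext k l; simp [Matrix.vecMulVec_apply]
    have z3 : Matrix.vecMulVec (0 : Fin d → ℝ) (0 : Fin d → ℝ) = 0 := by
      funext k l; simp [Matrix.vecMulVec_apply]
    rw [z1, z2, z3]
    simp
    try positivity
  · have hr : 0 < euclNorm a := euclNorm_pos h0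
    have hhn : 0 ≤ euclNorm h := euclNorm_nonneg h
    have t1 : ‖(euclNorm a)⁻¹ •
        (Matrix.vecMulVec h a + Matrix.vecMulVec a h)‖ ≤ 2 * euclNorm h := by
      rw [norm_smul, Real.norm_eq_abs, abs_inv, abs_of_pos hr]
      have : ‖Matrix.vecMulVec h a + Matrix.vecMulVec a h‖ ≤
          euclNorm h * euclNorm a + euclNorm a * euclNorm h :=
        (norm_add_le _ _).trans_eq (by rw [norm_vecMulVec, norm_vecMulVec])
      calc (euclNorm a)⁻¹ * ‖Matrix.vecMulVec h a + Matrix.vecMulVec a h‖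
          ≤ (euclNorm a)⁻¹ * (euclNorm h * euclNorm a + euclNorm a * euclNorm h) := by
            gcongr
        _ = 2 * euclNorm h := by field_simp; ring
    have t2 : ‖((∑ i, a i * h i) / euclNorm a ^ 3) • Matrix.vecMulVec a a‖ ≤ euclNorm h := by
      rw [norm_smul, Real.norm_eq_abs, norm_vecMulVec, abs_div, abs_of_pos (by positivity :
        (0:ℝ) < euclNorm a ^ 3)]
      have hcs : |∑ i, a i * h i| ≤ euclNorm a * euclNorm h := cauchy a h
      calc |∑ i, a i * h i| / euclNorm a ^ 3 * (euclNorm a * euclNorm a)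
          ≤ euclNorm a * euclNorm h / euclNorm a ^ 3 * (euclNorm a * euclNorm a) := by gcongr
        _ = euclNorm h := by field_simp
    calc ‖_ - _‖ ≤ _ + _ := norm_sub_le _ _
      _ ≤ 2 * euclNorm h + euclNorm h := add_le_add t1 t2
      _ = 3 * euclNorm h := by ring
      _ ≤ 3 * ‖H‖ := by gcongr

lemma norm_den'_le (G : Mat) (v : Fin d → ℝ) (hv : euclNorm v = 1) :
    ‖(euclNorm (G.mulVec v))⁻¹ • nsL (G.mulVec v) v‖ ≤ 1 := by
  apply ContinuousLinearMap.opNorm_le_bound _ (by norm_num)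
  intro H
  set a := G.mulVec v
  have hH : euclNorm (H.mulVec v) ≤ ‖H‖ := by
    have := euclNorm_mulVec_le H v
    rwa [hv, mul_one] at this
  rcases eq_or_ne a 0 with h0 | h0
  · simp only [ContinuousLinearMap.smul_apply, nsL_apply, smul_eq_mul, Real.norm_eq_abs]
    rw [h0]
    simp [euclNorm]
  · have hr : 0 < euclNorm a := euclNorm_pos h0
    simp only [ContinuousLinearMap.smul_apply, nsL_apply, smul_eq_mul, Real.norm_eq_abs]
    rw [abs_mul, abs_inv, abs_of_pos hr]
    calc (euclNorm a)⁻¹ * |∑ i, a i * H.mulVec v i|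
        ≤ (euclNorm a)⁻¹ * (euclNorm a * euclNorm (H.mulVec v)) := by
          gcongr; exact cauchy a _
      _ = euclNorm (H.mulVec v) := by field_simp
      _ ≤ 1 * ‖H‖ := by rw [one_mul]; exact hH

lemma lip_den (v : Fin d → ℝ) (hv : euclNorm v = 1) :
    LipschitzWith 1 (fun M : Mat => euclNorm (M.mulVec v)) := by
  apply LipschitzWith.of_dist_le_mul
  intro M N
  rw [dist_eq_norm, dist_eq_norm, Real.norm_eq_abs]
  have h1 : |euclNorm (M.mulVec v) - euclNorm (N.mulVec v)| ≤ euclNorm (M.mulVec v - N.mulVec v) :=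
    abs_euclNorm_sub_le _ _
  have h2 : M.mulVec v - N.mulVec v = (M - N).mulVec v := (Matrix.sub_mulVec M N v).symm
  have h3 : euclNorm ((M - N).mulVec v) ≤ ‖M - N‖ := by
    have := euclNorm_mulVec_le (M - N) v
    rwa [hv, mul_one] at this
  rw [h2] at h1
  push_cast
  rw [one_mul]
  exact h1.trans h3

lemma lip_num (v : Fin d → ℝ) (hv : euclNorm v = 1) :
    LipschitzWith 3 (fun M : Mat => phi (M.mulVec v)) := by
  apply LipschitzWith.of_dist_le_mul
  intro M N
  rw [dist_eq_norm, dist_eq_norm]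
  have h1 := phi_lipschitz (M.mulVec v) (N.mulVec v)
  have h2 : M.mulVec v - N.mulVec v = (M - N).mulVec v := (Matrix.sub_mulVec M N v).symm
  rw [h2] at h1
  have h3 : euclNorm ((M - N).mulVec v) ≤ ‖M - N‖ := by
    have := euclNorm_mulVec_le (M - N) v
    rwa [hv, mul_one] at this
  push_cast
  nlinarith [euclNorm_nonneg ((M - N).mulVec v)]

end DESaux
namespace DESaux
variable {d : ℕ}

local notation "Mat" => Matrix (Fin d) (Fin d) ℝ

attribute [local instance] matTop matAdd matMod

local notation "Sph" => Metric.sphere (0 : EuclideanSpace ℝ (Fin d)) 1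

instance : MeasurableSpace Mat := borel _
instance : BorelSpace Mat := ⟨rfl⟩

lemma continuous_euclNorm : Continuous (euclNorm : (Fin d → ℝ) → ℝ) :=
  Real.continuous_sqrt.comp (continuous_finset_sum _ fun i _ => (continuous_apply i).pow 2)

lemma euclNorm_eq_norm (w : EuclideanSpace ℝ (Fin d)) : euclNorm (fun i => w i) = ‖w‖ := by
  rw [EuclideanSpace.norm_eq, euclNorm]
  congr 1
  exact Finset.sum_congr rfl fun i _ => by rw [Real.norm_eq_abs, sq_abs]

lemma euclNorm_coe_sphere (u : Sph) : euclNorm (fun i => (↑u : EuclideanSpace ℝ (Fin d)) i) = 1 := by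
  rw [euclNorm_eq_norm]
  exact norm_eq_of_mem_sphere u

lemma continuous_coeFun : Continuous fun u : Sph => (fun i => (↑u : EuclideanSpace ℝ (Fin d)) i) :=
  continuous_pi fun i => (EuclideanSpace.proj i).continuous.comp continuous_subtype_val

lemma continuous_mulVec (G : Mat) :
    Continuous fun u : Sph => G.mulVec (↑u : EuclideanSpace ℝ (Fin d)) := by
  have h : ∀ u : Sph, G.mulVec (↑u : EuclideanSpace ℝ (Fin d))
      = G.mulVec (fun i => (↑u : EuclideanSpace ℝ (Fin d)) i) := fun u => rfl
  simp only [h]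
  have hc : Continuous fun v : Fin d → ℝ => G.mulVec v := by
    apply continuous_pi
    intro k
    have : ∀ v : Fin d → ℝ, G.mulVec v k = ∑ j, G k j * v j := by
      intro v; simp [Matrix.mulVec, dotProduct]
    simp only [this]
    exact continuous_finset_sum _ fun j _ => continuous_const.mul (continuous_apply j)
  exact hc.comp continuous_coeFun

lemma continuous_vvv : Continuous fun w : Fin d → ℝ => Matrix.vecMulVec w w := by
  have h : (fun w : Fin d → ℝ => Matrix.vecMulVec w w)
      = fun w => ∑ k, ∑ l, (w k * w l) • Matrix.single k l (1:ℝ) := by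
    funext w
    funext k l
    rw [sum_smul_stdBasis]
    simp [Matrix.vecMulVec_apply]
  rw [h]
  exact continuous_finset_sum _ fun k _ => continuous_finset_sum _ fun l _ =>
    (((continuous_apply k).mul (continuous_apply l)).smul continuous_const)

lemma continuous_r (G : Mat) :
    Continuous fun u : Sph => euclNorm (G.mulVec (↑u : EuclideanSpace ℝ (Fin d))) :=
  continuous_euclNorm.comp (continuous_mulVec G)

lemma meas_F (x : Mat) :
    Measurable fun u : Sph => phi (x.mulVec (↑u : EuclideanSpace ℝ (Fin d))) := by
  have h : (fun u : Sph => phi (x.mulVec (↑u : EuclideanSpace ℝ (Fin d))))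
      = fun u : Sph => (euclNorm (x.mulVec (↑u : EuclideanSpace ℝ (Fin d))))⁻¹ •
          Matrix.vecMulVec (x.mulVec (↑u : EuclideanSpace ℝ (Fin d)))
            (x.mulVec (↑u : EuclideanSpace ℝ (Fin d))) := by
    funext u; rfl
  rw [h]
  exact ((continuous_r x).measurable.inv).smul
    ((continuous_vvv.comp (continuous_mulVec x)).measurable)

lemma continuous_cL_comp (k : Fin d) :
    Continuous fun u : Sph => cL (fun i => (↑u : EuclideanSpace ℝ (Fin d)) i) k :=
  (continuous_cL k).comp continuous_coeFun

lemma continuous_nsL (G : Mat) :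
    Continuous fun u : Sph =>
      nsL (G.mulVec (↑u : EuclideanSpace ℝ (Fin d))) (fun i => (↑u : EuclideanSpace ℝ (Fin d)) i) := by
  unfold nsL
  exact continuous_finset_sum _ fun i _ =>
    (((continuous_apply i).comp (continuous_mulVec G)).smul (continuous_cL_comp i))

lemma meas_psi (G : Mat) (k l : Fin d) :
    Measurable fun u : Sph =>
      psi G (fun i => (↑u : EuclideanSpace ℝ (Fin d)) i) k l := by
  unfold psi
  have hcoe : ∀ u : Sph, G.mulVec (fun i => (↑u : EuclideanSpace ℝ (Fin d)) i)
      = G.mulVec (↑u : EuclideanSpace ℝ (Fin d)) := fun u => rfl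
  simp only [hcoe]
  apply Measurable.sub
  · exact ((continuous_r G).measurable.inv).smul
      ((((continuous_apply l).comp (continuous_mulVec G)).smul (continuous_cL_comp k)).add
        (((continuous_apply k).comp (continuous_mulVec G)).smul (continuous_cL_comp l))).measurable
  · apply Measurable.fun_smul
    · apply Measurable.fun_div
      · exact (((continuous_apply k).comp (continuous_mulVec G)).mul
          ((continuous_apply l).comp (continuous_mulVec G))).measurable
      · exact ((continuous_r G).pow 3).measurable
    · exact (continuous_nsL G).measurable

lemma meas_FF' (G : Mat) :
    Measurable fun u : Sph => FF' G (fun i => (↑u : EuclideanSpace ℝ (Fin d)) i) := by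
  unfold FF'
  apply Finset.measurable_sum
  intro k _
  apply Finset.measurable_sum
  intro l _
  have hc : Continuous fun T : Mat →L[ℝ] ℝ => T.smulRight (Matrix.single k l (1:ℝ)) := by
    have : IsLinearMap ℝ fun T : Mat →L[ℝ] ℝ => T.smulRight (Matrix.single k l (1:ℝ)) := by
      constructor
      · intro x y; ext M i j
        simp only [ContinuousLinearMap.smulRight_apply, ContinuousLinearMap.add_apply,
          Matrix.add_apply, Matrix.smul_apply, smul_eq_mul]
        ring
      · intro c x; ext M i j
        simp only [ContinuousLinearMap.smulRight_apply, ContinuousLinearMap.coe_smul',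
          Pi.smul_apply, Matrix.smul_apply, smul_eq_mul]
        ring
    exact (IsLinearMap.mk' _ this).continuous_of_finiteDimensional
  exact hc.measurable.comp (meas_psi G k l)

lemma meas_den' (G : Mat) :
    Measurable fun u : Sph =>
      (euclNorm (G.mulVec (↑u : EuclideanSpace ℝ (Fin d))))⁻¹ •
        nsL (G.mulVec (↑u : EuclideanSpace ℝ (Fin d))) (fun i => (↑u : EuclideanSpace ℝ (Fin d)) i) := by
  exact ((continuous_r G).measurable.inv).smul (continuous_nsL G).measurable

end DESaux
namespace DESaux
open scoped Pointwise
variable {d : ℕ}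

local notation "Mat" => Matrix (Fin d) (Fin d) ℝ

attribute [local instance] matTop matAdd matMod

local notation "Sph" => Metric.sphere (0 : EuclideanSpace ℝ (Fin d)) 1

instance : IsFiniteMeasure (sphereSurf d) := by
  unfold sphereSurf; infer_instance

lemma ae_mulVec_ne (G : Mat) (hG : G ≠ 0) :
    ∀ᵐ (u : Sph) ∂(sphereSurf d), G.mulVec (↑u : EuclideanSpace ℝ (Fin d)) ≠ 0 := by
  classical
  set m : EuclideanSpace ℝ (Fin d) →ₗ[ℝ] (Fin d → ℝ) :=
    { toFun := fun w => G.mulVec (fun i => w i)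
      map_add' := fun w w' => by
        show G.mulVec (fun i => (w + w') i) = G.mulVec (fun i => w i) + G.mulVec (fun i => w' i)
        have h : (fun i => (w + w') i) = (fun i => w i) + fun i => w' i := rfl
        rw [h, Matrix.mulVec_add]
      map_smul' := fun c w => by
        show G.mulVec (fun i => (c • w) i) = c • G.mulVec (fun i => w i)
        have h : (fun i => (c • w) i) = c • fun i => w i := rfl
        rw [h, Matrix.mulVec_smul] } with hm
  set K := LinearMap.ker m with hK
  have hKt : K ≠ ⊤ := by
    obtain ⟨k, l, hkl⟩ : ∃ k l, G k l ≠ 0 := by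
      by_contra h
      push_neg at h
      exact hG (by funext k l; exact h k l)
    intro hT
    have hmem : (EuclideanSpace.single l (1:ℝ)) ∈ K := hT ▸ Submodule.mem_top
    rw [hK, LinearMap.mem_ker] at hmem
    apply hkl
    have := congrFun hmem k
    simpa [hm, Matrix.mulVec, dotProduct, EuclideanSpace.single_apply,
      Finset.sum_ite_eq', mul_comm] using this
  have hvol : (volume : Measure (EuclideanSpace ℝ (Fin d))) (K : Set (EuclideanSpace ℝ (Fin d))) = 0 :=
    Measure.addHaar_submodule _ K hKt
  rw [MeasureTheory.ae_iff]
  have hsub : {u : Sph | ¬ G.mulVec (↑u : EuclideanSpace ℝ (Fin d)) ≠ 0}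
      = ((↑) ⁻¹' (K : Set (EuclideanSpace ℝ (Fin d)))) := by
    ext u
    simp only [Set.mem_setOf_eq, not_not, Set.mem_preimage, SetLike.mem_coe, hK,
      LinearMap.mem_ker]
    exact Iff.rfl
  rw [hsub, sphereSurf]
  have hAm : MeasurableSet ((↑) ⁻¹' (K : Set (EuclideanSpace ℝ (Fin d))) : Set Sph) :=
    (K.closed_of_finiteDimensional.measurableSet).preimage
      continuous_subtype_val.measurable
  rw [Measure.toSphere_apply' _ hAm]
  have h0 : (volume : Measure (EuclideanSpace ℝ (Fin d)))
      (Set.Ioo (0:ℝ) 1 •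
        (Subtype.val '' ((Subtype.val ⁻¹' (K : Set (EuclideanSpace ℝ (Fin d)))) : Set Sph))) = 0 := by
    apply measure_mono_null _ hvol
    intro x hx
    rw [Set.mem_smul] at hx
    obtain ⟨r, hr, y, hy, rfl⟩ := hx
    obtain ⟨u, hu, rfl⟩ := hy
    exact K.smul_mem r (by exact hu)
  rw [h0, mul_zero]

lemma sphereSurf_univ_pos (hd : 1 ≤ d) : 0 < sphereSurf d Set.univ := by
  rw [sphereSurf, Measure.toSphere_apply_univ]
  refine ENNReal.mul_pos ?_ ?_
  · simp only [ne_eq, Nat.cast_eq_zero]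
    rw [finrank_euclideanSpace_fin]
    omega
  · exact (measure_ball_pos _ _ one_pos).ne'

lemma integrable_den (x : Mat) :
    Integrable (fun u : Sph => euclNorm (x.mulVec (↑u : EuclideanSpace ℝ (Fin d))))
      (sphereSurf d) := by
  apply MeasureTheory.Integrable.mono' (integrable_const ‖x‖)
    (continuous_r x).aestronglyMeasurable
  apply Filter.Eventually.of_forall
  intro u
  rw [Real.norm_eq_abs, abs_of_nonneg (euclNorm_nonneg _)]
  have h := euclNorm_mulVec_le x (fun i => (↑u : EuclideanSpace ℝ (Fin d)) i)
  rw [euclNorm_coe_sphere u, mul_one] at h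
  exact h

lemma integrable_F (x : Mat) :
    Integrable (fun u : Sph => phi (x.mulVec (↑u : EuclideanSpace ℝ (Fin d))))
      (sphereSurf d) := by
  apply MeasureTheory.Integrable.mono' (integrable_const ‖x‖)
    (meas_F x).aestronglyMeasurable
  apply Filter.Eventually.of_forall
  intro u
  rw [norm_phi]
  have h := euclNorm_mulVec_le x (fun i => (↑u : EuclideanSpace ℝ (Fin d)) i)
  rw [euclNorm_coe_sphere u, mul_one] at h
  exact h

lemma den_int_pos (G : Mat) (hG : G ≠ 0) (hd : 1 ≤ d) :
    0 < ∫ u : Sph, euclNorm (G.mulVec (↑u : EuclideanSpace ℝ (Fin d))) ∂(sphereSurf d) := by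
  rw [integral_pos_iff_support_of_nonneg (fun u => euclNorm_nonneg _) (integrable_den G)]
  have h0 : (sphereSurf d) {u : Sph | G.mulVec (↑u : EuclideanSpace ℝ (Fin d)) = 0} = 0 := by
    have := ae_mulVec_ne G hG
    rw [MeasureTheory.ae_iff] at this
    simpa [not_not] using this
  have hcompl : (sphereSurf d)
      (Function.support fun u : Sph => euclNorm (G.mulVec (↑u : EuclideanSpace ℝ (Fin d))))ᶜ = 0 := by
    apply measure_mono_null _ h0
    intro u hu
    simp only [Set.mem_compl_iff, Function.mem_support, not_not] at hu
    exact euclNorm_eq_zero hu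
  by_contra h
  push_neg at h
  have hz : (sphereSurf d)
      (Function.support fun u : Sph => euclNorm (G.mulVec (↑u : EuclideanSpace ℝ (Fin d)))) = 0 :=
    le_antisymm h zero_le
  have huniv := sphereSurf_univ_pos (d := d) hd
  have : (sphereSurf d) Set.univ ≤ 0 := by
    calc (sphereSurf d) Set.univ
        = (sphereSurf d) ((Function.support fun u : Sph =>
            euclNorm (G.mulVec (↑u : EuclideanSpace ℝ (Fin d)))) ∪
          (Function.support fun u : Sph =>
            euclNorm (G.mulVec (↑u : EuclideanSpace ℝ (Fin d))))ᶜ) := by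
          rw [Set.union_compl_self]
      _ ≤ _ + _ := measure_union_le _ _
      _ = 0 := by rw [hz, hcompl, add_zero]
  exact absurd (le_antisymm this zero_le) huniv.ne'

/-- Entry evaluation as a continuous linear map. -/
def eCLM (k l : Fin d) : Mat →L[ℝ] ℝ :=
  LinearMap.toContinuousLinearMap
    { toFun := fun A => A k l
      map_add' := fun _ _ => rfl
      map_smul' := fun _ _ => rfl }

lemma integral_entry (f : Sph → Mat) (hf : Integrable f (sphereSurf d)) (k l : Fin d) :
    (∫ u, f u ∂(sphereSurf d)) k l = ∫ u, f u k l ∂(sphereSurf d) := by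
  have h := (eCLM k l).integral_comp_comm hf
  exact h.symm

end DESaux

open DESaux in
set_option maxHeartbeats 1000000 in
/-- **Inequality (4.4) in the proof of Proposition 4.1.** For every nonzero real `d × d`
matrix `G`, the map `𝒮` is differentiable at `G` and its Fréchet derivative satisfies
`‖D𝒮(G)‖ ≤ 2(1 + √d) · σ(𝕊^{d-1}) / ∫_{𝕊^{d-1}} |G·u| dσ(u)`. -/
theorem stmt2 (d : ℕ) (hd : 2 ≤ d) (G : Matrix (Fin d) (Fin d) ℝ) (hG : G ≠ 0) :
    DifferentiableAt ℝ (DES d) G ∧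
    @Norm.norm (Matrix (Fin d) (Fin d) ℝ →L[ℝ] Matrix (Fin d) (Fin d) ℝ)
      (@ContinuousLinearMap.hasOpNorm ℝ ℝ (Matrix (Fin d) (Fin d) ℝ) (Matrix (Fin d) (Fin d) ℝ)
        _ _ _ _ _ _ (RingHom.id ℝ)) (fderiv ℝ (DES d) G) ≤ 2 * (1 + Real.sqrt d) * (sphereSurf d Set.univ).toReal /
      (∫ u : sphere (0 : EuclideanSpace ℝ (Fin d)) 1,
        euclNorm (G.mulVec u) ∂ sphereSurf d) := by
  classical
  letI : TopologicalSpace (Matrix (Fin d) (Fin d) ℝ) := matTop d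
  letI : AddCommGroup (Matrix (Fin d) (Fin d) ℝ) := matAdd d
  letI : Module ℝ (Matrix (Fin d) (Fin d) ℝ) := matMod d
  have hd1 : 1 ≤ d := le_trans (by norm_num) hd
  have h3nn : Real.nnabs (3:ℝ) = 3 := by
    rw [← NNReal.coe_inj, Real.coe_nnabs]; norm_num
  have h1nn : Real.nnabs (1:ℝ) = 1 := by
    rw [← NNReal.coe_inj, Real.coe_nnabs]; norm_num
  -- numerator: differentiate under the integral
  obtain ⟨hintF', hN⟩ := hasFDerivAt_integral_of_dominated_loc_of_lip
    (μ := sphereSurf d)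
    (F := fun (M : Matrix (Fin d) (Fin d) ℝ) (u : sphere (0 : EuclideanSpace ℝ (Fin d)) 1) =>
      phi (M.mulVec u))
    (F' := fun u : sphere (0 : EuclideanSpace ℝ (Fin d)) 1 =>
      FF' G ((WithLp.equiv 2 (Fin d → ℝ)) ↑u))
    (x₀ := G) (bound := fun _ => (3:ℝ)) (s := Metric.ball G 1) (Metric.ball_mem_nhds G one_pos)
    (Filter.Eventually.of_forall fun x => (meas_F x).aestronglyMeasurable)
    (integrable_F G)
    ((meas_FF' G).aestronglyMeasurable)
    (Filter.Eventually.of_forall fun u => by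
      rw [h3nn]
      show LipschitzOnWith 3 (fun M : Matrix (Fin d) (Fin d) ℝ =>
        phi (M.mulVec ((WithLp.equiv 2 (Fin d → ℝ)) ↑u))) (Metric.ball G 1)
      exact (lip_num ((WithLp.equiv 2 (Fin d → ℝ)) ↑u)
        (euclNorm_coe_sphere u)).lipschitzOnWith)
    (integrable_const 3)
    ((ae_mulVec_ne G hG).mono fun u hu =>
      hasFDerivAt_FFm G ((WithLp.equiv 2 (Fin d → ℝ)) ↑u) hu)
  -- denominator: differentiate under the integral
  obtain ⟨hintD', hDen⟩ := hasFDerivAt_integral_of_dominated_loc_of_lip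
    (μ := sphereSurf d)
    (F := fun (M : Matrix (Fin d) (Fin d) ℝ) (u : sphere (0 : EuclideanSpace ℝ (Fin d)) 1) =>
      euclNorm (M.mulVec u))
    (F' := fun u : sphere (0 : EuclideanSpace ℝ (Fin d)) 1 =>
      (euclNorm (G.mulVec u))⁻¹ •
        nsL (G.mulVec u) ((WithLp.equiv 2 (Fin d → ℝ)) ↑u))
    (x₀ := G) (bound := fun _ => (1:ℝ)) (s := Metric.ball G 1) (Metric.ball_mem_nhds G one_pos)
    (Filter.Eventually.of_forall fun x => (continuous_r x).aestronglyMeasurable)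
    (integrable_den G)
    ((meas_den' G).aestronglyMeasurable)
    (Filter.Eventually.of_forall fun u => by
      rw [h1nn]
      show LipschitzOnWith 1 (fun M : Matrix (Fin d) (Fin d) ℝ =>
        euclNorm (M.mulVec ((WithLp.equiv 2 (Fin d → ℝ)) ↑u))) (Metric.ball G 1)
      exact (lip_den ((WithLp.equiv 2 (Fin d → ℝ)) ↑u)
        (euclNorm_coe_sphere u)).lipschitzOnWith)
    (integrable_const 1)
    ((ae_mulVec_ne G hG).mono fun u hu =>
      hasFDerivAt_den ((WithLp.equiv 2 (Fin d → ℝ)) ↑u) G hu)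
  set f0 : ℝ := ∫ u : sphere (0 : EuclideanSpace ℝ (Fin d)) 1,
    euclNorm (G.mulVec u) ∂ sphereSurf d with hf0def
  have hf0 : 0 < f0 := den_int_pos G hG hd1
  set N0 : Matrix (Fin d) (Fin d) ℝ :=
    ∫ u : sphere (0 : EuclideanSpace ℝ (Fin d)) 1, phi (G.mulVec u) ∂ sphereSurf d with hN0def
  set DN := ∫ u : sphere (0 : EuclideanSpace ℝ (Fin d)) 1,
    FF' G ((WithLp.equiv 2 (Fin d → ℝ)) ↑u) ∂ sphereSurf d with hDNdef
  set Df := ∫ u : sphere (0 : EuclideanSpace ℝ (Fin d)) 1,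
    (euclNorm (G.mulVec u))⁻¹ • nsL (G.mulVec u) ((WithLp.equiv 2 (Fin d → ℝ)) ↑u)
      ∂ sphereSurf d with hDfdef
  have hinv : HasFDerivAt (fun M : Matrix (Fin d) (Fin d) ℝ =>
      (∫ u : sphere (0 : EuclideanSpace ℝ (Fin d)) 1,
        euclNorm (M.mulVec u) ∂ sphereSurf d)⁻¹) ((-(f0 ^ 2)⁻¹) • Df) G :=
    (hasDerivAt_inv hf0.ne').comp_hasFDerivAt G hDen
  have hprod := hinv.smul hN
  have hDES : HasFDerivAt (DES d)
      (f0⁻¹ • DN + ((-(f0 ^ 2)⁻¹) • Df).smulRight N0) G := by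
    have hfun : DES d = fun M : Matrix (Fin d) (Fin d) ℝ =>
        (∫ u : sphere (0 : EuclideanSpace ℝ (Fin d)) 1,
          euclNorm (M.mulVec u) ∂ sphereSurf d)⁻¹ •
          (∫ u : sphere (0 : EuclideanSpace ℝ (Fin d)) 1, phi (M.mulVec u) ∂ sphereSurf d) := by
      funext M
      funext k l
      have hint : Integrable
          (fun u : sphere (0 : EuclideanSpace ℝ (Fin d)) 1 => phi (M.mulVec u))
          (sphereSurf d) := integrable_F M
      have hI : (∫ u : sphere (0 : EuclideanSpace ℝ (Fin d)) 1,
            phi (M.mulVec u) ∂ sphereSurf d) k l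
          = ∫ u : sphere (0 : EuclideanSpace ℝ (Fin d)) 1,
            M.mulVec u k * M.mulVec u l / euclNorm (M.mulVec u) ∂ sphereSurf d := by
        rw [integral_entry _ hint k l]
        apply integral_congr_ae
        exact Filter.Eventually.of_forall fun u => phi_apply _ k l
      have hdiv0 : (1:ℕ)/d = 0 := Nat.div_eq_of_lt (by omega)
      simp only [DES, Matrix.smul_apply, smul_eq_mul]
      rw [hI, hdiv0, div_eq_inv_mul]
      simp
    rw [hfun]
    exact hprod
  refine ⟨hDES.differentiableAt, ?_⟩
  refine (le_of_eq (congrArg (fun T => ‖T‖) hDES.fderiv)).trans ?_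
  -- now the norm bound
  have hDNle : ‖DN‖ ≤ 3 * (sphereSurf d Set.univ).toReal := by
    rw [hDNdef]
    refine (norm_integral_le_integral_norm _).trans ?_
    calc ∫ u : sphere (0 : EuclideanSpace ℝ (Fin d)) 1,
          ‖FF' G ((WithLp.equiv 2 (Fin d → ℝ)) ↑u)‖ ∂ sphereSurf d
        ≤ ∫ _u : sphere (0 : EuclideanSpace ℝ (Fin d)) 1, (3:ℝ) ∂ sphereSurf d := by
          apply integral_mono hintF'.norm (integrable_const 3)
          intro u
          exact norm_FF'_le G _ (euclNorm_coe_sphere u)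
      _ = 3 * (sphereSurf d Set.univ).toReal := by
          rw [integral_const, smul_eq_mul, mul_comm]; rfl
  have hDfle : ‖Df‖ ≤ (sphereSurf d Set.univ).toReal := by
    rw [hDfdef]
    refine (norm_integral_le_integral_norm _).trans ?_
    calc ∫ u : sphere (0 : EuclideanSpace ℝ (Fin d)) 1,
          ‖(euclNorm (G.mulVec u))⁻¹ •
            nsL (G.mulVec u) ((WithLp.equiv 2 (Fin d → ℝ)) ↑u)‖ ∂ sphereSurf d
        ≤ ∫ _u : sphere (0 : EuclideanSpace ℝ (Fin d)) 1, (1:ℝ) ∂ sphereSurf d := by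
          apply integral_mono hintD'.norm (integrable_const 1)
          intro u
          exact norm_den'_le G _ (euclNorm_coe_sphere u)
      _ = (sphereSurf d Set.univ).toReal := by
          rw [integral_const, smul_eq_mul, mul_one]; rfl
  have hN0le : ‖N0‖ ≤ f0 := by
    rw [hN0def, hf0def]
    refine (norm_integral_le_integral_norm _).trans ?_
    apply le_of_eq
    apply integral_congr_ae
    exact Filter.Eventually.of_forall fun u => norm_phi _
  have hsurf : (0:ℝ) ≤ (sphereSurf d Set.univ).toReal := ENNReal.toReal_nonneg
  have hsqrt : (1:ℝ) ≤ Real.sqrt d := by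
    rw [show (1:ℝ) = Real.sqrt 1 by simp]
    apply Real.sqrt_le_sqrt
    exact_mod_cast hd1
  clear hN hDen hinv hprod hDES hintF' hintD'
  clear_value f0 N0 DN Df
  clear hf0def hN0def hDNdef hDfdef
  set S : ℝ := (sphereSurf d Set.univ).toReal with hS
  clear_value S
  have hs1 : ‖f0⁻¹ • DN‖ ≤ f0⁻¹ * (3 * S) := by
    calc ‖f0⁻¹ • DN‖ ≤ ‖(f0⁻¹ : ℝ)‖ * ‖DN‖ := ContinuousLinearMap.opNorm_smul_le _ _
      _ = f0⁻¹ * ‖DN‖ := by rw [Real.norm_eq_abs, abs_inv, abs_of_pos hf0]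
      _ ≤ f0⁻¹ * (3 * S) := by gcongr
  have hs2 : ‖((-(f0 ^ 2)⁻¹) • Df).smulRight N0‖ ≤ (f0 ^ 2)⁻¹ * S * f0 := by
    have he : ‖((-(f0 ^ 2)⁻¹) • Df).smulRight N0‖ = ‖(-(f0 ^ 2)⁻¹) • Df‖ * ‖N0‖ :=
      ContinuousLinearMap.norm_smulRight_apply _ _
    have he2 : ‖(-(f0 ^ 2)⁻¹) • Df‖ ≤ (f0 ^ 2)⁻¹ * ‖Df‖ := by
      refine (ContinuousLinearMap.opNorm_smul_le _ _).trans_eq ?_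
      rw [Real.norm_eq_abs, abs_neg, abs_inv, abs_of_pos (by positivity : (0:ℝ) < f0 ^ 2)]
    rw [he]
    calc ‖(-(f0 ^ 2)⁻¹) • Df‖ * ‖N0‖ ≤ ((f0 ^ 2)⁻¹ * ‖Df‖) * ‖N0‖ := by
          apply mul_le_mul_of_nonneg_right he2 (norm_nonneg _)
      _ ≤ ((f0 ^ 2)⁻¹ * S) * f0 := by
          apply mul_le_mul ?_ hN0le (norm_nonneg _) (by positivity)
          exact mul_le_mul_of_nonneg_left hDfle (by positivity)
      _ = (f0 ^ 2)⁻¹ * S * f0 := rfl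
  calc ‖f0⁻¹ • DN + ((-(f0 ^ 2)⁻¹) • Df).smulRight N0‖
      ≤ ‖f0⁻¹ • DN‖ + ‖((-(f0 ^ 2)⁻¹) • Df).smulRight N0‖ := norm_add_le _ _
    _ ≤ f0⁻¹ * (3 * S) + (f0 ^ 2)⁻¹ * S * f0 := add_le_add hs1 hs2
    _ = 4 * S / f0 := by
        field_simp
        ring
    _ ≤ 2 * (1 + Real.sqrt d) * S / f0 := by
        gcongr
        nlinarith
end
end

section
/- Let d ≥ 2 be an integer and γ̃ > 0. There exist a constant L ≥ 0 and a map 𝒮̃ : M_d(ℝ) → M_d(ℝ) such that: (i) 𝒮̃(G) = 𝒮(G) for every matrix G with Frobenius norm |G| ≥ γ̃; (ii) |𝒮̃(G)| ≤ 1 + 1/√d for every G ∈ M_d(ℝ); and (iii) 𝒮̃ is Lipschitz continuous on all of M_d(ℝ) with Lipschitz constant L. (Truncation of the Doi–Edwards orientation map, Lemma 4.3.) -/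
open MeasureTheory Metric

noncomputable section

/-- Frobenius norm of a real `d × d` matrix. -/
def frobNorm {d : ℕ} (G : Matrix (Fin d) (Fin d) ℝ) : ℝ :=
  Real.sqrt (∑ k, ∑ l, G k l ^ 2)

section Stmt8AuxSection
open Set Pointwise

namespace Stmt8Aux
variable {d : ℕ}



/-- generic sqrt-of-sum-of-squares triangle inequality -/
lemma sqrt_sq_sum_add_le {ι : Type*} (s : Finset ι) (f g : ι → ℝ) :
    Real.sqrt (∑ i ∈ s, (f i + g i) ^ 2) ≤
      Real.sqrt (∑ i ∈ s, f i ^ 2) + Real.sqrt (∑ i ∈ s, g i ^ 2) := by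
  set A := Real.sqrt (∑ i ∈ s, f i ^ 2)
  set B := Real.sqrt (∑ i ∈ s, g i ^ 2)
  have hA : 0 ≤ A := Real.sqrt_nonneg _
  have hB : 0 ≤ B := Real.sqrt_nonneg _
  have hA2 : A ^ 2 = ∑ i ∈ s, f i ^ 2 := Real.sq_sqrt (by positivity)
  have hB2 : B ^ 2 = ∑ i ∈ s, g i ^ 2 := Real.sq_sqrt (by positivity)
  have hcs : ∑ i ∈ s, f i * g i ≤ A * B := Real.sum_mul_le_sqrt_mul_sqrt s f g
  have key : ∑ i ∈ s, (f i + g i) ^ 2 ≤ (A + B) ^ 2 := by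
    have : ∑ i ∈ s, (f i + g i) ^ 2
        = (∑ i ∈ s, f i ^ 2) + 2 * (∑ i ∈ s, f i * g i) + (∑ i ∈ s, g i ^ 2) := by
      rw [Finset.mul_sum, ← Finset.sum_add_distrib, ← Finset.sum_add_distrib]
      exact Finset.sum_congr rfl fun i _ => by ring
    rw [this, ← hA2, ← hB2]; nlinarith
  calc Real.sqrt (∑ i ∈ s, (f i + g i) ^ 2) ≤ Real.sqrt ((A + B) ^ 2) :=
        Real.sqrt_le_sqrt key
    _ = A + B := Real.sqrt_sq (by positivity)

lemma euclNorm_nonneg (v : Fin d → ℝ) : 0 ≤ euclNorm v := Real.sqrt_nonneg _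

lemma frobNorm_nonneg (G : Matrix (Fin d) (Fin d) ℝ) : 0 ≤ frobNorm G := Real.sqrt_nonneg _

lemma sq_euclNorm (v : Fin d → ℝ) : euclNorm v ^ 2 = ∑ i, v i ^ 2 :=
  Real.sq_sqrt (by positivity)

lemma sq_frobNorm (G : Matrix (Fin d) (Fin d) ℝ) : frobNorm G ^ 2 = ∑ k, ∑ l, G k l ^ 2 :=
  Real.sq_sqrt (by positivity)

lemma abs_coord_le (v : Fin d → ℝ) (k : Fin d) : |v k| ≤ euclNorm v := by
  rw [← Real.sqrt_sq_eq_abs]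
  exact Real.sqrt_le_sqrt (Finset.single_le_sum (f := fun i => v i ^ 2)
    (fun i _ => by positivity) (Finset.mem_univ k))

lemma abs_entry_le (G : Matrix (Fin d) (Fin d) ℝ) (k l : Fin d) : |G k l| ≤ frobNorm G := by
  rw [← Real.sqrt_sq_eq_abs]
  refine Real.sqrt_le_sqrt ?_
  calc G k l ^ 2 ≤ ∑ j, G k j ^ 2 :=
        Finset.single_le_sum (f := fun j => G k j ^ 2) (fun j _ => by positivity)
          (Finset.mem_univ l)
    _ ≤ ∑ i, ∑ j, G i j ^ 2 :=
        Finset.single_le_sum (f := fun i => ∑ j, G i j ^ 2)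
          (fun i _ => Finset.sum_nonneg fun j _ => by positivity) (Finset.mem_univ k)

lemma euclNorm_add_le (v w : Fin d → ℝ) : euclNorm (v + w) ≤ euclNorm v + euclNorm w := by
  simpa [euclNorm] using sqrt_sq_sum_add_le Finset.univ v w

lemma euclNorm_neg (v : Fin d → ℝ) : euclNorm (-v) = euclNorm v := by
  simp [euclNorm]

lemma euclNorm_sub_comm (v w : Fin d → ℝ) : euclNorm (v - w) = euclNorm (w - v) := by
  rw [← euclNorm_neg (v - w)]; congr 1; abel

lemma abs_euclNorm_sub_le (v w : Fin d → ℝ) :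
    |euclNorm v - euclNorm w| ≤ euclNorm (v - w) := by
  rw [abs_sub_le_iff]
  constructor
  · have := euclNorm_add_le (v - w) w
    simpa using this
  · have := euclNorm_add_le (w - v) v
    rw [euclNorm_sub_comm w v] at this
    simpa using this

lemma frobNorm_add_le (G H : Matrix (Fin d) (Fin d) ℝ) :
    frobNorm (G + H) ≤ frobNorm G + frobNorm H := by
  have h := sqrt_sq_sum_add_le (Finset.univ : Finset (Fin d × Fin d))
    (fun p => G p.1 p.2) (fun p => H p.1 p.2)
  have e : ∀ M : Matrix (Fin d) (Fin d) ℝ,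
      frobNorm M = Real.sqrt (∑ p : Fin d × Fin d, M p.1 p.2 ^ 2) := by
    intro M; rw [frobNorm]; congr 1; exact (Fintype.sum_prod_type (f := fun p : Fin d × Fin d => M p.1 p.2 ^ 2)).symm
  rw [e, e, e]
  exact h

lemma euclNorm_mulVec_le (G : Matrix (Fin d) (Fin d) ℝ) (v : Fin d → ℝ) :
    euclNorm (G.mulVec v) ≤ frobNorm G * euclNorm v := by
  have h : ∑ k, (G.mulVec v k) ^ 2 ≤ (∑ k, ∑ i, G k i ^ 2) * (∑ i, v i ^ 2) := by
    rw [Finset.sum_mul]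
    refine Finset.sum_le_sum fun k _ => ?_
    exact Finset.sum_mul_sq_le_sq_mul_sq (R := ℝ) Finset.univ (fun i => G k i) v
  calc euclNorm (G.mulVec v) ≤ Real.sqrt ((∑ k, ∑ i, G k i ^ 2) * (∑ i, v i ^ 2)) :=
        Real.sqrt_le_sqrt h
    _ = frobNorm G * euclNorm v := by
        rw [frobNorm, euclNorm, ← Real.sqrt_mul (by positivity)]



lemma euclNorm_eq_norm (v : EuclideanSpace ℝ (Fin d)) : euclNorm v = ‖v‖ := by
  rw [EuclideanSpace.norm_eq]
  simp [euclNorm, Real.norm_eq_abs, sq_abs]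

lemma euclNorm_sphere (u : sphere (0 : EuclideanSpace ℝ (Fin d)) 1) :
    euclNorm (u : EuclideanSpace ℝ (Fin d)) = 1 := by
  rw [euclNorm_eq_norm]; exact norm_eq_of_mem_sphere u

lemma coord_eq_zero_of_euclNorm {v : Fin d → ℝ} (h : euclNorm v = 0) (k : Fin d) : v k = 0 := by
  have := abs_coord_le v k; rw [h] at this
  exact abs_eq_zero.mp (le_antisymm this (abs_nonneg _))

lemma abs_mul_coord_le (v : Fin d → ℝ) (k l : Fin d) :
    |v k * v l| ≤ euclNorm v ^ 2 := by
  rw [abs_mul, sq]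
  exact mul_le_mul (abs_coord_le v k) (abs_coord_le v l) (abs_nonneg _) (euclNorm_nonneg v)

lemma abs_g_le (v : Fin d → ℝ) (k l : Fin d) :
    |v k * v l / euclNorm v| ≤ euclNorm v := by
  rcases eq_or_lt_of_le (euclNorm_nonneg v) with h | h
  · simp [← h]
  · rw [abs_div, abs_of_pos h, div_le_iff₀ h, ← sq]
    exact abs_mul_coord_le v k l

/-- pointwise Lipschitz bound, assuming `euclNorm w ≤ euclNorm v` -/
lemma g_lip_aux (v w : Fin d → ℝ) (k l : Fin d) (hle : euclNorm w ≤ euclNorm v) :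
    |v k * v l / euclNorm v - w k * w l / euclNorm w| ≤ 3 * euclNorm (v - w) := by
  set nv := euclNorm v with hnv
  set nw := euclNorm w with hnw
  have hnv0 : 0 ≤ nv := euclNorm_nonneg v
  have hnw0 : 0 ≤ nw := euclNorm_nonneg w
  have hd0 : 0 ≤ euclNorm (v - w) := euclNorm_nonneg _
  rcases eq_or_lt_of_le hnw0 with hw0 | hw0
  · -- w = 0
    have hwz : ∀ j, w j = 0 := coord_eq_zero_of_euclNorm hw0.symm
    have hvw : euclNorm (v - w) = nv := by
      have : v - w = v := by funext j; simp [hwz j]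
      rw [this]
    rw [hwz k, hvw]
    simp only [zero_mul, zero_div, sub_zero]
    calc |v k * v l / nv| ≤ nv := abs_g_le v k l
      _ ≤ 3 * nv := by linarith
  · have hv0 : 0 < nv := lt_of_lt_of_le hw0 hle
    have key : v k * v l / nv - w k * w l / nw
        = (v k * v l - w k * w l) / nv + (w k * w l) * (nw - nv) / (nv * nw) := by
      field_simp
      ring
    rw [key]
    have h1 : |v k * v l - w k * w l| ≤ (nv + nw) * euclNorm (v - w) := by
      have e : v k * v l - w k * w l = v k * (v l - w l) + (v k - w k) * w l := by ring
      rw [e]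
      calc |v k * (v l - w l) + (v k - w k) * w l|
          ≤ |v k * (v l - w l)| + |(v k - w k) * w l| := abs_add_le _ _
        _ = |v k| * |v l - w l| + |v k - w k| * |w l| := by rw [abs_mul, abs_mul]
        _ ≤ nv * euclNorm (v - w) + euclNorm (v - w) * nw := by
            gcongr
            · exact abs_coord_le v k
            · exact abs_coord_le (v - w) l
            · exact abs_coord_le (v - w) k
            · exact abs_coord_le w l
        _ = (nv + nw) * euclNorm (v - w) := by ring
    have h2 : |nw - nv| ≤ euclNorm (v - w) := by
      rw [abs_sub_comm]
      exact abs_euclNorm_sub_le v w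
    have h3 : |w k * w l| ≤ nw ^ 2 := abs_mul_coord_le w k l
    calc |(v k * v l - w k * w l) / nv + (w k * w l) * (nw - nv) / (nv * nw)|
        ≤ |(v k * v l - w k * w l) / nv| + |(w k * w l) * (nw - nv) / (nv * nw)| := abs_add_le _ _
      _ = |v k * v l - w k * w l| / nv + |w k * w l| * |nw - nv| / (nv * nw) := by
          rw [abs_div, abs_of_pos hv0, abs_div, abs_mul, abs_of_pos (mul_pos hv0 hw0)]
      _ ≤ (nv + nw) * euclNorm (v - w) / nv + nw ^ 2 * euclNorm (v - w) / (nv * nw) := by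
          gcongr
      _ = euclNorm (v - w) * ((nv + nw) / nv + nw / nv) := by
          field_simp
      _ ≤ 3 * euclNorm (v - w) := by
          have hr : nw / nv ≤ 1 := (div_le_one hv0).mpr hle
          have : (nv + nw) / nv + nw / nv = 1 + nw / nv + nw / nv := by
            field_simp
          rw [this]
          nlinarith
  done

lemma g_lip (v w : Fin d → ℝ) (k l : Fin d) :
    |v k * v l / euclNorm v - w k * w l / euclNorm w| ≤ 3 * euclNorm (v - w) := by
  rcases le_total (euclNorm w) (euclNorm v) with h | h
  · exact g_lip_aux v w k l h
  · rw [abs_sub_comm]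
    have := g_lip_aux w v k l h
    rwa [show euclNorm (w - v) = euclNorm (v - w) by
      have : w - v = -(v - w) := by abel
      rw [this]; simp only [euclNorm]; congr 1
      exact Finset.sum_congr rfl fun i _ => by
        simp only [Pi.neg_apply, Pi.sub_apply]; ring] at this

/-- Cauchy-Schwarz duality bound -/
lemma sum_mul_g_le (M : Matrix (Fin d) (Fin d) ℝ) (v : Fin d → ℝ) :
    ∑ k, ∑ l, M k l * (v k * v l / euclNorm v) ≤ frobNorm M * euclNorm v := by
  rcases eq_or_lt_of_le (euclNorm_nonneg v) with h0 | h0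
  · have hvz := coord_eq_zero_of_euclNorm h0.symm
    have : ∀ k l : Fin d, M k l * (v k * v l / euclNorm v) = 0 := by
      intro k l; rw [hvz k]; ring
    rw [← h0] at this ⊢
    simp only [this, Finset.sum_const_zero, mul_zero, le_refl]
  · have cs : ∑ p : Fin d × Fin d, M p.1 p.2 * (v p.1 * v p.2 / euclNorm v)
        ≤ Real.sqrt (∑ p : Fin d × Fin d, M p.1 p.2 ^ 2) *
          Real.sqrt (∑ p : Fin d × Fin d, (v p.1 * v p.2 / euclNorm v) ^ 2) :=
      Real.sum_mul_le_sqrt_mul_sqrt _ _ _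
    have e1 : ∑ p : Fin d × Fin d, M p.1 p.2 * (v p.1 * v p.2 / euclNorm v)
        = ∑ k, ∑ l, M k l * (v k * v l / euclNorm v) := Fintype.sum_prod_type (f := fun p : Fin d × Fin d => M p.1 p.2 * (v p.1 * v p.2 / euclNorm v))
    have e2 : Real.sqrt (∑ p : Fin d × Fin d, M p.1 p.2 ^ 2) = frobNorm M := by
      rw [frobNorm]; congr 1
      exact Fintype.sum_prod_type (f := fun p : Fin d × Fin d => M p.1 p.2 ^ 2)
    have e3 : Real.sqrt (∑ p : Fin d × Fin d, (v p.1 * v p.2 / euclNorm v) ^ 2) = euclNorm v := by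
      have : ∑ p : Fin d × Fin d, (v p.1 * v p.2 / euclNorm v) ^ 2
          = (euclNorm v) ^ 2 := by
        have expand : ∑ p : Fin d × Fin d, (v p.1 * v p.2 / euclNorm v) ^ 2
            = (∑ k, v k ^ 2) * (∑ l, v l ^ 2) / euclNorm v ^ 2 := by
          rw [Fintype.sum_prod_type, Finset.sum_mul_sum]
          rw [Finset.sum_div]
          refine Finset.sum_congr rfl fun k _ => ?_
          rw [Finset.sum_div]
          refine Finset.sum_congr rfl fun l _ => ?_
          field_simp
        rw [expand, ← sq_euclNorm v]
        have h2 : euclNorm v ^ 2 ≠ 0 := by positivity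
        field_simp
      rw [this, Real.sqrt_sq h0.le]
    rw [e1, e2, e3] at cs
    exact cs



abbrev Ed (d : ℕ) := EuclideanSpace ℝ (Fin d)
abbrev Sp (d : ℕ) := sphere (0 : Ed d) 1

instance : IsFiniteMeasure (sphereSurf d) := by
  unfold sphereSurf; infer_instance

/-- sphere self-map induced by a linear isometry -/
def sphereMap (e : Ed d ≃ₗᵢ[ℝ] Ed d) : Sp d → Sp d := fun u =>
  ⟨e u, by
    have hu : ‖(u : Ed d)‖ = 1 := norm_eq_of_mem_sphere u
    simp [mem_sphere_zero_iff_norm, hu]⟩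

lemma continuous_sphereMap (e : Ed d ≃ₗᵢ[ℝ] Ed d) : Continuous (sphereMap e) :=
  Continuous.subtype_mk (e.continuous.comp continuous_subtype_val) _

lemma smul_set_eq (s : Set (Sp d)) (r : Set.Ioi (0:ℝ)) :
    Set.Ioo (0:ℝ) r • (Subtype.val '' s)
      = Subtype.val '' ((homeomorphUnitSphereProd (Ed d)) ⁻¹' (s ×ˢ Set.Iio r)) := by
  rw [← Set.image2_smul, Set.image2_image_right, ← Homeomorph.image_symm, Set.image_image,
    ← Set.image_subtype_val_Ioi_Iio, Set.image2_image_left, Set.image2_swap, ← Set.image_prod]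
  rfl

lemma measurable_smul_sphere_set {s : Set (Sp d)} (hs : MeasurableSet s) :
    MeasurableSet (Set.Ioo (0:ℝ) 1 • (Subtype.val '' s)) := by
  rw [smul_set_eq s ⟨1, mem_Ioi.2 one_pos⟩]
  have hme : MeasurableEmbedding
      (Subtype.val ∘ (homeomorphUnitSphereProd (Ed d)).symm) :=
    (MeasurableEmbedding.subtype_coe (measurableSet_singleton _).compl).comp
      (Homeomorph.measurableEmbedding _)
  have himg : Subtype.val '' ((homeomorphUnitSphereProd (Ed d)) ⁻¹' (s ×ˢ Set.Iio ⟨1, mem_Ioi.2 one_pos⟩))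
      = (Subtype.val ∘ (homeomorphUnitSphereProd (Ed d)).symm) '' (s ×ˢ Set.Iio ⟨1, mem_Ioi.2 one_pos⟩) := by
    rw [Set.image_comp, Homeomorph.image_symm]
  rw [himg]
  exact hme.measurableSet_image.2 ((hs.prod measurableSet_Iio))

lemma map_sphereMap (e : Ed d ≃ₗᵢ[ℝ] Ed d) :
    Measure.map (sphereMap e) (sphereSurf d) = sphereSurf d := by
  refine Measure.ext fun s hs => ?_
  rw [Measure.map_apply (continuous_sphereMap e).measurable hs]
  have hpre : MeasurableSet (sphereMap e ⁻¹' s) :=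
    (continuous_sphereMap e).measurable hs
  rw [sphereSurf, Measure.toSphere_apply' _ hpre, Measure.toSphere_apply' _ hs]
  congr 1
  have himg : (Subtype.val '' (sphereMap e ⁻¹' s)) = e.symm '' (Subtype.val '' s) := by
    ext x
    constructor
    · rintro ⟨u, hu, rfl⟩
      exact ⟨e u, ⟨sphereMap e u, hu, rfl⟩, by simp⟩
    · rintro ⟨y, ⟨v, hv, rfl⟩, rfl⟩
      have hmem : e.symm ↑v ∈ Sp d := by
        have : ‖(v : Ed d)‖ = 1 := norm_eq_of_mem_sphere v
        simp [mem_sphere_zero_iff_norm, this]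
      refine ⟨⟨e.symm v, hmem⟩, ?_, rfl⟩
      show sphereMap e ⟨e.symm ↑v, hmem⟩ ∈ s
      have : sphereMap e ⟨e.symm ↑v, hmem⟩ = v := by
        apply Subtype.ext
        simp [sphereMap]
      rw [this]; exact hv
  rw [himg]
  have hsmul : Set.Ioo (0:ℝ) 1 • (e.symm '' (Subtype.val '' s))
      = e.symm '' (Set.Ioo (0:ℝ) 1 • (Subtype.val '' s)) := by
    rw [← Set.image2_smul, ← Set.image2_smul, Set.image2_image_right]
    rw [Set.image_image2]
    refine Set.image2_congr fun a _ b _ => ?_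
    exact (e.symm.toLinearEquiv.map_smul a b).symm
  rw [hsmul]
  have hEq : (e.symm '' (Set.Ioo (0:ℝ) 1 • (Subtype.val '' s)))
      = ⇑e ⁻¹' (Set.Ioo (0:ℝ) 1 • (Subtype.val '' s)) := by
    ext x; simp [Set.mem_image, Set.mem_preimage]
    constructor
    · rintro ⟨y, hy, rfl⟩; simpa using hy
    · intro hx; exact ⟨e x, hx, by simp⟩
  rw [hEq]
  exact e.measurePreserving.measure_preimage
    (measurable_smul_sphere_set hs).nullMeasurableSet

lemma integral_comp_sphereMap (e : Ed d ≃ₗᵢ[ℝ] Ed d) (f : Sp d → ℝ)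
    (hf : AEStronglyMeasurable f (sphereSurf d)) :
    ∫ u, f (sphereMap e u) ∂(sphereSurf d) = ∫ u, f u ∂(sphereSurf d) := by
  have hf' : AEStronglyMeasurable f (Measure.map (sphereMap e) (sphereSurf d)) := by
    rw [map_sphereMap e]; exact hf
  have h := integral_map (continuous_sphereMap e).measurable.aemeasurable hf'
  rw [map_sphereMap e] at h
  exact h.symm



/-- negate the i-th coordinate -/
def negIso (i : Fin d) : Ed d ≃ₗᵢ[ℝ] Ed d where
  toLinearEquiv :=
  { toFun := fun x => WithLp.toLp 2 fun j => if j = i then -x j else x j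
    invFun := fun x => WithLp.toLp 2 fun j => if j = i then -x j else x j
    map_add' := by
      intro x y; ext j; by_cases h : j = i <;>
        simp [h, PiLp.add_apply] <;> ring
    map_smul' := by
      intro c x; ext j; by_cases h : j = i <;>
        simp [h, PiLp.smul_apply, smul_eq_mul] <;> ring
    left_inv := by intro x; ext j; by_cases h : j = i <;> simp [h]
    right_inv := by intro x; ext j; by_cases h : j = i <;> simp [h] }
  norm_map' := by
    intro x
    rw [EuclideanSpace.norm_eq, EuclideanSpace.norm_eq]
    congr 1
    refine Finset.sum_congr rfl fun j _ => ?_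
    by_cases h : j = i <;> simp [h]

/-- permute coordinates -/
def permIso (p : Equiv.Perm (Fin d)) : Ed d ≃ₗᵢ[ℝ] Ed d where
  toLinearEquiv :=
  { toFun := fun x => WithLp.toLp 2 fun j => x (p j)
    invFun := fun x => WithLp.toLp 2 fun j => x (p.symm j)
    map_add' := by intro x y; ext j; simp [PiLp.add_apply]
    map_smul' := by intro c x; ext j; simp [PiLp.smul_apply]
    left_inv := by
      intro x; ext j; exact congrArg x (p.apply_symm_apply j)
    right_inv := by
      intro x; ext j; exact congrArg x (p.symm_apply_apply j) }
  norm_map' := by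
    intro x
    rw [EuclideanSpace.norm_eq, EuclideanSpace.norm_eq]
    congr 1
    exact Fintype.sum_equiv p (fun j => ‖x (p j)‖ ^ 2) (fun j => ‖x j‖ ^ 2) (fun j => rfl)


/-! ### Continuity, measurability, integrability -/

lemma cont_coord (i : Fin d) : Continuous (fun u : Sp d => (u : Ed d) i) :=
  (continuous_apply i).comp ((PiLp.continuous_ofLp 2 _).comp continuous_subtype_val)

lemma cont_mulVec (G : Matrix (Fin d) (Fin d) ℝ) (k : Fin d) :
    Continuous (fun u : Sp d => G.mulVec (u : Ed d) k) := by
  have h : (fun u : Sp d => G.mulVec (u : Ed d) k)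
      = fun u : Sp d => ∑ i, G k i * (u : Ed d) i := by
    funext u; simp [Matrix.mulVec, dotProduct]
  rw [h]
  exact continuous_finset_sum _ fun i _ => continuous_const.mul (cont_coord i)

lemma cont_fN (G : Matrix (Fin d) (Fin d) ℝ) :
    Continuous (fun u : Sp d => euclNorm (G.mulVec (u : Ed d))) := by
  unfold euclNorm
  exact Real.continuous_sqrt.comp (continuous_finset_sum _ fun i _ => (cont_mulVec G i).pow 2)

lemma meas_fA (G : Matrix (Fin d) (Fin d) ℝ) (k l : Fin d) :
    Measurable (fun u : Sp d =>
      G.mulVec (u : Ed d) k * G.mulVec (u : Ed d) l / euclNorm (G.mulVec (u : Ed d))) :=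
  (((cont_mulVec G k).mul (cont_mulVec G l)).measurable).div (cont_fN G).measurable

lemma integrable_of_bound {f : Sp d → ℝ} (hm : AEStronglyMeasurable f (sphereSurf d))
    (C : ℝ) (hC : ∀ u, |f u| ≤ C) : Integrable f (sphereSurf d) :=
  (integrable_const C).mono' hm (ae_of_all _ fun u => by simpa [Real.norm_eq_abs] using hC u)

lemma norm_mulVec_le_frob (G : Matrix (Fin d) (Fin d) ℝ) (u : Sp d) :
    euclNorm (G.mulVec (u : Ed d)) ≤ frobNorm G := by
  have h := euclNorm_mulVec_le G (u : Ed d)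
  rwa [euclNorm_sphere u, mul_one] at h

lemma integrable_fN (G : Matrix (Fin d) (Fin d) ℝ) :
    Integrable (fun u : Sp d => euclNorm (G.mulVec (u : Ed d))) (sphereSurf d) :=
  integrable_of_bound (cont_fN G).measurable.aestronglyMeasurable (frobNorm G) fun u => by
    rw [abs_of_nonneg (euclNorm_nonneg _)]; exact norm_mulVec_le_frob G u

lemma integrable_fA (G : Matrix (Fin d) (Fin d) ℝ) (k l : Fin d) :
    Integrable (fun u : Sp d =>
      G.mulVec (u : Ed d) k * G.mulVec (u : Ed d) l / euclNorm (G.mulVec (u : Ed d)))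
      (sphereSurf d) :=
  integrable_of_bound (meas_fA G k l).aestronglyMeasurable (frobNorm G) fun u =>
    (abs_g_le _ k l).trans (norm_mulVec_le_frob G u)

lemma abs_coord_sphere_le (u : Sp d) (i : Fin d) : |(u : Ed d) i| ≤ 1 := by
  have h := abs_coord_le (d := d) (u : Ed d) i
  rwa [euclNorm_sphere u] at h

lemma integrable_coord_mul (i j : Fin d) :
    Integrable (fun u : Sp d => (u : Ed d) i * (u : Ed d) j) (sphereSurf d) :=
  integrable_of_bound ((cont_coord i).mul (cont_coord j)).measurable.aestronglyMeasurable 1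
    fun u => by
      rw [abs_mul]
      exact mul_le_one₀ (abs_coord_sphere_le u i) (abs_nonneg _) (abs_coord_sphere_le u j)

/-! ### Moments of the sphere measure -/

def c0 (d : ℕ) : ℝ := (sphereSurf d Set.univ).toReal

lemma c0_nonneg : 0 ≤ c0 d := ENNReal.toReal_nonneg

lemma integral_one : ∫ _u : Sp d, (1:ℝ) ∂(sphereSurf d) = c0 d := by
  simp [c0, Measure.real]

lemma integral_cross (i j : Fin d) (hij : i ≠ j) :
    ∫ u : Sp d, (u : Ed d) i * (u : Ed d) j ∂(sphereSurf d) = 0 := by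
  set f : Sp d → ℝ := fun u => (u : Ed d) i * (u : Ed d) j with hf
  have hmeas : AEStronglyMeasurable f (sphereSurf d) :=
    ((cont_coord i).mul (cont_coord j)).measurable.aestronglyMeasurable
  have hinv := integral_comp_sphereMap (negIso i) f hmeas
  have hptw : ∀ u : Sp d, f (sphereMap (negIso i) u) = - f u := by
    intro u
    have h1 : ((sphereMap (negIso i) u : Sp d) : Ed d) i = -(u : Ed d) i := by
      show (if i = i then -(u : Ed d) i else (u : Ed d) i) = _
      simp
    have h2 : ((sphereMap (negIso i) u : Sp d) : Ed d) j = (u : Ed d) j := by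
      show (if j = i then -(u : Ed d) j else (u : Ed d) j) = _
      rw [if_neg (Ne.symm hij)]
    simp only [hf, h1, h2]; ring
  rw [integral_congr_ae (ae_of_all _ hptw), integral_neg] at hinv
  linarith

lemma integral_diag_eq (i j : Fin d) :
    ∫ u : Sp d, ((u : Ed d) i) ^ 2 ∂(sphereSurf d)
      = ∫ u : Sp d, ((u : Ed d) j) ^ 2 ∂(sphereSurf d) := by
  set f : Sp d → ℝ := fun u => ((u : Ed d) i) ^ 2 with hf
  have hmeas : AEStronglyMeasurable f (sphereSurf d) :=
    ((cont_coord i).pow 2).measurable.aestronglyMeasurable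
  have hinv := integral_comp_sphereMap (permIso (Equiv.swap i j)) f hmeas
  have hptw : ∀ u : Sp d, f (sphereMap (permIso (Equiv.swap i j)) u) = ((u : Ed d) j) ^ 2 := by
    intro u
    have h1 : ((sphereMap (permIso (Equiv.swap i j)) u : Sp d) : Ed d) i
        = (u : Ed d) (Equiv.swap i j i) := rfl
    rw [hf]
    simp only [h1]
    rw [Equiv.swap_apply_left]
  rw [integral_congr_ae (ae_of_all _ hptw)] at hinv
  exact hinv.symm

lemma sum_integral_diag :
    ∑ i : Fin d, ∫ u : Sp d, ((u : Ed d) i) ^ 2 ∂(sphereSurf d) = c0 d := by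
  rw [← integral_finset_sum _ fun i _ => by
    simpa [sq] using integrable_coord_mul (d := d) i i]
  rw [← integral_one]
  refine integral_congr_ae (ae_of_all _ fun u => ?_)
  have h := sq_euclNorm (d := d) (u : Ed d)
  rw [euclNorm_sphere u] at h
  simpa using h.symm

lemma integral_diag (hd : 0 < d) (i : Fin d) :
    ∫ u : Sp d, ((u : Ed d) i) ^ 2 ∂(sphereSurf d) = c0 d / d := by
  have hsum := sum_integral_diag (d := d)
  have hall : ∀ j : Fin d, (∫ u : Sp d, ((u : Ed d) j) ^ 2 ∂(sphereSurf d))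
      = ∫ u : Sp d, ((u : Ed d) i) ^ 2 ∂(sphereSurf d) := fun j => integral_diag_eq j i
  rw [Finset.sum_congr rfl (fun j _ => hall j), Finset.sum_const, Finset.card_univ,
    Fintype.card_fin, nsmul_eq_mul] at hsum
  field_simp
  rw [mul_comm] at hsum
  exact hsum

/-! ### Second moment and lower bound for the denominator -/

lemma integral_sq_norm_mulVec (hd : 0 < d) (G : Matrix (Fin d) (Fin d) ℝ) :
    ∫ u : Sp d, euclNorm (G.mulVec (u : Ed d)) ^ 2 ∂(sphereSurf d)
      = c0 d / d * frobNorm G ^ 2 := by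
  have hval : ∀ i j : Fin d, (∫ u : Sp d, (u : Ed d) i * (u : Ed d) j ∂(sphereSurf d))
      = if i = j then c0 d / d else 0 := by
    intro i j
    by_cases h : i = j
    · subst h; rw [if_pos rfl, ← integral_diag hd i]
      exact integral_congr_ae (ae_of_all _ fun u => (sq _).symm)
    · rw [if_neg h]; exact integral_cross i j h
  have hptw : ∀ u : Sp d, euclNorm (G.mulVec (u : Ed d)) ^ 2
      = ∑ k, ∑ i, ∑ j, G k i * G k j * ((u : Ed d) i * (u : Ed d) j) := by
    intro u
    rw [sq_euclNorm]
    refine Finset.sum_congr rfl fun k _ => ?_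
    have hmv : G.mulVec (u : Ed d) k = ∑ i, G k i * (u : Ed d) i := by
      simp [Matrix.mulVec, dotProduct]
    rw [hmv, sq, Finset.sum_mul_sum]
    exact Finset.sum_congr rfl fun i _ => Finset.sum_congr rfl fun j _ => by ring
  rw [integral_congr_ae (ae_of_all _ hptw)]
  rw [integral_finset_sum _ fun k _ => integrable_finset_sum _ fun i _ =>
    integrable_finset_sum _ fun j _ => (integrable_coord_mul i j).const_mul _]
  have : ∀ k : Fin d, (∫ u : Sp d, ∑ i, ∑ j, G k i * G k j *
        ((u : Ed d) i * (u : Ed d) j) ∂(sphereSurf d))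
      = ∑ i, ∑ j, G k i * G k j * (if i = j then c0 d / d else 0) := by
    intro k
    rw [integral_finset_sum _ fun i _ => integrable_finset_sum _ fun j _ =>
      (integrable_coord_mul i j).const_mul _]
    refine Finset.sum_congr rfl fun i _ => ?_
    rw [integral_finset_sum _ fun j _ => (integrable_coord_mul i j).const_mul _]
    refine Finset.sum_congr rfl fun j _ => ?_
    rw [integral_const_mul, hval i j]
  rw [Finset.sum_congr rfl fun k _ => this k, sq_frobNorm, Finset.mul_sum]
  refine Finset.sum_congr rfl fun k _ => ?_
  rw [Finset.mul_sum]
  refine Finset.sum_congr rfl fun i _ => ?_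
  rw [Finset.sum_eq_single i]
  · rw [if_pos rfl]; ring
  · intro j _ hj
    rw [if_neg fun h => hj h.symm, mul_zero]
  · intro h; exact absurd (Finset.mem_univ i) h

lemma c0_pos (hd : 0 < d) : 0 < c0 d := by
  rw [c0]
  refine ENNReal.toReal_pos ?_ (measure_ne_top _ _)
  rw [sphereSurf, Measure.toSphere_apply_univ]
  refine mul_ne_zero ?_ (measure_ball_pos _ _ one_pos).ne'
  rw [finrank_euclideanSpace_fin]
  exact Nat.cast_ne_zero.mpr hd.ne'

/-- the (un-normalized) numerator matrix -/
def Afun (d : ℕ) (G : Matrix (Fin d) (Fin d) ℝ) : Matrix (Fin d) (Fin d) ℝ := fun k l =>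
  ∫ u : Sp d, G.mulVec (u : Ed d) k * G.mulVec (u : Ed d) l
      / euclNorm (G.mulVec (u : Ed d)) ∂(sphereSurf d)

/-- the denominator -/
def Nfun (d : ℕ) (G : Matrix (Fin d) (Fin d) ℝ) : ℝ :=
  ∫ u : Sp d, euclNorm (G.mulVec (u : Ed d)) ∂(sphereSurf d)

lemma Nfun_nonneg (G : Matrix (Fin d) (Fin d) ℝ) : 0 ≤ Nfun d G :=
  integral_nonneg fun u => euclNorm_nonneg _

lemma Nfun_lower (hd : 0 < d) {γ : ℝ} (hγ : 0 < γ) (G : Matrix (Fin d) (Fin d) ℝ)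
    (hG : γ ≤ frobNorm G) : c0 d / d * γ ≤ Nfun d G := by
  have hfrob : 0 < frobNorm G := lt_of_lt_of_le hγ hG
  have key : c0 d / d * frobNorm G ^ 2 ≤ frobNorm G * Nfun d G := by
    rw [← integral_sq_norm_mulVec hd G, Nfun, ← integral_const_mul]
    refine integral_mono ?_ ((integrable_fN G).const_mul _) ?_
    · refine integrable_of_bound (((cont_fN G).pow 2).measurable.aestronglyMeasurable)
        (frobNorm G ^ 2) fun u => ?_
      rw [abs_of_nonneg (sq_nonneg _)]
      have := norm_mulVec_le_frob G u
      nlinarith [euclNorm_nonneg (G.mulVec (u : Ed d))]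
    · intro u
      have h1 := norm_mulVec_le_frob G u
      have h2 := euclNorm_nonneg (G.mulVec (u : Ed d))
      simp only [sq]
      nlinarith
  have hc : 0 ≤ c0 d / d := div_nonneg c0_nonneg (Nat.cast_nonneg d)
  have step : c0 d / d * frobNorm G ≤ Nfun d G := by
    have := key
    rw [sq] at this
    nlinarith
  calc c0 d / d * γ ≤ c0 d / d * frobNorm G := by nlinarith
    _ ≤ Nfun d G := step

/-! ### Bounds on the numerator -/

lemma abs_Afun_le (G : Matrix (Fin d) (Fin d) ℝ) (k l : Fin d) :
    |Afun d G k l| ≤ Nfun d G := by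
  have h1 : |Afun d G k l| ≤ ∫ u : Sp d,
      |G.mulVec (u : Ed d) k * G.mulVec (u : Ed d) l / euclNorm (G.mulVec (u : Ed d))|
        ∂(sphereSurf d) := by
    have h0 := norm_integral_le_integral_norm
      (μ := sphereSurf d) (fun u : Sp d =>
        G.mulVec (u : Ed d) k * G.mulVec (u : Ed d) l / euclNorm (G.mulVec (u : Ed d)))
    simp only [Real.norm_eq_abs] at h0
    exact h0
  refine h1.trans (integral_mono ((integrable_fA G k l).abs) (integrable_fN G) fun u => ?_)
  exact abs_g_le _ k l

lemma frob_Afun_le (G : Matrix (Fin d) (Fin d) ℝ) : frobNorm (Afun d G) ≤ Nfun d G := by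
  set T := frobNorm (Afun d G) with hT
  have hT0 : 0 ≤ T := frobNorm_nonneg _
  have key : T ^ 2 ≤ T * Nfun d G := by
    have e1 : T ^ 2 = ∑ k, ∑ l, Afun d G k l * Afun d G k l := by
      rw [hT, sq_frobNorm]
      exact Finset.sum_congr rfl fun k _ => Finset.sum_congr rfl fun l _ => sq _
    have e2 : ∀ k l : Fin d, Afun d G k l * Afun d G k l
        = ∫ u : Sp d, Afun d G k l * (G.mulVec (u : Ed d) k * G.mulVec (u : Ed d) l
            / euclNorm (G.mulVec (u : Ed d))) ∂(sphereSurf d) := by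
      intro k l
      rw [integral_const_mul]
      rfl
    have e3 : T ^ 2 = ∫ u : Sp d, ∑ k, ∑ l, Afun d G k l *
        (G.mulVec (u : Ed d) k * G.mulVec (u : Ed d) l
          / euclNorm (G.mulVec (u : Ed d))) ∂(sphereSurf d) := by
      rw [e1,
        Finset.sum_congr rfl fun k (_ : k ∈ Finset.univ) =>
          Finset.sum_congr rfl fun l (_ : l ∈ Finset.univ) => e2 k l,
        Finset.sum_congr rfl fun k (_ : k ∈ Finset.univ) =>
          (integral_finset_sum Finset.univ fun l (_ : l ∈ Finset.univ) =>
            (integrable_fA G k l).const_mul (Afun d G k l)).symm,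
        ← integral_finset_sum Finset.univ fun k (_ : k ∈ Finset.univ) =>
          integrable_finset_sum Finset.univ fun l (_ : l ∈ Finset.univ) =>
            (integrable_fA G k l).const_mul (Afun d G k l)]
    rw [e3, Nfun, ← integral_const_mul]
    refine integral_mono ?_ ((integrable_fN G).const_mul T) fun u => ?_
    · exact integrable_finset_sum Finset.univ fun k (_ : k ∈ Finset.univ) =>
        integrable_finset_sum Finset.univ fun l (_ : l ∈ Finset.univ) =>
          (integrable_fA G k l).const_mul _
    · exact sum_mul_g_le (Afun d G) (G.mulVec (u : Ed d))
  rcases eq_or_lt_of_le hT0 with h0 | h0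
  · rw [← h0]; exact Nfun_nonneg G
  · nlinarith

/-! ### Lipschitz estimates -/

lemma Nfun_lip (G₁ G₂ : Matrix (Fin d) (Fin d) ℝ) :
    |Nfun d G₁ - Nfun d G₂| ≤ c0 d * frobNorm (G₁ - G₂) := by
  have hsub : Nfun d G₁ - Nfun d G₂ = ∫ u : Sp d,
      (euclNorm (G₁.mulVec (u : Ed d)) - euclNorm (G₂.mulVec (u : Ed d))) ∂(sphereSurf d) :=
    (integral_sub (integrable_fN G₁) (integrable_fN G₂)).symm
  have hbd : ∀ u : Sp d,
      ‖euclNorm (G₁.mulVec (u : Ed d)) - euclNorm (G₂.mulVec (u : Ed d))‖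
        ≤ frobNorm (G₁ - G₂) := by
    intro u
    rw [Real.norm_eq_abs]
    calc |euclNorm (G₁.mulVec (u : Ed d)) - euclNorm (G₂.mulVec (u : Ed d))|
        ≤ euclNorm (G₁.mulVec (u : Ed d) - G₂.mulVec (u : Ed d)) := abs_euclNorm_sub_le _ _
      _ = euclNorm ((G₁ - G₂).mulVec (u : Ed d)) := by rw [Matrix.sub_mulVec]
      _ ≤ frobNorm (G₁ - G₂) := norm_mulVec_le_frob (G₁ - G₂) u
  have := norm_integral_le_of_norm_le_const (μ := sphereSurf d) (ae_of_all _ hbd)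
  rw [← hsub] at this
  rw [Real.norm_eq_abs] at this
  calc |Nfun d G₁ - Nfun d G₂| ≤ frobNorm (G₁ - G₂) * (sphereSurf d Set.univ).toReal := this
    _ = c0 d * frobNorm (G₁ - G₂) := by rw [c0]; ring

lemma Afun_lip (G₁ G₂ : Matrix (Fin d) (Fin d) ℝ) (k l : Fin d) :
    |Afun d G₁ k l - Afun d G₂ k l| ≤ 3 * c0 d * frobNorm (G₁ - G₂) := by
  have hsub : Afun d G₁ k l - Afun d G₂ k l = ∫ u : Sp d,
      (G₁.mulVec (u : Ed d) k * G₁.mulVec (u : Ed d) l / euclNorm (G₁.mulVec (u : Ed d))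
        - G₂.mulVec (u : Ed d) k * G₂.mulVec (u : Ed d) l / euclNorm (G₂.mulVec (u : Ed d)))
      ∂(sphereSurf d) :=
    (integral_sub (integrable_fA G₁ k l) (integrable_fA G₂ k l)).symm
  have hbd : ∀ u : Sp d,
      ‖G₁.mulVec (u : Ed d) k * G₁.mulVec (u : Ed d) l / euclNorm (G₁.mulVec (u : Ed d))
        - G₂.mulVec (u : Ed d) k * G₂.mulVec (u : Ed d) l / euclNorm (G₂.mulVec (u : Ed d))‖
        ≤ 3 * frobNorm (G₁ - G₂) := by
    intro u
    rw [Real.norm_eq_abs]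
    calc |G₁.mulVec (u : Ed d) k * G₁.mulVec (u : Ed d) l / euclNorm (G₁.mulVec (u : Ed d))
        - G₂.mulVec (u : Ed d) k * G₂.mulVec (u : Ed d) l / euclNorm (G₂.mulVec (u : Ed d))|
        ≤ 3 * euclNorm (G₁.mulVec (u : Ed d) - G₂.mulVec (u : Ed d)) :=
          g_lip (G₁.mulVec (u : Ed d)) (G₂.mulVec (u : Ed d)) k l
      _ = 3 * euclNorm ((G₁ - G₂).mulVec (u : Ed d)) := by rw [Matrix.sub_mulVec]
      _ ≤ 3 * frobNorm (G₁ - G₂) := by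
          have := norm_mulVec_le_frob (G₁ - G₂) u
          linarith
  have := norm_integral_le_of_norm_le_const (μ := sphereSurf d) (ae_of_all _ hbd)
  rw [← hsub, Real.norm_eq_abs] at this
  calc |Afun d G₁ k l - Afun d G₂ k l|
      ≤ 3 * frobNorm (G₁ - G₂) * (sphereSurf d Set.univ).toReal := this
    _ = 3 * c0 d * frobNorm (G₁ - G₂) := by rw [c0]; ring

/-! ### norms of special matrices -/

lemma frobNorm_entrywise_le {M : Matrix (Fin d) (Fin d) ℝ} {c : ℝ} (hc : 0 ≤ c)
    (h : ∀ k l, |M k l| ≤ c) : frobNorm M ≤ d * c := by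
  have : ∑ k, ∑ l, M k l ^ 2 ≤ (d * c) ^ 2 := by
    calc ∑ k, ∑ l, M k l ^ 2 ≤ ∑ _k : Fin d, ∑ _l : Fin d, c ^ 2 := by
          refine Finset.sum_le_sum fun k _ => Finset.sum_le_sum fun l _ => ?_
          rw [← sq_abs]
          exact pow_le_pow_left₀ (abs_nonneg _) (h k l) 2
      _ = (d * c) ^ 2 := by
          simp [Finset.sum_const, Fintype.card_fin]
          ring
  calc frobNorm M ≤ Real.sqrt ((d * c) ^ 2) := Real.sqrt_le_sqrt this
    _ = d * c := Real.sqrt_sq (by positivity)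

lemma frobNorm_smul (M : Matrix (Fin d) (Fin d) ℝ) (t : ℝ) :
    frobNorm (fun k l => M k l * t) = frobNorm M * |t| := by
  unfold frobNorm
  have : ∑ k, ∑ l, (M k l * t) ^ 2 = (∑ k, ∑ l, M k l ^ 2) * t ^ 2 := by
    rw [Finset.sum_mul]
    refine Finset.sum_congr rfl fun k _ => ?_
    rw [Finset.sum_mul]
    exact Finset.sum_congr rfl fun l _ => by ring
  rw [this, Real.sqrt_mul (by positivity), Real.sqrt_sq_eq_abs]

lemma frobNorm_diag_const (hd : 0 < d) :
    frobNorm (fun k l : Fin d => if k = l then (1:ℝ) / d else 0) = 1 / Real.sqrt d := by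
  unfold frobNorm
  have : ∀ k : Fin d, ∑ l, (if k = l then (1:ℝ)/d else 0) ^ 2 = (1/d) ^ 2 := by
    intro k
    rw [Finset.sum_eq_single k]
    · rw [if_pos rfl]
    · intro l _ hl; rw [if_neg fun h => hl h.symm]; ring
    · intro h; exact absurd (Finset.mem_univ k) h
  rw [Finset.sum_congr rfl fun k _ => this k, Finset.sum_const, Finset.card_univ,
    Fintype.card_fin, nsmul_eq_mul]
  have hd' : (0:ℝ) < d := by exact_mod_cast hd
  rw [show (d:ℝ) * (1/d)^2 = 1/d by field_simp]
  rw [one_div, Real.sqrt_inv, one_div]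

lemma frobNorm_neg (M : Matrix (Fin d) (Fin d) ℝ) : frobNorm (-M) = frobNorm M := by
  rw [frobNorm, frobNorm]
  congr 1
  exact Finset.sum_congr rfl fun k _ => Finset.sum_congr rfl fun l _ => by
    rw [Matrix.neg_apply]; ring

lemma frobNorm_sub_le (M P : Matrix (Fin d) (Fin d) ℝ) :
    frobNorm (M - P) ≤ frobNorm M + frobNorm P := by
  have : M - P = M + (-P) := by abel
  rw [this]
  calc frobNorm (M + (-P)) ≤ frobNorm M + frobNorm (-P) := frobNorm_add_le M (-P)
    _ = frobNorm M + frobNorm P := by rw [frobNorm_neg]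

lemma entry_lip {β : ℝ} (hβ : 0 < β) (G₁ G₂ : Matrix (Fin d) (Fin d) ℝ) (k l : Fin d) :
    |Afun d G₁ k l / max (Nfun d G₁) β - Afun d G₂ k l / max (Nfun d G₂) β|
      ≤ 4 * c0 d / β * frobNorm (G₁ - G₂) := by
  set a := Afun d G₁ k l with ha
  set b := Afun d G₂ k l with hb'
  set x := max (Nfun d G₁) β with hx
  set y := max (Nfun d G₂) β with hy
  have hxβ : β ≤ x := le_max_right _ _
  have hyβ : β ≤ y := le_max_right _ _
  have hx0 : 0 < x := lt_of_lt_of_le hβ hxβ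
  have hy0 : 0 < y := lt_of_lt_of_le hβ hyβ
  set F := frobNorm (G₁ - G₂) with hF
  have hF0 : 0 ≤ F := frobNorm_nonneg _
  have hab : |a - b| ≤ 3 * c0 d * F := Afun_lip G₁ G₂ k l
  have hxy : |y - x| ≤ c0 d * F := by
    have h := abs_max_sub_max_le_abs (Nfun d G₂) (Nfun d G₁) β
    have h2 : |Nfun d G₂ - Nfun d G₁| ≤ c0 d * F := by
      rw [abs_sub_comm]
      exact Nfun_lip G₁ G₂
    exact le_trans h h2
  have hbb : |b| ≤ y := le_trans (abs_Afun_le G₂ k l) (le_max_left _ _)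
  have key : a / x - b / y = (a - b) / x + b * (y - x) / (x * y) := by
    field_simp
    ring
  rw [key]
  have h1 : |(a - b) / x| ≤ 3 * c0 d * F / β := by
    rw [abs_div, abs_of_pos hx0]
    exact div_le_div₀ (mul_nonneg (mul_nonneg (by norm_num) c0_nonneg) hF0) hab hβ hxβ
  have h2 : |b * (y - x) / (x * y)| ≤ c0 d * F / β := by
    rw [abs_div, abs_mul, abs_of_pos (mul_pos hx0 hy0)]
    have hmul : |b| * |y - x| ≤ y * (c0 d * F) :=
      mul_le_mul hbb hxy (abs_nonneg _) (le_of_lt hy0)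
    have step1 : |b| * |y - x| / (x * y) ≤ y * (c0 d * F) / (x * y) :=
      div_le_div_of_nonneg_right hmul (le_of_lt (mul_pos hx0 hy0))
    have step2 : y * (c0 d * F) / (x * y) = c0 d * F / x := by
      field_simp
    have step3 : c0 d * F / x ≤ c0 d * F / β :=
      div_le_div_of_nonneg_left (mul_nonneg c0_nonneg hF0) hβ hxβ
    calc |b| * |y - x| / (x * y) ≤ y * (c0 d * F) / (x * y) := step1
      _ = c0 d * F / x := step2
      _ ≤ c0 d * F / β := step3
  calc |(a - b) / x + b * (y - x) / (x * y)|
      ≤ |(a - b) / x| + |b * (y - x) / (x * y)| := abs_add_le _ _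
    _ ≤ 3 * c0 d * F / β + c0 d * F / β := add_le_add h1 h2
    _ = 4 * c0 d / β * F := by ring

lemma main (d : ℕ) (hd : 2 ≤ d) (γ : ℝ) (hγ : 0 < γ) :
    ∃ L : ℝ, 0 ≤ L ∧ ∃ St : Matrix (Fin d) (Fin d) ℝ → Matrix (Fin d) (Fin d) ℝ,
      (∀ G, γ ≤ frobNorm G → St G = DES d G) ∧
      (∀ G, frobNorm (St G) ≤ 1 + 1 / Real.sqrt d) ∧
      (∀ G₁ G₂, frobNorm (St G₁ - St G₂) ≤ L * frobNorm (G₁ - G₂)) := by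
  classical
  have hd0 : 0 < d := by omega
  have hc0 : 0 < c0 d := c0_pos hd0
  have hdR : (0:ℝ) < d := by exact_mod_cast hd0
  set β : ℝ := c0 d / d * γ with hβdef
  have hβ : 0 < β := mul_pos (div_pos hc0 hdR) hγ
  set St : Matrix (Fin d) (Fin d) ℝ → Matrix (Fin d) (Fin d) ℝ :=
    fun G => fun k l => Afun d G k l / max (Nfun d G) β - ((if k = l then 1 / d else 0 : ℕ) : ℝ)
    with hSt
  have hite : ∀ k l : Fin d, ((if k = l then 1 / d else 0 : ℕ) : ℝ) = 0 := by
    intro k l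
    have h1d : 1 / d = 0 := Nat.div_eq_of_lt (by omega)
    rw [h1d]
    simp
  refine ⟨4 * d * c0 d / β, ?_, St, ?_, ?_, ?_⟩
  · exact div_nonneg (by positivity) hβ.le
  · -- (i)
    intro G hG
    have hNβ : β ≤ Nfun d G := Nfun_lower hd0 hγ G hG
    funext k l
    show Afun d G k l / max (Nfun d G) β - _ = DES d G k l
    rw [max_eq_left hNβ]
    unfold DES
    rfl
  · -- (ii)
    intro G
    set X : Matrix (Fin d) (Fin d) ℝ :=
      fun k l => Afun d G k l / max (Nfun d G) β with hX
    have hst : St G = X := by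
      funext k l
      show Afun d G k l / max (Nfun d G) β - _ = _
      rw [hite k l, sub_zero]
    rw [hst]
    have hD0 : 0 < max (Nfun d G) β := lt_of_lt_of_le hβ (le_max_right _ _)
    have hXfrob : frobNorm X ≤ 1 := by
      have he : X = fun k l => Afun d G k l * (1 / max (Nfun d G) β) := by
        funext k l
        show Afun d G k l / max (Nfun d G) β = _
        rw [div_eq_mul_one_div]
      rw [he, frobNorm_smul, abs_of_pos (by positivity), mul_one_div, div_le_one hD0]
      exact (frob_Afun_le G).trans (le_max_left _ _)
    have hsd : 0 ≤ 1 / Real.sqrt d := by positivity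
    linarith
  · -- (iii)
    intro G₁ G₂
    have hF0 : 0 ≤ frobNorm (G₁ - G₂) := frobNorm_nonneg _
    have hcF : 0 ≤ 4 * c0 d / β * frobNorm (G₁ - G₂) :=
      mul_nonneg (div_nonneg (by positivity) hβ.le) hF0
    have hentry : ∀ k l, |(St G₁ - St G₂) k l|
        ≤ 4 * c0 d / β * frobNorm (G₁ - G₂) := by
      intro k l
      have e : (St G₁ - St G₂) k l
          = Afun d G₁ k l / max (Nfun d G₁) β - Afun d G₂ k l / max (Nfun d G₂) β := by
        rw [Matrix.sub_apply]
        show Afun d G₁ k l / max (Nfun d G₁) β - ((if k = l then 1 / d else 0 : ℕ) : ℝ)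
          - (Afun d G₂ k l / max (Nfun d G₂) β - ((if k = l then 1 / d else 0 : ℕ) : ℝ)) = _
        ring
      rw [e]
      exact entry_lip hβ G₁ G₂ k l
    have h := frobNorm_entrywise_le hcF hentry
    calc frobNorm (St G₁ - St G₂) ≤ d * (4 * c0 d / β * frobNorm (G₁ - G₂)) := h
      _ = 4 * d * c0 d / β * frobNorm (G₁ - G₂) := by ring

end Stmt8Aux

end Stmt8AuxSection

/-- **Truncation of the Doi–Edwards orientation map (Lemma 4.3).** For every `γ̃ > 0`
there are `L ≥ 0` and `𝒮̃ : M_d(ℝ) → M_d(ℝ)` with: (i) `𝒮̃ = 𝒮` on `{|G| ≥ γ̃}`;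
(ii) `|𝒮̃(G)| ≤ 1 + 1/√d` everywhere; (iii) `𝒮̃` is globally Lipschitz with constant `L`
(Frobenius norms throughout). -/
theorem stmt8 (d : ℕ) (hd : 2 ≤ d) (γ : ℝ) (hγ : 0 < γ) :
    ∃ L : ℝ, 0 ≤ L ∧ ∃ St : Matrix (Fin d) (Fin d) ℝ → Matrix (Fin d) (Fin d) ℝ,
      (∀ G, γ ≤ frobNorm G → St G = DES d G) ∧
      (∀ G, frobNorm (St G) ≤ 1 + 1 / Real.sqrt d) ∧
      (∀ G₁ G₂, frobNorm (St G₁ - St G₂) ≤ L * frobNorm (G₁ - G₂)) :=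
  Stmt8Aux.main d hd γ hγ
end
end

section
/- Proposition 4.6. Let ξ₀, ξ₁, ξ₂ > 0 and k > 0, set c = ξ₀·ξ₂^{k+1}/(k+1) and b = (ℓ/ξ₁)·e^{c}. Then the function y : [0,b) → ℝ defined by y(x) = F^{−1}(ξ₁·e^{−c}·x) is twice differentiable, satisfies y(0) = 0, y′(0) = ξ₁, and y″(x) = ξ₀·(y(x)+ξ₂)^{k}·(y′(x))² for all x ∈ [0,b). Moreover this solution is unique: any twice-differentiable z : [0,b′) → ℝ with 0 < b′ ≤ b satisfying z(0) = 0, z′(0) = ξ₁ and z″(x) = ξ₀·(z(x)+ξ₂)^{k}·(z′(x))² on [0,b′) coincides with y on [0,b′). -/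
open MeasureTheory

noncomputable section

/-- The auxiliary function `F` of Section 4.5:
`F(X) = ∫₀^X exp(−ξ₀·(x+ξ₂)^{k+1}/(k+1)) dx`. -/
def Ffun (ξ₀ ξ₂ k : ℝ) (X : ℝ) : ℝ :=
  ∫ x in (0 : ℝ)..X, Real.exp (-ξ₀ * (x + ξ₂) ^ (k + 1) / (k + 1))

/-- The limit `ℓ = ∫₀^∞ exp(−ξ₀·(x+ξ₂)^{k+1}/(k+1)) dx`. -/
def ellConst (ξ₀ ξ₂ k : ℝ) : ℝ :=
  ∫ x in Set.Ioi (0 : ℝ), Real.exp (-ξ₀ * (x + ξ₂) ^ (k + 1) / (k + 1))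

/-- The inverse `F⁻¹ : [0,ℓ) → [0,∞)` of the strictly increasing bijection
`F : [0,∞) → [0,ℓ)`. -/
def Finv (ξ₀ ξ₂ k : ℝ) (z : ℝ) : ℝ :=
  Function.invFunOn (Ffun ξ₀ ξ₂ k) (Set.Ici 0) z

namespace Stmt11Aux
open Set Filter Topology


/-- integrand -/
def g (ξ₀ ξ₂ k x : ℝ) : ℝ := Real.exp (-ξ₀ * (x + ξ₂) ^ (k + 1) / (k + 1))

variable {ξ₀ ξ₂ k : ℝ}

lemma g_pos (x : ℝ) : 0 < g ξ₀ ξ₂ k x := Real.exp_pos _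

lemma Ffun_eq (X : ℝ) : Ffun ξ₀ ξ₂ k X = ∫ x in (0:ℝ)..X, g ξ₀ ξ₂ k x := rfl

lemma ell_eq : ellConst ξ₀ ξ₂ k = ∫ x in Ioi (0:ℝ), g ξ₀ ξ₂ k x := rfl

lemma g_cont (hk : 0 < k) : Continuous (g ξ₀ ξ₂ k) := by
  unfold g
  have h1 : Continuous fun x : ℝ => (x + ξ₂) ^ (k + 1) :=
    (continuous_id.add continuous_const).rpow_const (fun x => Or.inr (by linarith))
  exact Real.continuous_exp.comp ((continuous_const.mul h1).div_const (k + 1))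

lemma pow_hasDeriv (hk : 0 < k) (μ x : ℝ) :
    HasDerivAt (fun u : ℝ => μ * (u + ξ₂) ^ (k + 1) / (k + 1)) (μ * (x + ξ₂) ^ k) x := by
  have h0 := Real.hasDerivAt_rpow_const (x := x + ξ₂) (p := k + 1) (Or.inr (by linarith))
  have h1 : HasDerivAt (fun u : ℝ => (u + ξ₂) ^ (k + 1)) ((k + 1) * (x + ξ₂) ^ k) x := by
    have := h0.comp x ((hasDerivAt_id x).add_const ξ₂)
    simp only [add_sub_cancel_right, mul_one] at this
    exact this
  have h2 := (h1.const_mul μ).div_const (k + 1)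
  refine h2.congr_deriv ?_
  have hk1 : (k : ℝ) + 1 ≠ 0 := by linarith
  field_simp

lemma g_hasDeriv (hk : 0 < k) (x : ℝ) :
    HasDerivAt (g ξ₀ ξ₂ k) (g ξ₀ ξ₂ k x * (-ξ₀ * (x + ξ₂) ^ k)) x :=
  (pow_hasDeriv hk (-ξ₀) x).exp

lemma F_hasDeriv (hk : 0 < k) (X : ℝ) :
    HasDerivAt (Ffun ξ₀ ξ₂ k) (g ξ₀ ξ₂ k X) X := by
  have hc := g_cont (ξ₀ := ξ₀) (ξ₂ := ξ₂) hk
  exact intervalIntegral.integral_hasDerivAt_right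
    (hc.intervalIntegrable _ _)
    (hc.stronglyMeasurable.stronglyMeasurableAtFilter)
    hc.continuousAt

lemma F_strictMono (hk : 0 < k) : StrictMono (Ffun ξ₀ ξ₂ k) :=
  strictMono_of_deriv_pos (fun x => by rw [(F_hasDeriv hk x).deriv]; exact g_pos x)

lemma F_zero : Ffun ξ₀ ξ₂ k 0 = 0 := intervalIntegral.integral_same

lemma g_integrable (h0 : 0 < ξ₀) (h2 : 0 < ξ₂) (hk : 0 < k) :
    IntegrableOn (g ξ₀ ξ₂ k) (Ioi (0:ℝ)) := by
  set C : ℝ := ξ₀ * ξ₂ ^ k / (k + 1) with hC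
  have hCpos : 0 < C := by
    have : (0:ℝ) < ξ₂ ^ k := Real.rpow_pos_of_pos h2 k
    positivity
  have hbound : ∀ x ∈ Ioi (0:ℝ), ‖g ξ₀ ξ₂ k x‖ ≤ Real.exp (-C * x) := by
    intro x hx
    have hx0 : (0:ℝ) ≤ x := le_of_lt hx
    rw [Real.norm_eq_abs, g, abs_of_pos (Real.exp_pos _)]
    apply Real.exp_le_exp.2
    have hsplit : (x + ξ₂) ^ (k + 1) = (x + ξ₂) ^ k * (x + ξ₂) := by
      rw [Real.rpow_add (by linarith), Real.rpow_one]
    have h1 : ξ₂ ^ k ≤ (x + ξ₂) ^ k :=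
      Real.rpow_le_rpow (le_of_lt h2) (by linarith) (le_of_lt hk)
    have h2' : x ≤ x + ξ₂ := by linarith
    have hge : ξ₂ ^ k * x ≤ (x + ξ₂) ^ (k + 1) := by
      rw [hsplit]
      have hp : (0:ℝ) ≤ ξ₂ ^ k := le_of_lt (Real.rpow_pos_of_pos h2 k)
      calc ξ₂ ^ k * x ≤ (x + ξ₂) ^ k * x := by
            exact mul_le_mul_of_nonneg_right h1 hx0
        _ ≤ (x + ξ₂) ^ k * (x + ξ₂) :=
            mul_le_mul_of_nonneg_left h2' (le_trans hp h1)
    have hk1 : (0:ℝ) < k + 1 := by linarith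
    have h3 : ξ₀ * (ξ₂ ^ k * x) ≤ ξ₀ * ((x + ξ₂) ^ (k + 1)) :=
      mul_le_mul_of_nonneg_left hge h0.le
    rw [hC, neg_mul, neg_mul, neg_div, neg_le_neg_iff, div_mul_eq_mul_div]
    gcongr ?_ / _
    linarith [h3]
  refine (exp_neg_integrableOn_Ioi 0 hCpos).mono' ?_ ?_
  · exact ((g_cont hk).aestronglyMeasurable).restrict
  · exact (ae_restrict_iff' measurableSet_Ioi).2 (ae_of_all _ hbound)


lemma ioi_pos (h0 : 0 < ξ₀) (h2 : 0 < ξ₂) (hk : 0 < k) {X : ℝ} (hX : 0 ≤ X) :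
    0 < ∫ x in Ioi X, g ξ₀ ξ₂ k x := by
  have hint : IntegrableOn (g ξ₀ ξ₂ k) (Ioi X) :=
    (g_integrable h0 h2 hk).mono_set (Ioi_subset_Ioi hX)
  rw [setIntegral_pos_iff_support_of_nonneg_ae (ae_of_all _ (fun x => (g_pos x).le)) hint]
  have hsupp : Function.support (g ξ₀ ξ₂ k) ∩ Ioi X = Ioi X := by
    apply inter_eq_right.2
    intro x _
    exact (g_pos x).ne'
  rw [hsupp, Real.volume_Ioi]
  exact ENNReal.zero_lt_top

lemma ell_pos (h0 : 0 < ξ₀) (h2 : 0 < ξ₂) (hk : 0 < k) : 0 < ellConst ξ₀ ξ₂ k := by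
  rw [ell_eq]; exact ioi_pos h0 h2 hk le_rfl

lemma F_lt_ell (h0 : 0 < ξ₀) (h2 : 0 < ξ₂) (hk : 0 < k) {X : ℝ} (hX : 0 ≤ X) :
    Ffun ξ₀ ξ₂ k X < ellConst ξ₀ ξ₂ k := by
  have h1 : IntegrableOn (g ξ₀ ξ₂ k) (Ioc 0 X) :=
    (g_integrable h0 h2 hk).mono_set Ioc_subset_Ioi_self
  have h2' : IntegrableOn (g ξ₀ ξ₂ k) (Ioi X) :=
    (g_integrable h0 h2 hk).mono_set (Ioi_subset_Ioi hX)
  have hu := setIntegral_union (Ioc_disjoint_Ioi le_rfl) measurableSet_Ioi h1 h2'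
  rw [Ioc_union_Ioi_eq_Ioi hX] at hu
  rw [ell_eq, hu, Ffun_eq, intervalIntegral.integral_of_le hX]
  linarith [ioi_pos h0 h2 hk hX]

lemma F_tendsto (h0 : 0 < ξ₀) (h2 : 0 < ξ₂) (hk : 0 < k) :
    Tendsto (Ffun ξ₀ ξ₂ k) atTop (𝓝 (ellConst ξ₀ ξ₂ k)) := by
  rw [ell_eq]
  have := intervalIntegral_tendsto_integral_Ioi 0 (g_integrable h0 h2 hk) tendsto_id
  exact this

lemma F_nonneg (hk : 0 < k) {X : ℝ} (hX : 0 ≤ X) : 0 ≤ Ffun ξ₀ ξ₂ k X := by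
  rw [← F_zero (ξ₀ := ξ₀) (ξ₂ := ξ₂) (k := k)]
  exact (F_strictMono hk).monotone hX

lemma F_surj (h0 : 0 < ξ₀) (h2 : 0 < ξ₂) (hk : 0 < k) {t : ℝ} (ht0 : 0 ≤ t)
    (htl : t < ellConst ξ₀ ξ₂ k) : ∃ X, 0 ≤ X ∧ Ffun ξ₀ ξ₂ k X = t := by
  have h := F_tendsto h0 h2 hk
  have hev : ∀ᶠ X in atTop, t < Ffun ξ₀ ξ₂ k X := h.eventually (eventually_gt_nhds htl)
  obtain ⟨X₀, hX₀⟩ := (hev.and (eventually_ge_atTop 0)).exists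
  have hcF : ContinuousOn (Ffun ξ₀ ξ₂ k) (Icc 0 X₀) := fun u _ =>
    ((F_hasDeriv hk u).continuousAt).continuousWithinAt
  have hsub : t ∈ Icc (Ffun ξ₀ ξ₂ k 0) (Ffun ξ₀ ξ₂ k X₀) := by
    rw [F_zero]; exact ⟨ht0, hX₀.1.le⟩
  obtain ⟨X, hXmem, hXeq⟩ := intermediate_value_Icc hX₀.2 hcF hsub
  exact ⟨X, hXmem.1, hXeq⟩

lemma F_image (h0 : 0 < ξ₀) (h2 : 0 < ξ₂) (hk : 0 < k) :
    Ffun ξ₀ ξ₂ k '' (Ici 0) = Ico 0 (ellConst ξ₀ ξ₂ k) := by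
  ext t
  constructor
  · rintro ⟨X, hX, rfl⟩
    exact ⟨F_nonneg hk hX, F_lt_ell h0 h2 hk hX⟩
  · rintro ⟨ht0, htl⟩
    obtain ⟨X, hX0, hXe⟩ := F_surj h0 h2 hk ht0 htl
    exact ⟨X, hX0, hXe⟩

lemma F_injOn (hk : 0 < k) : Set.InjOn (Ffun ξ₀ ξ₂ k) (Ici 0) :=
  (F_strictMono hk).injective.injOn

lemma Finv_F (hk : 0 < k) {u : ℝ} (hu : 0 ≤ u) : Finv ξ₀ ξ₂ k (Ffun ξ₀ ξ₂ k u) = u :=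
  (F_injOn hk).leftInvOn_invFunOn hu

lemma F_Finv (h0 : 0 < ξ₀) (h2 : 0 < ξ₂) (hk : 0 < k) {t : ℝ}
    (ht : t ∈ Ico 0 (ellConst ξ₀ ξ₂ k)) : Ffun ξ₀ ξ₂ k (Finv ξ₀ ξ₂ k t) = t := by
  obtain ⟨X, hX0, hXe⟩ := F_surj h0 h2 hk ht.1 ht.2
  exact Function.invFunOn_eq ⟨X, hX0, hXe⟩

lemma Finv_nonneg (h0 : 0 < ξ₀) (h2 : 0 < ξ₂) (hk : 0 < k) {t : ℝ}
    (ht : t ∈ Ico 0 (ellConst ξ₀ ξ₂ k)) : 0 ≤ Finv ξ₀ ξ₂ k t := by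
  obtain ⟨X, hX0, hXe⟩ := F_surj h0 h2 hk ht.1 ht.2
  exact Function.invFunOn_mem ⟨X, hX0, hXe⟩

lemma Finv_zero (hk : 0 < k) : Finv ξ₀ ξ₂ k 0 = 0 := by
  have := Finv_F (ξ₀ := ξ₀) (ξ₂ := ξ₂) hk (le_refl 0)
  rwa [F_zero] at this

lemma Finv_strictMonoOn (h0 : 0 < ξ₀) (h2 : 0 < ξ₂) (hk : 0 < k) :
    StrictMonoOn (Finv ξ₀ ξ₂ k) (Ico 0 (ellConst ξ₀ ξ₂ k)) := by
  intro t1 h1 t2 h2' hlt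
  apply (F_strictMono hk).lt_iff_lt.mp
  rw [F_Finv h0 h2 hk h1, F_Finv h0 h2 hk h2']
  exact hlt

lemma Finv_image (h0 : 0 < ξ₀) (h2 : 0 < ξ₂) (hk : 0 < k) :
    Finv ξ₀ ξ₂ k '' (Ico 0 (ellConst ξ₀ ξ₂ k)) = Ici 0 := by
  rw [← F_image h0 h2 hk]
  exact (F_injOn hk).invFunOn_image Subset.rfl

lemma Finv_cwa (h0 : 0 < ξ₀) (h2 : 0 < ξ₂) (hk : 0 < k) {t : ℝ}
    (ht : t ∈ Ico 0 (ellConst ξ₀ ξ₂ k)) :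
    ContinuousWithinAt (Finv ξ₀ ξ₂ k) (Ico 0 (ellConst ξ₀ ξ₂ k)) t := by
  set ℓ := ellConst ξ₀ ξ₂ k with hℓ
  have hmono := Finv_strictMonoOn h0 h2 hk
  have himg := Finv_image h0 h2 hk
  have hright : ContinuousWithinAt (Finv ξ₀ ξ₂ k) (Ici t) t := by
    apply hmono.continuousWithinAt_right_of_image_mem_nhdsWithin
    · refine mem_of_superset (inter_mem self_mem_nhdsWithin
        (mem_nhdsWithin_of_mem_nhds (Iio_mem_nhds ht.2))) ?_
      rintro u ⟨hu1, hu2⟩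
      exact ⟨le_trans ht.1 hu1, hu2⟩
    · rw [himg]
      exact mem_of_superset self_mem_nhdsWithin
        (Ici_subset_Ici.2 (Finv_nonneg h0 h2 hk ht))
  rcases eq_or_lt_of_le ht.1 with h|h
  · exact (hright.mono (by rw [← h]; exact Ico_subset_Ici_self))
  · have hFinvpos : 0 < Finv ξ₀ ξ₂ k t := by
      have := hmono (left_mem_Ico.2 (lt_of_le_of_lt ht.1 ht.2))
        ht (by exact h)
      rwa [Finv_zero hk] at this
    have hleft : ContinuousWithinAt (Finv ξ₀ ξ₂ k) (Iic t) t := by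
      apply hmono.continuousWithinAt_left_of_image_mem_nhdsWithin
      · refine mem_of_superset (inter_mem self_mem_nhdsWithin
          (mem_nhdsWithin_of_mem_nhds (Ioi_mem_nhds h))) ?_
        rintro u ⟨hu1, hu2⟩
        exact ⟨le_of_lt hu2, lt_of_le_of_lt hu1 ht.2⟩
      · rw [himg]
        exact mem_nhdsWithin_of_mem_nhds
          (mem_of_superset (Ioi_mem_nhds hFinvpos) Ioi_subset_Ici_self)
    have := hleft.union hright
    rw [Iic_union_Ici] at this
    exact this.mono (subset_univ _)

end Stmt11Aux

open Stmt11Aux in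
/-- **Proposition 4.6.** With `c = ξ₀·ξ₂^{k+1}/(k+1)` and `b = (ℓ/ξ₁)·e^c`, the function
`y(x) = F⁻¹(ξ₁·e^{−c}·x)` on `[0,b)` is twice differentiable, satisfies `y(0) = 0`,
`y′(0) = ξ₁` and `y″ = ξ₀·(y+ξ₂)^k·(y′)²` on `[0,b)`; moreover any twice-differentiable
solution of this Cauchy problem on `[0,b′)` with `0 < b′ ≤ b` coincides with `y` there. -/
theorem stmt11 (ξ₀ ξ₁ ξ₂ k : ℝ) (h0 : 0 < ξ₀) (h1 : 0 < ξ₁) (h2 : 0 < ξ₂) (hk : 0 < k) :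
    ∀ c b : ℝ, c = ξ₀ * ξ₂ ^ (k + 1) / (k + 1) → b = ellConst ξ₀ ξ₂ k / ξ₁ * Real.exp c →
    ∀ y : ℝ → ℝ, y = (fun x => Finv ξ₀ ξ₂ k (ξ₁ * Real.exp (-c) * x)) →
      (∀ x ∈ Set.Ico (0 : ℝ) b,
        DifferentiableWithinAt ℝ y (Set.Ico 0 b) x ∧
        DifferentiableWithinAt ℝ (fun z => derivWithin y (Set.Ico 0 b) z) (Set.Ico 0 b) x) ∧
      y 0 = 0 ∧
      derivWithin y (Set.Ico 0 b) 0 = ξ₁ ∧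
      (∀ x ∈ Set.Ico (0 : ℝ) b,
        derivWithin (fun z => derivWithin y (Set.Ico 0 b) z) (Set.Ico 0 b) x =
          ξ₀ * (y x + ξ₂) ^ k * derivWithin y (Set.Ico 0 b) x ^ 2) ∧
      (∀ b' : ℝ, 0 < b' → b' ≤ b → ∀ z z' : ℝ → ℝ,
        (∀ x ∈ Set.Ico (0 : ℝ) b', HasDerivWithinAt z (z' x) (Set.Ico 0 b') x) →
        (∀ x ∈ Set.Ico (0 : ℝ) b',
          HasDerivWithinAt z' (ξ₀ * (z x + ξ₂) ^ k * z' x ^ 2) (Set.Ico 0 b') x) →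
        z 0 = 0 → z' 0 = ξ₁ → Set.EqOn z y (Set.Ico 0 b')) := by
  intro c b hc hb y hy
  set ℓ : ℝ := ellConst ξ₀ ξ₂ k with hℓdef
  set a : ℝ := ξ₁ * Real.exp (-c) with hadef
  set s : Set ℝ := Set.Ico (0 : ℝ) b with hsdef
  have ha : 0 < a := by positivity
  have hℓ : 0 < ℓ := ell_pos h0 h2 hk
  have hab : a * b = ℓ := by
    rw [hb, hadef, Real.exp_neg]
    field_simp
  have hbpos : 0 < b := by
    rw [hb]
    exact mul_pos (div_pos hℓ h1) (Real.exp_pos c)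
  have hmem : ∀ x ∈ s, a * x ∈ Set.Ico 0 ℓ := by
    intro x hx
    refine ⟨mul_nonneg ha.le hx.1, ?_⟩
    calc a * x < a * b := mul_lt_mul_of_pos_left hx.2 ha
      _ = ℓ := hab
  have hFy : ∀ x ∈ s, Ffun ξ₀ ξ₂ k (y x) = a * x := by
    intro x hx
    rw [hy]
    exact F_Finv h0 h2 hk (hmem x hx)
  have hynn : ∀ x ∈ s, 0 ≤ y x := by
    intro x hx
    rw [hy]
    exact Finv_nonneg h0 h2 hk (hmem x hx)
  have hgc : g ξ₀ ξ₂ k 0 = Real.exp (-c) := by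
    unfold Stmt11Aux.g
    rw [hc]
    congr 1
    rw [zero_add]
    ring
  have ycont : ∀ x ∈ s, ContinuousWithinAt y s x := by
    intro x hx
    rw [hy]
    exact (Finv_cwa h0 h2 hk (hmem x hx)).comp
      ((continuous_const.mul continuous_id).continuousWithinAt) (fun u hu => hmem u hu)
  -- first derivative of y
  have hyd : ∀ x ∈ s, HasDerivWithinAt y (a / g ξ₀ ξ₂ k (y x)) s x := by
    intro x hx
    have hYpos := g_pos (ξ₀ := ξ₀) (ξ₂ := ξ₂) (k := k) (y x)
    rw [hasDerivWithinAt_iff_tendsto_slope]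
    have hyne : ∀ u ∈ s, u ≠ x → y u ≠ y x := by
      intro u hu hux h
      exact hux (mul_left_cancel₀ ha.ne' (by rw [← hFy u hu, ← hFy x hx, h]))
    have h1 : Filter.Tendsto y (nhdsWithin x (s \ {x})) (nhdsWithin (y x) {y x}ᶜ) := by
      rw [tendsto_nhdsWithin_iff]
      refine ⟨(ycont x hx).tendsto.mono_left (nhdsWithin_mono _ Set.diff_subset), ?_⟩
      filter_upwards [self_mem_nhdsWithin] with u hu
      simpa using hyne u hu.1 (by simpa using hu.2)
    have h2 : Filter.Tendsto (slope (Ffun ξ₀ ξ₂ k) (y x)) (nhdsWithin (y x) {y x}ᶜ)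
        (nhds (g ξ₀ ξ₂ k (y x))) :=
      hasDerivAt_iff_tendsto_slope.mp (F_hasDeriv hk (y x))
    have h3 := ((h2.comp h1).inv₀ hYpos.ne').const_mul a
    rw [div_eq_mul_inv]
    refine Filter.Tendsto.congr' ?_ h3
    filter_upwards [self_mem_nhdsWithin] with u hu
    have hu1 : u ∈ s := hu.1
    have hux : u ≠ x := by simpa using hu.2
    have hyu : y u ≠ y x := hyne u hu1 hux
    show a * (slope (Ffun ξ₀ ξ₂ k) (y x) (y u))⁻¹ = slope y x u
    rw [slope_def_field, slope_def_field, hFy u hu1, hFy x hx, inv_div]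
    rw [mul_div_assoc']
    have hne1 : a * u - a * x ≠ 0 :=
      sub_ne_zero.2 (fun h => hux (mul_left_cancel₀ ha.ne' h))
    have hne2 : u - x ≠ 0 := sub_ne_zero.2 hux
    field_simp
  have hud : UniqueDiffOn ℝ s := uniqueDiffOn_Ico 0 b
  have hder1 : ∀ x ∈ s, derivWithin y s x = a / g ξ₀ ξ₂ k (y x) := fun x hx =>
    (hyd x hx).derivWithin (hud x hx)
  -- second derivative
  have hfun : (fun u => a / g ξ₀ ξ₂ k (y u)) =
      fun u => a * Real.exp (ξ₀ * (y u + ξ₂) ^ (k + 1) / (k + 1)) := by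
    funext u
    unfold Stmt11Aux.g
    rw [div_eq_mul_inv, ← Real.exp_neg]
    congr 1
    ring
  have hpsi : ∀ x ∈ s, HasDerivWithinAt (fun u => a / g ξ₀ ξ₂ k (y u))
      (ξ₀ * (y x + ξ₂) ^ k * (a / g ξ₀ ξ₂ k (y x)) ^ 2) s x := by
    intro x hx
    have hq := pow_hasDeriv (ξ₂ := ξ₂) hk ξ₀ (y x)
    have hcomp : HasDerivWithinAt (fun u => ξ₀ * (y u + ξ₂) ^ (k + 1) / (k + 1))
        (ξ₀ * (y x + ξ₂) ^ k * (a / g ξ₀ ξ₂ k (y x))) s x :=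
      hq.comp_hasDerivWithinAt x (hyd x hx)
    rw [hfun]
    refine (hcomp.exp.const_mul a).congr_deriv ?_
    have hgx : Real.exp (ξ₀ * (y x + ξ₂) ^ (k + 1) / (k + 1)) = (g ξ₀ ξ₂ k (y x))⁻¹ := by
      unfold Stmt11Aux.g
      rw [← Real.exp_neg]
      congr 1
      ring
    rw [hgx]
    have := (g_pos (ξ₀ := ξ₀) (ξ₂ := ξ₂) (k := k) (y x)).ne'
    field_simp
  have heqon : Set.EqOn (fun u => derivWithin y s u) (fun u => a / g ξ₀ ξ₂ k (y u)) s :=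
    fun u hu => hder1 u hu
  have hy0 : y 0 = 0 := by
    rw [hy]
    show Finv ξ₀ ξ₂ k (a * 0) = 0
    rw [mul_zero, Finv_zero hk]
  refine ⟨?_, hy0, ?_, ?_, ?_⟩
  · intro x hx
    refine ⟨(hyd x hx).differentiableWithinAt, ?_⟩
    exact ((hpsi x hx).differentiableWithinAt).congr (fun u hu => hder1 u hu) (hder1 x hx)
  · have h00 : (0:ℝ) ∈ s := ⟨le_rfl, hbpos⟩
    rw [hder1 0 h00, hy0, hgc, Real.exp_neg, hadef, Real.exp_neg]
    field_simp
  · intro x hx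
    rw [derivWithin_congr heqon (hder1 x hx), (hpsi x hx).derivWithin (hud x hx),
      hder1 x hx]
  -- uniqueness
  · intro b' hb'pos hb'le z z' hz hz' hz0 hz'0
    set s' : Set ℝ := Set.Ico (0 : ℝ) b' with hs'def
    have hconst : ∀ f : ℝ → ℝ, (∀ x ∈ s', HasDerivWithinAt f 0 s' x) →
        ∀ x ∈ s', f x = f 0 := by
      intro f hf x hx
      have hcont : ContinuousOn f (Set.Icc 0 x) := by
        intro t ht
        have hts : t ∈ s' := ⟨ht.1, lt_of_le_of_lt ht.2 hx.2⟩
        exact ((hf t hts).continuousWithinAt).mono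
          (fun u hu => ⟨hu.1, lt_of_le_of_lt hu.2 hx.2⟩)
      have hder : ∀ t ∈ Set.Ico 0 x, HasDerivWithinAt f 0 (Set.Ici t) t := by
        intro t ht
        have hts : t ∈ s' := ⟨ht.1, lt_trans ht.2 hx.2⟩
        refine (hf t hts).mono_of_mem_nhdsWithin ?_
        refine Filter.mem_of_superset (Filter.inter_mem self_mem_nhdsWithin
          (mem_nhdsWithin_of_mem_nhds (Iio_mem_nhds (lt_trans ht.2 hx.2)))) ?_
        rintro u ⟨hu1, hu2⟩
        exact ⟨le_trans ht.1 hu1, hu2⟩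
      exact constant_of_has_deriv_right_zero hcont hder x ⟨hx.1, le_rfl⟩
    have hw : ∀ x ∈ s', HasDerivWithinAt (fun u => g ξ₀ ξ₂ k (z u) * z' u) 0 s' x := by
      intro x hx
      have hgz : HasDerivWithinAt (fun u => g ξ₀ ξ₂ k (z u))
          (g ξ₀ ξ₂ k (z x) * (-ξ₀ * (z x + ξ₂) ^ k) * z' x) s' x :=
        (g_hasDeriv hk (z x)).comp_hasDerivWithinAt x (hz x hx)
      have := hgz.mul (hz' x hx)
      refine this.congr_deriv ?_
      ring
    have hw0 : g ξ₀ ξ₂ k (z 0) * z' 0 = a := by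
      rw [hz0, hz'0, hgc]
      ring
    have hwx : ∀ x ∈ s', g ξ₀ ξ₂ k (z x) * z' x = a := by
      intro x hx
      have := hconst _ hw x hx
      simpa [hw0] using this
    have hz'pos : ∀ x ∈ s', 0 < z' x := by
      intro x hx
      have h := hwx x hx
      have hg := g_pos (ξ₀ := ξ₀) (ξ₂ := ξ₂) (k := k) (z x)
      nlinarith
    have hFz : ∀ x ∈ s', Ffun ξ₀ ξ₂ k (z x) = a * x := by
      intro x hx
      have hFzd : ∀ t ∈ s', HasDerivWithinAt (fun u => Ffun ξ₀ ξ₂ k (z u) - a * u) 0 s' t := by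
        intro t ht
        have h1 := (F_hasDeriv (ξ₀ := ξ₀) (ξ₂ := ξ₂) hk (z t)).comp_hasDerivWithinAt t (hz t ht)
        have h2 := (hasDerivWithinAt_id t s').const_mul a
        have h3 := h1.sub h2
        refine h3.congr_deriv ?_
        rw [hwx t ht]
        ring
      have := hconst _ hFzd x hx
      rw [hz0, F_zero] at this
      simp at this
      linarith [this]
    have hmono : StrictMonoOn z s' := by
      refine strictMonoOn_of_hasDerivWithinAt_pos (convex_Ico 0 b')
        (fun t ht => (hz t ht).continuousWithinAt) (f' := z') ?_ ?_
      · intro t ht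
        exact (hz t (interior_subset ht)).mono interior_subset
      · intro t ht
        exact hz'pos t (interior_subset ht)
    have hznn : ∀ x ∈ s', 0 ≤ z x := by
      intro x hx
      rcases eq_or_lt_of_le hx.1 with h | h
      · rw [← h, hz0]
      · have := hmono (Set.left_mem_Ico.2 hb'pos) hx h
        rw [hz0] at this
        exact this.le
    intro x hx
    have h1 : Finv ξ₀ ξ₂ k (Ffun ξ₀ ξ₂ k (z x)) = z x := Finv_F hk (hznn x hx)
    rw [hy]
    show z x = Finv ξ₀ ξ₂ k (a * x)
    rw [← h1, hFz x hx]
end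
end

section
/- Let k ≥ 2 be an integer, ξ₂ > 0, and set ξ₀ = (k·ξ₂)^{−(k+1)}. Then k·(k/2)^{1/(k+1)}·ξ₂ − ξ₂ ≥ 0 and F(k·(k/2)^{1/(k+1)}·ξ₂ − ξ₂) · exp(ξ₀·ξ₂^{k+1}/(k+1)) ≥ (e^{−1/2}/2)·k·ξ₂. (Lower bound for the parameter ξ₁ of the truncation construction; Remark 7.1, point 3, culminating in estimate (7.21).) -/
open MeasureTheory

noncomputable section

/-- **Remark 7.1, point 3 (estimate (7.21)).** For an integer `k ≥ 2`, `ξ₂ > 0` and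
`ξ₀ = (k·ξ₂)^{−(k+1)}`, one has `k·(k/2)^{1/(k+1)}·ξ₂ − ξ₂ ≥ 0` and
`F(k·(k/2)^{1/(k+1)}·ξ₂ − ξ₂) · exp(ξ₀·ξ₂^{k+1}/(k+1)) ≥ (e^{−1/2}/2)·k·ξ₂`. -/
theorem stmt12 (k : ℕ) (hk : 2 ≤ k) (ξ₂ : ℝ) (h2 : 0 < ξ₂) :
    ∀ ξ₀ : ℝ, ξ₀ = ((k : ℝ) * ξ₂) ^ (-((k : ℝ) + 1)) →
      0 ≤ (k : ℝ) * ((k : ℝ) / 2) ^ (1 / ((k : ℝ) + 1)) * ξ₂ - ξ₂ ∧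
      Real.exp (-1 / 2) / 2 * k * ξ₂ ≤
        Ffun ξ₀ ξ₂ k ((k : ℝ) * ((k : ℝ) / 2) ^ (1 / ((k : ℝ) + 1)) * ξ₂ - ξ₂) *
          Real.exp (ξ₀ * ξ₂ ^ ((k : ℝ) + 1) / ((k : ℝ) + 1)) := by
  intro ξ₀ hξ₀
  have hk2 : (2:ℝ) ≤ (k:ℝ) := by exact_mod_cast hk
  have hkpos : (0:ℝ) < (k:ℝ) := by linarith
  have hk1 : (0:ℝ) < (k:ℝ) + 1 := by linarith
  set c : ℝ := ((k:ℝ)/2) ^ (1/((k:ℝ)+1)) with hc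
  have hc1 : 1 ≤ c := Real.one_le_rpow (by linarith) (by positivity)
  set X : ℝ := (k:ℝ) * c * ξ₂ - ξ₂ with hX
  have h4 : (k:ℝ)*ξ₂ ≤ (k:ℝ)*c*ξ₂ :=
    mul_le_mul_of_nonneg_right (le_mul_of_one_le_right hkpos.le hc1) h2.le
  have h5 : 2*ξ₂ ≤ (k:ℝ)*ξ₂ := mul_le_mul_of_nonneg_right hk2 h2.le
  have hX0 : 0 ≤ X := by rw [hX]; linarith
  have hkξ : (0:ℝ) < (k:ℝ) * ξ₂ := by positivity
  have hξ₀pos : 0 < ξ₀ := by rw [hξ₀]; positivity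
  -- key bound: for x in [0, X], ξ₀ * (x+ξ₂)^(k+1) ≤ k/2
  have key : ∀ x ∈ Set.Icc (0:ℝ) X, ξ₀ * (x + ξ₂) ^ ((k:ℝ) + 1) ≤ (k:ℝ)/2 := by
    intro x hx
    have hx0 : 0 ≤ x := hx.1
    have hxX : x ≤ X := hx.2
    have hxs : 0 ≤ x + ξ₂ := by linarith
    have h1 : (x + ξ₂) ^ ((k:ℝ)+1) ≤ (X + ξ₂) ^ ((k:ℝ)+1) :=
      Real.rpow_le_rpow hxs (by linarith) (by linarith)
    have hXs : X + ξ₂ = ((k:ℝ) * ξ₂) * c := by rw [hX]; ring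
    have h2' : (X + ξ₂) ^ ((k:ℝ)+1) = ((k:ℝ)*ξ₂) ^ ((k:ℝ)+1) * ((k:ℝ)/2) := by
      rw [hXs, Real.mul_rpow hkξ.le (by positivity), hc,
        ← Real.rpow_mul (by positivity : (0:ℝ) ≤ (k:ℝ)/2),
        one_div_mul_cancel hk1.ne', Real.rpow_one]
    have h3 : ξ₀ * ((k:ℝ)*ξ₂) ^ ((k:ℝ)+1) = 1 := by
      rw [hξ₀, ← Real.rpow_add hkξ]
      rw [show -((k:ℝ)+1) + ((k:ℝ)+1) = 0 by ring, Real.rpow_zero]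
    calc ξ₀ * (x + ξ₂) ^ ((k:ℝ)+1) ≤ ξ₀ * (X + ξ₂) ^ ((k:ℝ)+1) := by
          exact mul_le_mul_of_nonneg_left h1 hξ₀pos.le
      _ = (k:ℝ)/2 := by rw [h2']; rw [← mul_assoc, h3, one_mul]
  refine ⟨hX0, ?_⟩
  -- integrand ≥ exp(-1/2) on [0,X]
  have hcont : Continuous fun x : ℝ => Real.exp (-ξ₀ * (x + ξ₂) ^ ((k:ℝ) + 1) / ((k:ℝ) + 1)) := by
    apply Real.continuous_exp.comp
    apply Continuous.div_const
    exact (continuous_const.mul ((continuous_id.add continuous_const).rpow_const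
      (fun x => Or.inr (by positivity))))
  have hmono : ∀ x ∈ Set.Icc (0:ℝ) X,
      Real.exp (-1/2) ≤ Real.exp (-ξ₀ * (x + ξ₂) ^ ((k:ℝ) + 1) / ((k:ℝ) + 1)) := by
    intro x hx
    apply Real.exp_le_exp.mpr
    have := key x hx
    rw [div_le_div_iff₀ (by norm_num) hk1] at *
    nlinarith [key x hx]
  have hF : Real.exp (-1/2) * X ≤ Ffun ξ₀ ξ₂ k X := by
    have := intervalIntegral.integral_mono_on hX0
      (intervalIntegrable_const : IntervalIntegrable (fun _ => Real.exp (-1/2)) volume 0 X)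
      (hcont.intervalIntegrable 0 X) hmono
    simpa [Ffun, mul_comm] using this
  have hexp1 : 1 ≤ Real.exp (ξ₀ * ξ₂ ^ ((k:ℝ) + 1) / ((k:ℝ) + 1)) := by
    apply Real.one_le_exp
    positivity
  have hFpos : 0 ≤ Ffun ξ₀ ξ₂ k X := le_trans (by positivity) hF
  calc Real.exp (-1 / 2) / 2 * k * ξ₂ ≤ Real.exp (-1/2) * X := by
        have : (k:ℝ)/2 * ξ₂ ≤ X := by rw [hX]; linarith
        have he : 0 < Real.exp (-1/2 : ℝ) := Real.exp_pos _
        nlinarith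
    _ ≤ Ffun ξ₀ ξ₂ k X := hF
    _ ≤ Ffun ξ₀ ξ₂ k X * Real.exp (ξ₀ * ξ₂ ^ ((k:ℝ) + 1) / ((k:ℝ) + 1)) :=
        le_mul_of_one_le_right hFpos hexp1
end
end

section
/- Logarithmic Gronwall estimate of Section 7.6. Let C > 0, k ≥ 1, t* > 0, and let y : [0,t*] → [0,∞) be differentiable with y(0) = y₀ and y′(t) ≤ C·( (e + y(t))·ln(e + y(t)) + k^{−2}·(e + y(t))·(ln(e + y(t)))² ) for all t ∈ [0,t*]. Set t₀ = (1/C)·ln(1 + k²/ln(e + y₀)). Then for every t ∈ [0,t*] with t < t₀ one has (1/ln(e + y₀) + 1/k²)·e^{−Ct} − 1/k² > 0 and 1/ln(e + y(t)) ≥ (1/ln(e + y₀) + 1/k²)·e^{−Ct} − 1/k²; in particular y(t) ≤ exp( ((1/ln(e + y₀) + 1/k²)·e^{−Ct} − 1/k²)^{−1} ) − e. -/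
/-- **Logarithmic Gronwall estimate of Section 7.6.** If `y : [0,t*] → [0,∞)` is
differentiable, `y(0) = y₀`, and
`y′ ≤ C·((e+y)·ln(e+y) + k⁻²·(e+y)·ln(e+y)²)`, then setting
`t₀ = (1/C)·ln(1 + k²/ln(e+y₀))`, for every `t ∈ [0,t*]` with `t < t₀` one has
`(1/ln(e+y₀) + 1/k²)·e^{−Ct} − 1/k² > 0`,
`1/ln(e+y(t)) ≥ (1/ln(e+y₀) + 1/k²)·e^{−Ct} − 1/k²`, and in particular
`y(t) ≤ exp(((1/ln(e+y₀) + 1/k²)·e^{−Ct} − 1/k²)⁻¹) − e`. -/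
theorem stmt14 (C k tstar y₀ : ℝ) (hC : 0 < C) (hk : 1 ≤ k) (htstar : 0 < tstar)
    (y y' : ℝ → ℝ) (hy₀ : y 0 = y₀)
    (hnn : ∀ t ∈ Set.Icc 0 tstar, 0 ≤ y t)
    (hdiff : ∀ t ∈ Set.Icc 0 tstar, HasDerivWithinAt y (y' t) (Set.Icc 0 tstar) t)
    (hineq : ∀ t ∈ Set.Icc 0 tstar,
      y' t ≤ C * ((Real.exp 1 + y t) * Real.log (Real.exp 1 + y t) +
        (Real.exp 1 + y t) * Real.log (Real.exp 1 + y t) ^ 2 / k ^ 2)) :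
    ∀ t ∈ Set.Icc 0 tstar,
      t < 1 / C * Real.log (1 + k ^ 2 / Real.log (Real.exp 1 + y₀)) →
      0 < (1 / Real.log (Real.exp 1 + y₀) + 1 / k ^ 2) * Real.exp (-C * t) - 1 / k ^ 2 ∧
      (1 / Real.log (Real.exp 1 + y₀) + 1 / k ^ 2) * Real.exp (-C * t) - 1 / k ^ 2 ≤
        1 / Real.log (Real.exp 1 + y t) ∧
      y t ≤ Real.exp
          (((1 / Real.log (Real.exp 1 + y₀) + 1 / k ^ 2) * Real.exp (-C * t) - 1 / k ^ 2)⁻¹)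
        - Real.exp 1 := by
  set s := Set.Icc (0:ℝ) tstar with hs
  set L : ℝ → ℝ := fun t => Real.log (Real.exp 1 + y t) with hL
  have hk2 : (1:ℝ) ≤ k ^ 2 := by nlinarith
  have hk2pos : (0:ℝ) < k ^ 2 := by linarith
  have hpos : ∀ t ∈ s, 0 < Real.exp 1 + y t := fun t ht =>
    add_pos_of_pos_of_nonneg (Real.exp_pos 1) (hnn t ht)
  have hL1 : ∀ t ∈ s, 1 ≤ L t := by
    intro t ht
    have : Real.exp 1 ≤ Real.exp 1 + y t := le_add_of_nonneg_right (hnn t ht)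
    calc (1:ℝ) = Real.log (Real.exp 1) := (Real.log_exp 1).symm
      _ ≤ L t := Real.log_le_log (Real.exp_pos 1) this
  have hLpos : ∀ t ∈ s, 0 < L t := fun t ht => lt_of_lt_of_le one_pos (hL1 t ht)
  -- derivative of w := -(L)⁻¹
  have hw : ∀ t ∈ s, HasDerivWithinAt (fun u => -(L u)⁻¹)
      (y' t / (Real.exp 1 + y t) / (L t) ^ 2) s t := by
    intro t ht
    have h1 : HasDerivWithinAt (fun u => Real.exp 1 + y u) (y' t) s t :=
      (hdiff t ht).const_add _
    have h2 : HasDerivWithinAt (fun u => Real.log (Real.exp 1 + y u))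
        (y' t / (Real.exp 1 + y t)) s t := h1.log (ne_of_gt (hpos t ht))
    have h3 := (h2.inv (ne_of_gt (hLpos t ht))).neg
    refine h3.congr_deriv ?_
    simp only [hL, neg_div, neg_neg]
  -- g and its derivative
  set g : ℝ → ℝ := fun u => Real.exp (C * u) * (-(L u)⁻¹ - 1 / k ^ 2) with hg
  have hgderiv : ∀ t ∈ s, HasDerivWithinAt g
      (C * Real.exp (C * t) * (-(L t)⁻¹ - 1 / k ^ 2) +
        Real.exp (C * t) * (y' t / (Real.exp 1 + y t) / (L t) ^ 2)) s t := by
    intro t ht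
    have he : HasDerivWithinAt (fun u => Real.exp (C * u)) (C * Real.exp (C * t)) s t := by
      have := ((hasDerivAt_id t).const_mul C).exp
      simpa [mul_comm] using this.hasDerivWithinAt
    exact he.mul ((hw t ht).sub_const (1 / k ^ 2))
  have hgcont : ContinuousOn g s := by
    intro t ht
    exact (hgderiv t ht).continuousWithinAt
  -- g' ≤ 0 on interior
  have hanti : AntitoneOn g s := by
    apply antitoneOn_of_hasDerivWithinAt_nonpos (convex_Icc 0 tstar) hgcont
    · intro t ht
      have ht' : t ∈ s := interior_subset ht
      exact ((hgderiv t ht').mono interior_subset)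
    · intro t ht
      have ht' : t ∈ s := interior_subset ht
      have hEpos := hpos t ht'
      have hLp := hLpos t ht'
      have hL1' := hL1 t ht'
      have key : y' t / (Real.exp 1 + y t) / (L t) ^ 2 ≤ C * ((L t)⁻¹ + 1 / k ^ 2) := by
        have h := hineq t ht'
        rw [div_div, div_le_iff₀ (by positivity)]
        calc y' t ≤ C * ((Real.exp 1 + y t) * L t +
              (Real.exp 1 + y t) * L t ^ 2 / k ^ 2) := h
          _ = C * ((L t)⁻¹ + 1 / k ^ 2) * ((Real.exp 1 + y t) * L t ^ 2) := by
              field_simp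
      have hexp : (0:ℝ) < Real.exp (C * t) := Real.exp_pos _
      have : C * Real.exp (C * t) * (-(L t)⁻¹ - 1 / k ^ 2) +
          Real.exp (C * t) * (y' t / (Real.exp 1 + y t) / (L t) ^ 2) ≤
          C * Real.exp (C * t) * (-(L t)⁻¹ - 1 / k ^ 2) +
          Real.exp (C * t) * (C * ((L t)⁻¹ + 1 / k ^ 2)) := by
        have := mul_le_mul_of_nonneg_left key (le_of_lt hexp)
        linarith
      calc _ ≤ C * Real.exp (C * t) * (-(L t)⁻¹ - 1 / k ^ 2) +
          Real.exp (C * t) * (C * ((L t)⁻¹ + 1 / k ^ 2)) := this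
        _ = 0 := by ring
  intro t ht htlt
  have h0s : (0:ℝ) ∈ s := Set.left_mem_Icc.mpr (le_of_lt htstar)
  have hy₀nn : 0 ≤ y₀ := hy₀ ▸ hnn 0 h0s
  have hL0 : L 0 = Real.log (Real.exp 1 + y₀) := by rw [hL]; simp [hy₀]
  have hL01 : 1 ≤ Real.log (Real.exp 1 + y₀) := hL0 ▸ hL1 0 h0s
  have hL0pos : 0 < Real.log (Real.exp 1 + y₀) := lt_of_lt_of_le one_pos hL01
  set L0 := Real.log (Real.exp 1 + y₀) with hL0def
  -- claim 1: positivity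
  have hexpnt : (0:ℝ) < Real.exp (-C * t) := Real.exp_pos _
  have claim1 : 0 < (1 / L0 + 1 / k ^ 2) * Real.exp (-C * t) - 1 / k ^ 2 := by
    have h1 : C * t < Real.log (1 + k ^ 2 / L0) := by
      have := (mul_lt_mul_iff_right₀ hC).mpr htlt
      rwa [show C * (1 / C * Real.log (1 + k ^ 2 / L0)) = Real.log (1 + k ^ 2 / L0) by
        field_simp] at this
    have hbase : (0:ℝ) < 1 + k ^ 2 / L0 := by positivity
    have h2 : Real.exp (C * t) < 1 + k ^ 2 / L0 := by
      calc Real.exp (C * t) < Real.exp (Real.log (1 + k ^ 2 / L0)) := Real.exp_lt_exp.mpr h1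
        _ = 1 + k ^ 2 / L0 := Real.exp_log hbase
    have h3 : 1 / (1 + k ^ 2 / L0) < Real.exp (-C * t) := by
      rw [show (-C * t) = -(C * t) by ring, Real.exp_neg, ← one_div]
      exact one_div_lt_one_div_of_lt (Real.exp_pos _) h2
    have h4 : 1 / (1 + k ^ 2 / L0) = L0 / (L0 + k ^ 2) := by
      rw [div_eq_div_iff (by positivity) (by positivity)]
      field_simp
    have h5 : (1 / L0 + 1 / k ^ 2) * (L0 / (L0 + k ^ 2)) = 1 / k ^ 2 := by
      field_simp
      ring
    have h6 : (0:ℝ) < 1 / L0 + 1 / k ^ 2 := by positivity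
    nlinarith [mul_lt_mul_of_pos_left (h4 ▸ h3) h6]
  -- claim 2
  have hgle : g t ≤ g 0 := hanti h0s ht (ht.1)
  have hg0 : g 0 = -(L0)⁻¹ - 1 / k ^ 2 := by
    simp [hg, hL0]
  have claim2 : (1 / L0 + 1 / k ^ 2) * Real.exp (-C * t) - 1 / k ^ 2 ≤ 1 / L t := by
    rw [hg0] at hgle
    have hgle' : Real.exp (C * t) * (-(L t)⁻¹ - 1 / k ^ 2) ≤ -(L0)⁻¹ - 1 / k ^ 2 := hgle
    have hexp : (0:ℝ) < Real.exp (C * t) := Real.exp_pos _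
    have := mul_le_mul_of_nonneg_left hgle' (le_of_lt hexpnt)
    have hee : Real.exp (-C * t) * Real.exp (C * t) = 1 := by
      rw [← Real.exp_add]; simp
    rw [← mul_assoc, hee, one_mul] at this
    have hLti : (L t)⁻¹ = 1 / L t := (one_div _).symm
    have hL0i : (L0)⁻¹ = 1 / L0 := (one_div _).symm
    nlinarith [this]
  refine ⟨claim1, claim2, ?_⟩
  -- claim 3
  set R := (1 / L0 + 1 / k ^ 2) * Real.exp (-C * t) - 1 / k ^ 2 with hR
  have hLt : 0 < L t := hLpos t ht
  have hLle : L t ≤ R⁻¹ := by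
    rw [← one_div]
    rw [le_div_iff₀ claim1]
    calc L t * R ≤ L t * (1 / L t) := by
          exact mul_le_mul_of_nonneg_left claim2 (le_of_lt hLt)
      _ = 1 := by field_simp
  have : Real.exp 1 + y t = Real.exp (L t) := (Real.exp_log (hpos t ht)).symm
  have h7 : Real.exp (L t) ≤ Real.exp (R⁻¹) := Real.exp_le_exp.mpr hLle
  linarith [this ▸ h7]
end
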